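/- arXiv:1807.02055 — 10 statements merged into one kernel-verified Lean document; each statement's English description precedes it below -/
import Mathlib

section
/- Let G be an abelian group of order v and let D = {D_1, ..., D_b} be a collection of mutually disjoint k-subsets of G whose union is a (v, bk, λ') difference set in G for some integer λ' > λ. Then D is a (v,k,λ) disjoint difference family in G if and only if D is a (v,k,λ'-λ) external difference family in G. -/
open Finset

/-- Multiplicity of `x` in the internal difference multiset `ΔA`. -/
def diffCount {G : Type*} [AddCommGroup G] [DecidableEq G] (A : Finset G) (x : G) : ℕ :=
  ((A ×ˢ A).filter (fun q => q.1 ≠ q.2 ∧ q.1 - q.2 = x)).card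

/-- Multiplicity of `x` in the external difference multiset `A - B` (for disjoint `A, B`). -/
def extDiffCount {G : Type*} [AddCommGroup G] [DecidableEq G] (A B : Finset G) (x : G) : ℕ :=
  ((A ×ˢ B).filter (fun q => q.1 - q.2 = x)).card

lemma diff_eq_ext {G : Type*} [AddCommGroup G] [DecidableEq G] (A : Finset G) (x : G)
    (hx : x ≠ 0) : diffCount A x = extDiffCount A A x := by
  unfold diffCount extDiffCount
  congr 1
  apply Finset.filter_congr
  intro q _
  constructor
  · exact fun h => h.2
  · intro h
    refine ⟨?_, h⟩
    intro heq
    apply hx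
    rw [← h, heq, sub_self]

lemma count_split {G : Type*} [AddCommGroup G] [DecidableEq G] {b : ℕ}
    (D : Fin b → Finset G)
    (hdisj : ∀ i j, i ≠ j → Disjoint (D i) (D j))
    (x : G) (hx : x ≠ 0) :
    diffCount (Finset.univ.biUnion D) x
      = ∑ i : Fin b, ∑ j : Fin b, extDiffCount (D i) (D j) x := by
  have hU : ∀ f : G → ℕ, ∑ a ∈ Finset.univ.biUnion D, f a = ∑ i : Fin b, ∑ a ∈ D i, f a :=
    fun f => Finset.sum_biUnion (fun i _ j _ hij => hdisj i j hij)
  have hext : ∀ A B : Finset G, extDiffCount A B x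
      = ∑ a ∈ A, ∑ c ∈ B, (if a - c = x then 1 else 0) := by
    intro A B
    rw [extDiffCount, Finset.card_filter, Finset.sum_product]
  rw [diff_eq_ext _ _ hx, hext, hU]
  refine Finset.sum_congr rfl fun i _ => ?_
  calc ∑ a ∈ D i, ∑ c ∈ Finset.univ.biUnion D, (if a - c = x then 1 else 0)
      = ∑ a ∈ D i, ∑ j : Fin b, ∑ c ∈ D j, (if a - c = x then 1 else 0) := by
        exact Finset.sum_congr rfl fun a _ => hU _
    _ = ∑ j : Fin b, ∑ a ∈ D i, ∑ c ∈ D j, (if a - c = x then 1 else 0) := Finset.sum_comm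
    _ = ∑ j : Fin b, extDiffCount (D i) (D j) x := by
        exact Finset.sum_congr rfl fun j _ => (hext _ _).symm

/-- If the mutually disjoint `k`-subsets `D 0, …, D (b-1)` of an abelian group `G`
of order `v` have union forming a `(v, b*k, λ')` difference set with `λ' > λ`, then they form a
`(v,k,λ)` disjoint difference family iff they form a `(v,k,λ'-λ)` external difference family. -/
theorem stmt0 {G : Type*} [AddCommGroup G] [Fintype G] [DecidableEq G]
    (v b k lam lam' : ℕ) (hv : Fintype.card G = v)
    (D : Fin b → Finset G)
    (hk : ∀ i, (D i).card = k)
    (hdisj : ∀ i j, i ≠ j → Disjoint (D i) (D j))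
    (hcard : (Finset.univ.biUnion D).card = b * k)
    (hlt : lam < lam')
    (hds : ∀ x : G, x ≠ 0 → diffCount (Finset.univ.biUnion D) x = lam') :
    (∀ x : G, x ≠ 0 → ∑ i : Fin b, diffCount (D i) x = lam) ↔
    (∀ x : G, x ≠ 0 →
      ∑ i : Fin b, ∑ j : Fin b, (if i ≠ j then extDiffCount (D i) (D j) x else 0)
        = lam' - lam) := by
  have key : ∀ x : G, x ≠ 0 →
      (∑ i : Fin b, diffCount (D i) x)
        + (∑ i : Fin b, ∑ j : Fin b, (if i ≠ j then extDiffCount (D i) (D j) x else 0))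
        = lam' := by
    intro x hx
    rw [← hds x hx, count_split D hdisj x hx]
    rw [← Finset.sum_add_distrib]
    refine Finset.sum_congr rfl fun i _ => ?_
    have herase : ∑ j : Fin b, (if i ≠ j then extDiffCount (D i) (D j) x else 0)
        = ∑ j ∈ Finset.univ.erase i, extDiffCount (D i) (D j) x := by
      rw [← Finset.sum_filter]
      congr 1
      ext j
      simp [Finset.mem_erase, ne_comm]
    rw [herase, diff_eq_ext _ _ hx,
      Finset.add_sum_erase _ (fun j => extDiffCount (D i) (D j) x) (Finset.mem_univ i)]
  constructor
  · intro h x hx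
    have h1 := key x hx
    have h2 := h x hx
    omega
  · intro h x hx
    have h1 := key x hx
    have h2 := h x hx
    omega
end

section
/- Every near-complete (v,k,k-1) disjoint difference family in an abelian group G of order v is also a near-complete (v,k,v-k-1) external difference family in G. -/
open Finset

/-- Every near-complete `(v,k,k-1)` disjoint difference family in an abelian group
`G` of order `v` is also a near-complete `(v,k,v-k-1)` external difference family. -/
theorem stmt1 {G : Type*} [AddCommGroup G] [Fintype G] [DecidableEq G]
    (v b k : ℕ) (hv : Fintype.card G = v)
    (D : Fin b → Finset G)
    (hk : ∀ i, (D i).card = k)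
    (hdisj : ∀ i j, i ≠ j → Disjoint (D i) (D j))
    (hnc : Finset.univ.biUnion D = Finset.univ \ {0})
    (hddf : ∀ x : G, x ≠ 0 → ∑ i : Fin b, diffCount (D i) x = k - 1) :
    ∀ x : G, x ≠ 0 →
      ∑ i : Fin b, ∑ j : Fin b, (if i ≠ j then extDiffCount (D i) (D j) x else 0)
        = v - k - 1 := by
  intro x hx
  classical
  -- x is in some D i, so k ≥ 1
  have hx' : x ∈ Finset.univ.biUnion D := by rw [hnc]; simp [hx]
  obtain ⟨i0, -, hi0⟩ := Finset.mem_biUnion.1 hx'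
  have hk1 : 1 ≤ k := by rw [← hk i0]; exact Finset.card_pos.2 ⟨x, hi0⟩
  have hv1 : 1 ≤ v := by rw [← hv]; exact Fintype.card_pos
  have hkv : k + 1 ≤ v := by
    have hsub : D i0 ⊆ Finset.univ \ {0} := by
      rw [← hnc]; exact Finset.subset_biUnion_of_mem D (Finset.mem_univ i0)
    have h2 := Finset.card_le_card hsub
    rw [hk i0, Finset.card_sdiff_of_subset (by simp)] at h2
    simp only [Finset.card_univ, Finset.card_singleton, hv] at h2
    omega
  -- rewrite extDiffCount as a sum of indicators
  have hA : ∀ (A B : Finset G), extDiffCount A B x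
      = ∑ c ∈ B, (if c + x ∈ A then 1 else 0) := by
    intro A B
    rw [← Finset.card_filter]
    unfold extDiffCount
    apply Finset.card_bij' (fun q _ => q.2) (fun c _ => (c + x, c))
    · intro q hq
      simp only [Finset.mem_filter, Finset.mem_product] at hq ⊢
      obtain ⟨⟨h1, h2⟩, h3⟩ := hq
      refine ⟨h2, ?_⟩
      have : q.2 + x = q.1 := by rw [← h3]; abel
      rwa [this]
    · intro c hc
      simp only [Finset.mem_filter] at hc ⊢
      simp only [Finset.mem_product]
      refine ⟨⟨hc.2, hc.1⟩, by abel⟩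
    · intro q hq
      simp only [Finset.mem_filter, Finset.mem_product] at hq
      have : q.2 + x = q.1 := by rw [← hq.2]; abel
      ext <;> simp [this]
    · intro c hc; rfl
  -- each nonzero element lies in exactly one D i
  have hone : ∀ y : G, (∑ i : Fin b, if y ∈ D i then (1:ℕ) else 0)
      = if y = 0 then 0 else 1 := by
    intro y
    by_cases hy : y = 0
    · subst hy
      rw [if_pos rfl]
      apply Finset.sum_eq_zero
      intro i _
      have : (0:G) ∉ D i := by
        intro h0
        have : (0:G) ∈ Finset.univ.biUnion D := Finset.mem_biUnion.2 ⟨i, Finset.mem_univ i, h0⟩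
        rw [hnc] at this
        simp at this
      simp [this]
    · rw [if_neg hy]
      have hy' : y ∈ Finset.univ.biUnion D := by rw [hnc]; simp [hy]
      obtain ⟨i1, -, h1⟩ := Finset.mem_biUnion.1 hy'
      rw [Finset.sum_eq_single i1]
      · simp [h1]
      · intro j _ hj
        have : y ∉ D j := fun h => Finset.disjoint_left.mp (hdisj j i1 hj) h h1
        simp [this]
      · intro h; exact absurd (Finset.mem_univ i1) h
  -- the full double sum counts all pairs in (G \ {0}) × (G \ {0}) with difference x
  have hfull : ∑ i : Fin b, ∑ j : Fin b, extDiffCount (D i) (D j) x = v - 2 := by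
    rw [Finset.sum_comm]
    have step1 : ∀ j : Fin b, ∑ i : Fin b, extDiffCount (D i) (D j) x
        = ∑ c ∈ D j, (if c + x = 0 then 0 else 1) := by
      intro j
      calc ∑ i : Fin b, extDiffCount (D i) (D j) x
          = ∑ i : Fin b, ∑ c ∈ D j, (if c + x ∈ D i then 1 else 0) := by
            exact Finset.sum_congr rfl fun i _ => hA (D i) (D j)
        _ = ∑ c ∈ D j, ∑ i : Fin b, (if c + x ∈ D i then 1 else 0) := Finset.sum_comm
        _ = ∑ c ∈ D j, (if c + x = 0 then 0 else 1) :=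
            Finset.sum_congr rfl fun c _ => hone (c + x)
    rw [Finset.sum_congr rfl fun j _ => step1 j]
    rw [← Finset.sum_biUnion (fun i _ j _ hij => hdisj i j hij)]
    rw [hnc]
    have hset : (Finset.univ \ {0} : Finset G).filter (fun c => ¬ (c + x = 0))
        = Finset.univ \ {0, -x} := by
      ext c
      simp only [Finset.mem_filter, Finset.mem_sdiff, Finset.mem_univ, true_and,
        Finset.mem_insert, Finset.mem_singleton]
      constructor
      · rintro ⟨h1, h2⟩
        push_neg
        exact ⟨h1, fun hc => h2 (by rw [hc]; abel)⟩
      · intro h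
        push_neg at h
        exact ⟨h.1, fun hc => h.2 (eq_neg_of_add_eq_zero_left hc)⟩
    have : ∑ c ∈ (Finset.univ \ {0} : Finset G), (if c + x = 0 then 0 else 1)
        = ((Finset.univ \ {0} : Finset G).filter (fun c => ¬ (c + x = 0))).card := by
      rw [Finset.card_filter]
      exact Finset.sum_congr rfl fun c _ => by by_cases h : c + x = 0 <;> simp [h]
    rw [this, hset, Finset.card_sdiff_of_subset (Finset.subset_univ _)]
    have hcard2 : ({0, -x} : Finset G).card = 2 := by
      rw [Finset.card_insert_of_notMem (by simp [hx, eq_comm]), Finset.card_singleton]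
    rw [Finset.card_univ, hv, hcard2]
  -- on the diagonal, extDiffCount equals diffCount (since x ≠ 0)
  have hdiag : ∀ i, extDiffCount (D i) (D i) x = diffCount (D i) x := by
    intro i
    unfold extDiffCount diffCount
    congr 1
    apply Finset.filter_congr
    intro q _
    constructor
    · intro h
      refine ⟨?_, h⟩
      intro he
      apply hx
      rw [← h, he, sub_self]
    · rintro ⟨-, h⟩; exact h
  -- split the full sum into off-diagonal and diagonal parts
  have hsplit : ∑ i : Fin b, ∑ j : Fin b, extDiffCount (D i) (D j) x
      = (∑ i : Fin b, ∑ j : Fin b, (if i ≠ j then extDiffCount (D i) (D j) x else 0))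
        + ∑ i : Fin b, diffCount (D i) x := by
    rw [← Finset.sum_add_distrib]
    apply Finset.sum_congr rfl
    intro i _
    have h1 : ∀ j : Fin b, extDiffCount (D i) (D j) x
        = (if i ≠ j then extDiffCount (D i) (D j) x else 0)
          + (if i = j then extDiffCount (D i) (D j) x else 0) := by
      intro j; by_cases h : i = j <;> simp [h]
    rw [Finset.sum_congr rfl fun j _ => h1 j, Finset.sum_add_distrib]
    congr 1
    rw [Finset.sum_ite_eq]
    simp [hdiag i]
  rw [hfull, hddf x hx] at hsplit
  omega
end

section
/- Let p be a prime and r ≥ 1, and set q = p^{2r}, e = p^r + 1, so f = (q-1)/e = p^r - 1. Then the cyclotomic numbers of order e in F_q are: (0,0)_e = p^r - 2; (0,i)_e = (i,0)_e = (i,i)_e = 0 for i ≠ 0; and (i,j)_e = 1 for distinct nonzero i, j. -/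
open Finset

open scoped Classical in
/-- The coset `C i = {α^t : t ≡ i (mod e)}` of the subgroup of `e`-th powers in `F^*`. -/
noncomputable def cyclotomicCoset {F : Type*} [Field F] [Fintype F]
    (α : Fˣ) (e i : ℕ) : Finset F :=
  Finset.univ.filter (fun x => ∃ t : ℕ, x = (α : F) ^ t ∧ t % e = i)

open scoped Classical in
/-- The cyclotomic number `(i,j)_e = |(C_i + 1) ∩ C_j|`. -/
noncomputable def cyclotomicNumber {F : Type*} [Field F] [Fintype F]
    (α : Fˣ) (e i j : ℕ) : ℕ :=
  ((cyclotomicCoset α e i).filter (fun x => x + 1 ∈ cyclotomicCoset α e j)).card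

private lemma aux_zpow {F : Type*} [Field F] [Fintype F] (α : Fˣ) (e f s : ℕ) (hf : f ≠ 0)
    (horder : orderOf α = e * f) (hs : s = f + 1) (n : ℤ) :
    (α ^ n) ^ s = α ^ n ↔ (e : ℤ) ∣ n := by
  rw [← zpow_natCast (α ^ n) s, ← zpow_mul]
  have h1 : α ^ (n * (s : ℤ)) = α ^ n ↔ α ^ (n * (s : ℤ) - n) = 1 := by
    rw [zpow_sub, mul_inv_eq_one]
  rw [h1, ← orderOf_dvd_iff_zpow_eq_one, horder]
  have h2 : n * (s : ℤ) - n = (f : ℤ) * n := by rw [hs]; push_cast; ring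
  rw [h2]
  push_cast
  rw [mul_comm (e : ℤ) (f : ℤ)]
  exact mul_dvd_mul_iff_left (by exact_mod_cast hf)

/-- Let `p` be a prime, `r ≥ 1`, `q = p^(2r)` and `e = p^r + 1`.  Then the
cyclotomic numbers of order `e` in `F_q` are: `(0,0)_e = p^r - 2`,
`(0,i)_e = (i,0)_e = (i,i)_e = 0` for `i ≠ 0`, and `(i,j)_e = 1` for distinct nonzero
`i, j`. -/
theorem stmt7 {F : Type*} [Field F] [Fintype F]
    (p r q e : ℕ) (hp : p.Prime) (hr : 1 ≤ r)
    (hq : q = p ^ (2 * r)) (hcard : Fintype.card F = q) (he : e = p ^ r + 1)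
    (α : Fˣ) (hα : ∀ x : Fˣ, x ∈ Subgroup.zpowers α) :
    (cyclotomicNumber α e 0 0 = p ^ r - 2) ∧
    (∀ i : ℕ, 0 < i → i < e →
      cyclotomicNumber α e 0 i = 0 ∧
      cyclotomicNumber α e i 0 = 0 ∧
      cyclotomicNumber α e i i = 0) ∧
    (∀ i j : ℕ, 0 < i → i < e → 0 < j → j < e → i ≠ j →
      cyclotomicNumber α e i j = 1) := by
  classical
  have hpr2 : 2 ≤ p ^ r := (Nat.one_lt_pow (by omega) hp.one_lt)
  set f : ℕ := p ^ r - 1 with hfdef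
  have he0 : 0 < e := by omega
  have hf0 : f ≠ 0 := by omega
  have hs : p ^ r = f + 1 := by omega
  have ha : p ^ r * p ^ r = (p ^ r + 1) * (p ^ r - 1) + 1 := by
    obtain ⟨b, hb⟩ : ∃ b, p ^ r = b + 2 := ⟨p ^ r - 2, by omega⟩
    rw [hb, show b + 2 - 1 = b + 1 from rfl]; ring
  have horder : orderOf α = e * f := by
    have h1 := orderOf_eq_card_of_forall_mem_zpowers hα
    rw [Nat.card_eq_fintype_card, Fintype.card_units, hcard, hq, two_mul, pow_add, ha] at h1
    rw [h1, he, hfdef]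
    exact Nat.add_sub_cancel _ _
  haveI hFact : Fact p.Prime := ⟨hp⟩
  haveI hchar : CharP F p := by
    obtain ⟨n, hc1, hc2⟩ := FiniteField.card F (ringChar F)
    have hpc : p = ringChar F := by
      have hdvd : p ∣ ringChar F ^ (n : ℕ) := by
        rw [← hc2, hcard, hq]; exact dvd_pow_self p (by omega)
      exact (Nat.prime_dvd_prime_iff_eq hp hc1).mp (hp.dvd_of_dvd_pow hdvd)
    rw [hpc]; exact ringChar.charP F
  set φ : F →+* F := iterateFrobenius F p r with hφdef
  have hφ : ∀ x : F, φ x = x ^ p ^ r := fun x => rfl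
  have hφφ : ∀ x : F, φ (φ x) = x := by
    intro x
    rw [hφ, hφ, ← pow_mul, ← pow_add, ← two_mul, ← hq, ← hcard]
    exact FiniteField.pow_card x
  -- the core criterion
  have hcore : ∀ n : ℤ, φ ((α ^ n : Fˣ) : F) = ((α ^ n : Fˣ) : F) ↔ (e : ℤ) ∣ n := by
    intro n
    rw [hφ, ← Units.val_pow_eq_pow_val]
    constructor
    · intro h
      exact (aux_zpow α e f (p ^ r) hf0 horder hs n).mp (Units.ext h)
    · intro h
      exact congrArg Units.val ((aux_zpow α e f (p ^ r) hf0 horder hs n).mpr h)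
  have hred : ∀ c : Fˣ, φ (c : F) = (c : F) → ∃ k : ℕ, k < f ∧ α ^ (e * k) = c := by
    intro c hc
    obtain ⟨m, hm⟩ := Subgroup.mem_zpowers_iff.mp (hα c)
    have hedvd : (e : ℤ) ∣ m := (hcore m).mp (by rw [hm]; exact hc)
    have hM0 : 0 < e * f := by rw [← horder]; exact orderOf_pos α
    have hne : ((e * f : ℕ) : ℤ) ≠ 0 := by exact_mod_cast hM0.ne'
    have hnn : 0 ≤ m % ((e * f : ℕ) : ℤ) := Int.emod_nonneg m hne
    have hlt : m % ((e * f : ℕ) : ℤ) < ((e * f : ℕ) : ℤ) :=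
      Int.emod_lt_of_pos m (by exact_mod_cast hM0)
    set m' : ℕ := (m % ((e * f : ℕ) : ℤ)).toNat with hm'def
    have hcast : (m' : ℤ) = m % ((e * f : ℕ) : ℤ) := Int.toNat_of_nonneg hnn
    have hdvd' : (e : ℤ) ∣ (m' : ℤ) := by
      rw [hcast, Int.emod_def]
      exact dvd_sub hedvd (Dvd.dvd.mul_right ⟨(f : ℤ), by push_cast; ring⟩ _)
    have hem' : e ∣ m' := by exact_mod_cast hdvd'
    have hm'lt : m' < e * f := by
      have : (m' : ℤ) < ((e * f : ℕ) : ℤ) := hcast ▸ hlt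
      exact_mod_cast this
    obtain ⟨k, hk⟩ := hem'
    refine ⟨k, ?_, ?_⟩
    · exact lt_of_mul_lt_mul_left (hk ▸ hm'lt) (Nat.zero_le e)
    · rw [← hk, ← hm]
      calc α ^ m' = α ^ ((m' : ℤ)) := (zpow_natCast α m').symm
        _ = α ^ (m % ((e * f : ℕ) : ℤ)) := by rw [hcast]
        _ = α ^ m := by
            rw [show ((e * f : ℕ) : ℤ) = ((orderOf α : ℕ) : ℤ) by rw [horder]]
            exact zpow_mod_orderOf α m
  have hmem : ∀ i : ℕ, i < e → ∀ x : F,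
      x ∈ cyclotomicCoset α e i ↔
        ∃ c : Fˣ, φ (c : F) = (c : F) ∧ x = (α : F) ^ i * (c : F) := by
    intro i hi x
    simp only [cyclotomicCoset, Finset.mem_filter, Finset.mem_univ, true_and]
    constructor
    · rintro ⟨t, rfl, ht⟩
      have hik : t = e * (t / e) + i := by
        have h := Nat.div_add_mod t e; omega
      refine ⟨α ^ (e * (t / e)), ?_, ?_⟩
      · have hdv : (e : ℤ) ∣ ((e * (t / e) : ℕ) : ℤ) := ⟨((t / e : ℕ) : ℤ), by push_cast; ring⟩
        have h2 := (hcore ((e * (t / e) : ℕ) : ℤ)).mpr hdv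
        rwa [zpow_natCast] at h2
      · rw [Units.val_pow_eq_pow_val, ← pow_add]
        congr 1
        omega
    · rintro ⟨c, hc, rfl⟩
      obtain ⟨k, hk, hck⟩ := hred c hc
      refine ⟨i + e * k, ?_, ?_⟩
      · rw [← hck, Units.val_pow_eq_pow_val, ← pow_add]
      · simp [Nat.add_mul_mod_self_left, Nat.mod_eq_of_lt hi]
  have hnot : ∀ i : ℕ, 0 < i → i < e → φ ((α : F) ^ i) ≠ (α : F) ^ i := by
    intro i h1 h2 h
    have h3 : φ (((α ^ (i : ℤ) : Fˣ)) : F) = ((α ^ (i : ℤ) : Fˣ) : F) := by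
      rw [zpow_natCast, Units.val_pow_eq_pow_val]; exact h
    have h5 : e ∣ i := by exact_mod_cast (hcore (i : ℤ)).mp h3
    exact absurd (Nat.le_of_dvd h1 h5) (by omega)
  have hnd : ∀ n : ℤ, n ≠ 0 → |n| < (e : ℤ) → ¬ (e : ℤ) ∣ n := fun n h1 h2 hdvd =>
    h1 (Int.eq_zero_of_abs_lt_dvd hdvd h2)
  refine ⟨?_, ?_, ?_⟩
  · -- (0,0) = p^r - 2
    have hC0' : ∀ x : F, x ∈ cyclotomicCoset α e 0 ↔ x ≠ 0 ∧ φ x = x := by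
      intro x
      rw [hmem 0 he0]
      constructor
      · rintro ⟨c, hc, rfl⟩
        constructor
        · simp
        · simpa using hc
      · rintro ⟨hx0, hfx⟩
        exact ⟨Units.mk0 x hx0, hfx, by simp⟩
    set S : Finset F := univ.filter (fun x => φ x = x) with hSdef
    have hT : S = insert (0 : F) ((range f).image (fun k => ((α ^ (e * k) : Fˣ) : F))) := by
      ext x
      simp only [hSdef, Finset.mem_filter, Finset.mem_univ, true_and, Finset.mem_insert,
        Finset.mem_image, Finset.mem_range]
      constructor
      · intro hx
        by_cases hx0 : x = 0
        · exact Or.inl hx0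
        · right
          obtain ⟨k, hk, hck⟩ := hred (Units.mk0 x hx0) (by simpa using hx)
          exact ⟨k, hk, by rw [hck]; rfl⟩
      · rintro (rfl | ⟨k, hk, rfl⟩)
        · exact map_zero φ
        · have hdv : (e : ℤ) ∣ ((e * k : ℕ) : ℤ) := ⟨(k : ℤ), by push_cast; ring⟩
          have h2 := (hcore ((e * k : ℕ) : ℤ)).mpr hdv
          rwa [zpow_natCast] at h2
    have hcardS : S.card = p ^ r := by
      rw [hT, Finset.card_insert_of_notMem, Finset.card_image_of_injOn, Finset.card_range]
      · omega
      · intro k hk k' hk' hkk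
        simp only [Finset.mem_coe, Finset.mem_range] at hk hk'
        have h1 := Units.ext hkk
        rw [pow_eq_pow_iff_modEq, horder] at h1
        have hlt1 : e * k < e * f := mul_lt_mul_of_pos_left hk he0
        have hlt2 : e * k' < e * f := mul_lt_mul_of_pos_left hk' he0
        have h2 : e * k = e * k' := by
          unfold Nat.ModEq at h1
          rwa [Nat.mod_eq_of_lt hlt1, Nat.mod_eq_of_lt hlt2] at h1
        exact Nat.eq_of_mul_eq_mul_left he0 h2
      · simp only [Finset.mem_image, Finset.mem_range]
        rintro ⟨k, -, hk⟩
        exact Units.ne_zero _ hk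
    have hSstep : ∀ x : F, φ x = x → φ (x + 1) = x + 1 := fun x h => by
      rw [map_add, map_one, h]
    have hfe : ((cyclotomicCoset α e 0).filter (fun x => x + 1 ∈ cyclotomicCoset α e 0)) =
        (S.erase (-1)).erase 0 := by
      ext x
      rw [Finset.mem_filter, hC0' x, hC0' (x + 1), Finset.mem_erase, Finset.mem_erase, hSdef,
        Finset.mem_filter]
      constructor
      · rintro ⟨⟨hx0, hfx⟩, hx1, -⟩
        exact ⟨hx0, fun h => hx1 (by rw [h]; ring), Finset.mem_univ x, hfx⟩
      · rintro ⟨hx0, hxm1, -, hfx⟩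
        exact ⟨⟨hx0, hfx⟩, fun h => hxm1 (eq_neg_of_add_eq_zero_left h), hSstep x hfx⟩
    have hm1S : (-1 : F) ∈ S := by
      rw [hSdef, Finset.mem_filter]
      exact ⟨Finset.mem_univ _, by rw [map_neg, map_one]⟩
    have h0mem : (0 : F) ∈ S.erase (-1) := by
      rw [Finset.mem_erase, hSdef, Finset.mem_filter]
      refine ⟨?_, Finset.mem_univ _, map_zero φ⟩
      intro h
      have h1 : (1 : F) = 0 := by
        have h2 : (-1 : F) = 0 := h.symm
        simp at h2
      exact one_ne_zero h1
    show ((cyclotomicCoset α e 0).filter (fun x => x + 1 ∈ cyclotomicCoset α e 0)).card = p ^ r - 2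
    rw [hfe, Finset.card_erase_of_mem h0mem, Finset.card_erase_of_mem hm1S, hcardS]
    omega
  · -- zeros
    intro i hi0 hie
    refine ⟨?_, ?_, ?_⟩ <;>
      · show (Finset.filter _ _).card = 0
        rw [Finset.card_eq_zero, Finset.eq_empty_iff_forall_notMem]
        intro x hx
        rw [Finset.mem_filter] at hx
        obtain ⟨h1, h2⟩ := hx
        first
        | -- (0, i)
          (rw [hmem 0 he0] at h1; rw [hmem i hie] at h2
           obtain ⟨c, hc, hxc⟩ := h1
           obtain ⟨d, hd, hxd⟩ := h2
           have hx' : x = (c : F) := by simpa using hxc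
           have h3 : φ (x + 1) = x + 1 := by rw [map_add, map_one, hx', hc]
           rw [hxd, map_mul, hd] at h3
           exact hnot i hi0 hie (mul_right_cancel₀ (Units.ne_zero d) h3))
        | -- (i, 0)
          (rw [hmem i hie] at h1; rw [hmem 0 he0] at h2
           obtain ⟨c, hc, hxc⟩ := h1
           obtain ⟨d, hd, hxd⟩ := h2
           have hx1' : x + 1 = (d : F) := by simpa using hxd
           have h3 : φ (x + 1) = x + 1 := by rw [hx1', hd]
           rw [map_add, map_one] at h3
           have h4 : φ x = x := by
             have := add_right_cancel h3; exact this
           rw [hxc, map_mul, hc] at h4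
           exact hnot i hi0 hie (mul_right_cancel₀ (Units.ne_zero c) h4))
        | -- (i, i)
          (rw [hmem i hie] at h1 h2
           obtain ⟨c, hc, hxc⟩ := h1
           obtain ⟨d, hd, hxd⟩ := h2
           have key : (α : F) ^ i * ((d : F) - (c : F)) = 1 := by
             linear_combination hxc - hxd
           have hdc0 : ((d : F) - (c : F)) ≠ 0 := by
             intro h
             rw [h, mul_zero] at key
             exact zero_ne_one key
           have key2 : φ ((α : F) ^ i) * ((d : F) - (c : F)) = 1 := by
             have h5 := congrArg φ key
             rwa [map_mul, map_sub, hd, hc, map_one] at h5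
           exact hnot i hi0 hie (mul_right_cancel₀ hdc0 (key2.trans key.symm)))
  · -- (i, j) = 1 for distinct nonzero i, j
    intro i j hi0 hie hj0 hje hij
    have hndij : ¬ (e : ℤ) ∣ ((j : ℤ) - (i : ℤ)) := by
      intro h
      have h2 : (j : ℤ) - (i : ℤ) = 0 := Int.eq_zero_of_abs_lt_dvd h (by rw [abs_lt]; omega)
      omega
    set u : Fˣ := α ^ j * (α ^ i)⁻¹ with hu
    have huz : u = α ^ ((j : ℤ) - (i : ℤ)) := by
      rw [zpow_sub, zpow_natCast, zpow_natCast]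
    have hufix : φ (u : F) ≠ (u : F) := by
      rw [huz]
      intro h
      exact hndij ((hcore _).mp h)
    set β : F := (((α ^ i)⁻¹ : Fˣ) : F) with hβ
    have hβfix : φ β ≠ β := by
      intro h
      refine hnd (-(i : ℤ)) (by omega) (by rw [abs_neg, abs_lt]; omega) ?_
      apply (hcore (-(i : ℤ))).mp
      rw [zpow_neg, zpow_natCast]
      exact h
    have hden : (u : F) - φ (u : F) ≠ 0 := sub_ne_zero.mpr (Ne.symm hufix)
    set d : F := (β - φ β) / ((u : F) - φ (u : F)) with hddef
    set c : F := d * (u : F) - β with hcdef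
    have hdu : d * ((u : F) - φ (u : F)) = β - φ β := div_mul_cancel₀ _ hden
    have hdfix : φ d = d := by
      rw [hddef, map_div₀, map_sub, map_sub, hφφ, hφφ,
        show φ β - β = -(β - φ β) by ring, show φ (u : F) - (u : F) = -((u : F) - φ (u : F)) by ring,
        neg_div_neg_eq]
    have hcfix : φ c = c := by
      have h1 : φ c = d * φ (u : F) - φ β := by rw [hcdef, map_sub, map_mul, hdfix]
      rw [h1, hcdef]
      linear_combination -hdu
    have hd0 : d ≠ 0 := by
      intro h
      rw [h, zero_mul] at hdu
      exact hβfix (by linear_combination hdu)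
    have hkey1 : (α : F) ^ i * β = 1 := by
      rw [hβ, ← Units.val_pow_eq_pow_val, ← Units.val_mul, mul_inv_cancel]
      rfl
    have hkey2 : (α : F) ^ i * (u : F) = (α : F) ^ j := by
      have h1 : (α ^ i : Fˣ) * u = α ^ j := by rw [hu]; group
      have h2 := congrArg Units.val h1
      simpa [Units.val_mul, Units.val_pow_eq_pow_val] using h2
    have hc0 : c ≠ 0 := by
      intro h
      have hduβ : d * (u : F) = β := by rw [hcdef] at h; linear_combination h
      have h3 : d * ((α : F) ^ j) = 1 := by
        linear_combination ((α : F) ^ i) * hduβ + hkey1 - d * hkey2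
      have h4 : d = ((α : F) ^ j)⁻¹ := eq_inv_of_mul_eq_one_left h3
      refine hnd (-(j : ℤ)) (by omega) (by rw [abs_neg, abs_lt]; omega) ?_
      apply (hcore (-(j : ℤ))).mp
      rw [zpow_neg, zpow_natCast]
      have h5 : (((α ^ j)⁻¹ : Fˣ) : F) = d := by
        rw [h4, ← Units.val_pow_eq_pow_val, ← Units.val_inv_eq_inv_val]
      rw [h5, hdfix]
    set x₀ : F := (α : F) ^ i * c with hx₀
    have hx01 : x₀ + 1 = (α : F) ^ j * d := by
      rw [hx₀, hcdef]
      linear_combination d * hkey2 - hkey1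
    show (Finset.filter _ _).card = 1
    rw [Finset.card_eq_one]
    refine ⟨x₀, ?_⟩
    rw [Finset.eq_singleton_iff_unique_mem]
    constructor
    · rw [Finset.mem_filter]
      constructor
      · rw [hmem i hie]
        exact ⟨Units.mk0 c hc0, by simpa using hcfix, by rw [hx₀]; rfl⟩
      · rw [hmem j hje]
        exact ⟨Units.mk0 d hd0, by simpa using hdfix, by rw [hx01]; rfl⟩
    · intro y hy
      rw [Finset.mem_filter, hmem i hie] at hy
      obtain ⟨⟨c', hc', hyc⟩, hy2⟩ := hy
      rw [hmem j hje] at hy2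
      obtain ⟨d', hd', hyd⟩ := hy2
      rw [hyc] at hyd
      have hβi : β * (α : F) ^ i = 1 := by linear_combination hkey1
      have hβj : β * (α : F) ^ j = (u : F) := by
        linear_combination (-β) * hkey2 + (u : F) * hkey1
      have e1 : (d' : F) * (u : F) - (c' : F) = β := by
        linear_combination (-β) * hyd + (c' : F) * hβi + (-(d' : F)) * hβj
      have e2 : d * (u : F) - c = β := by rw [hcdef]; ring
      by_cases hdd : (d' : F) = d
      · have hcc : (c' : F) = c := by
          linear_combination e2 - e1 + (u : F) * hdd
        rw [hyc, hcc, hx₀]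
      · exfalso
        have hud : ((d' : F) - d) * (u : F) = (c' : F) - c := by linear_combination e1 - e2
        have hdd0 : (d' : F) - d ≠ 0 := sub_ne_zero.mpr hdd
        have huval : (u : F) = ((c' : F) - c) / ((d' : F) - d) :=
          (eq_div_iff hdd0).mpr (by linear_combination hud)
        apply hufix
        have hA : φ ((c' : F) - c) = (c' : F) - c := by rw [map_sub, hc', hcfix]
        have hB : φ ((d' : F) - d) = (d' : F) - d := by rw [map_sub, hd', hdfix]
        rw [huval, map_div₀, hA, hB]
end

section
/- In the Galois ring GR(p^2, r), the multiset ΔT^* = {β - β' : β, β' ∈ T^*, β ≠ β'} of differences of distinct elements of the Teichmüller group contains only units of GR(p^2, r). Moreover, if a difference d ∈ ΔT^* lies in the multiplicative coset (1 + pβ)T^* for some β ∈ T, then the entire coset (1 + pβ)T^* is contained in the set underlying ΔT^*. -/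
lemma aux_one_add_pow {R : Type*} [CommRing R] (c : R) (h : c ^ 2 = 0) (n : ℕ) :
    (1 + c) ^ n = 1 + (n : R) * c := by
  induction n with
  | zero => simp
  | succ n ih =>
    rw [pow_succ, ih]
    push_cast
    linear_combination (n : R) * h

/-- In the Galois ring `R = GR(p², r)` with Teichmüller group
`T^* = {ξ^i : i ∈ ℕ}`:
(1) every difference of two distinct elements of `T^*` is a unit of `R`; and
(2) if a difference `d` of two distinct elements of `T^*` lies in the multiplicative coset
`(1 + pβ)T^*` for some Teichmüller element `β`, then the whole coset `(1 + pβ)T^*` is contained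
in the set of differences of distinct elements of `T^*`. -/
theorem stmt11 {R : Type*} [CommRing R] [Fintype R] [IsLocalRing R]
    (p r : ℕ) (hp : p.Prime) (hr : 1 ≤ r)
    (hchar : CharP R (p ^ 2))
    (hmax : IsLocalRing.maximalIdeal R = Ideal.span {(p : R)})
    (hcard : Fintype.card R = p ^ (2 * r))
    (ξ : Rˣ) (hξ : orderOf ξ = p ^ r - 1) :
    (∀ β β' : R, (∃ i : ℕ, β = (ξ : R) ^ i) → (∃ j : ℕ, β' = (ξ : R) ^ j) → β ≠ β' →
      IsUnit (β - β')) ∧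
    (∀ d β : R, (β = 0 ∨ ∃ i : ℕ, β = (ξ : R) ^ i) →
      (∃ γ γ' : R, (∃ i : ℕ, γ = (ξ : R) ^ i) ∧ (∃ j : ℕ, γ' = (ξ : R) ^ j) ∧ γ ≠ γ' ∧
        d = γ - γ') →
      (∃ τ : R, (∃ i : ℕ, τ = (ξ : R) ^ i) ∧ d = (1 + (p : R) * β) * τ) →
      ∀ x : R, (∃ τ : R, (∃ i : ℕ, τ = (ξ : R) ^ i) ∧ x = (1 + (p : R) * β) * τ) →
        ∃ γ γ' : R, (∃ i : ℕ, γ = (ξ : R) ^ i) ∧ (∃ j : ℕ, γ' = (ξ : R) ^ j) ∧ γ ≠ γ' ∧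
          x = γ - γ') := by
  have hp2 : (2 : ℕ) ≤ p := hp.two_le
  have hn0 : 1 ≤ p ^ r - 1 := by
    have : 2 ≤ p ^ r := le_trans hp2 (Nat.le_self_pow (by omega) p)
    omega
  have hxin0 : (ξ : R) ^ (p ^ r - 1) = 1 := by
    have h := pow_orderOf_eq_one ξ
    rw [hξ] at h
    simpa using congrArg (Units.val) h
  have hp2zero : (p : R) * (p : R) = 0 := by
    have := CharP.cast_eq_zero R (p ^ 2)
    rw [pow_two, Nat.cast_mul] at this
    exact this
  constructor
  · rintro β β' ⟨i, rfl⟩ ⟨j, rfl⟩ hne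
    by_contra hnu
    have hmem : (ξ : R) ^ i - (ξ : R) ^ j ∈ IsLocalRing.maximalIdeal R := hnu
    rw [hmax, Ideal.mem_span_singleton'] at hmem
    obtain ⟨a, ha⟩ := hmem
    set u : Rˣ := ξ ^ i * (ξ ^ j)⁻¹ with hu
    have hinv : ((ξ : R) ^ j) * (((ξ ^ j)⁻¹ : Rˣ) : R) = 1 := by
      have := Units.mul_inv (ξ ^ j)
      push_cast at this ⊢
      exact this
    have hcu : (u : R) = 1 + (a * (((ξ ^ j)⁻¹ : Rˣ) : R)) * (p : R) := by
      have hval : (u : R) = ((ξ : R) ^ i) * (((ξ ^ j)⁻¹ : Rˣ) : R) := by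
        simp [hu]
      rw [hval]
      linear_combination - (((ξ ^ j)⁻¹ : Rˣ) : R) * ha + hinv
    set c : R := (a * (((ξ ^ j)⁻¹ : Rˣ) : R)) * (p : R) with hc
    have hpp : (p : R) ^ 2 = 0 := by rw [sq]; exact hp2zero
    have hc2 : c ^ 2 = 0 := by
      rw [hc]; ring_nf
      linear_combination a ^ 2 * (((ξ ^ j)⁻¹ : Rˣ) : R) ^ 2 * hpp
    have hpc : (p : R) * c = 0 := by
      rw [hc]
      linear_combination a * (((ξ ^ j)⁻¹ : Rˣ) : R) * hp2zero
    have hup : u ^ p = 1 := by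
      ext
      push_cast
      rw [hcu, aux_one_add_pow c hc2 p, hpc, add_zero]
    have h1 : orderOf u ∣ p := orderOf_dvd_of_pow_eq_one hup
    have h2 : orderOf u ∣ p ^ r - 1 := by
      rw [← hξ]
      apply orderOf_dvd_of_mem_zpowers
      refine Subgroup.mem_zpowers_iff.mpr ⟨(i : ℤ) - (j : ℤ), ?_⟩
      rw [hu]
      simp [zpow_sub, div_eq_mul_inv]
    have hcop : Nat.Coprime p (p ^ r - 1) := by
      refine (hp.coprime_iff_not_dvd).mpr fun hdvd => ?_
      have hdp : p ∣ p ^ r := dvd_pow_self p (by omega)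
      have : p ∣ p ^ r - (p ^ r - 1) := Nat.dvd_sub hdp hdvd
      have h1le : 1 ≤ p ^ r := by omega
      rw [Nat.sub_sub_self h1le] at this
      have := Nat.le_of_dvd one_pos this
      omega
    have hord1 : orderOf u = 1 :=
      Nat.eq_one_of_dvd_one (hcop ▸ Nat.dvd_gcd h1 h2)
    have hu1 : u = 1 := orderOf_eq_one_iff.mp hord1
    rw [hu, mul_inv_eq_one] at hu1
    exact hne (by exact_mod_cast congrArg Units.val hu1)
  · rintro d β _ ⟨γ, γ', ⟨i, rfl⟩, ⟨j, rfl⟩, hne, hd⟩ ⟨τ, ⟨k, rfl⟩, hdt⟩ x ⟨τ', ⟨k', rfl⟩, hx⟩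
    set n0 := p ^ r - 1 with hn0def
    obtain ⟨e, hkey⟩ : ∃ e : ℕ, (ξ : R) ^ k * (ξ : R) ^ e = (ξ : R) ^ k' := by
      obtain ⟨m, hm⟩ : ∃ m, n0 = m + 1 := ⟨n0 - 1, by omega⟩
      have hx1 : (ξ : R) ^ (m + 1) = 1 := by rw [← hm]; exact hxin0
      refine ⟨k' + k * m, ?_⟩
      rw [← pow_add]
      have harith : k + (k' + k * m) = k' + k * (m + 1) := by ring
      rw [harith, pow_add, pow_mul', hx1, one_pow, mul_one]
    refine ⟨(ξ : R) ^ (i + e), (ξ : R) ^ (j + e), ⟨i + e, rfl⟩, ⟨j + e, rfl⟩, ?_, ?_⟩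
    · intro heq
      apply hne
      have hinj : Function.Injective (Units.val : Rˣ → R) := fun _ _ h => Units.ext h
      have h1 : (ξ ^ (i + e) : Rˣ) = ξ ^ (j + e) := by
        apply hinj; push_cast; exact_mod_cast heq
      have h2 : (ξ ^ i : Rˣ) = ξ ^ j := by
        rw [pow_add, pow_add] at h1
        exact mul_right_cancel h1
      exact_mod_cast congrArg Units.val h2
    · have : x = d * (ξ : R) ^ e := by
        rw [hx, hdt, mul_assoc, hkey]
      rw [this, hd, pow_add, pow_add]
      ring
end

section
/- Let T be the Teichmüller set of the Galois ring R = GR(p^2, r) and T^* = T \ {0}. Then the collection E = {(1 + pα)T^* : α ∈ T} ∪ {pT^*} is a near-complete (p^{2r}, p^r - 1, p^r - 2) disjoint difference family in the additive group of R: the p^r + 1 sets in E are pairwise disjoint subsets of size p^r - 1 partitioning R \ {0}, and every nonzero element of R occurs exactly p^r - 2 times in the union of the internal difference multisets of the sets in E. -/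
open Finset

lemma aux_diffCount_image {R : Type*} [CommRing R] [DecidableEq R] (c x : R) (A : Finset R)
    (hinj : ∀ a ∈ A, ∀ b ∈ A, c * a = c * b → a = b) :
    diffCount (A.image (fun t => c * t)) x
      = ((A ×ˢ A).filter (fun q => q.1 ≠ q.2 ∧ c * (q.1 - q.2) = x)).card := by
  unfold diffCount
  refine (Finset.card_bij (fun q _ => ((c * q.1, c * q.2) : R × R)) ?_ ?_ ?_).symm
  · rintro ⟨a, b⟩ hq
    simp only [mem_filter, mem_product, mem_image] at hq ⊢
    obtain ⟨⟨ha, hb⟩, hne, heq⟩ := hq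
    refine ⟨⟨⟨a, ha, rfl⟩, ⟨b, hb, rfl⟩⟩, ?_, ?_⟩
    · intro h; exact hne (hinj a ha b hb h)
    · rw [← mul_sub]; exact heq
  · rintro ⟨a, b⟩ ha ⟨a', b'⟩ hb h
    simp only [mem_filter, mem_product] at ha hb
    simp only [Prod.mk.injEq] at h
    exact Prod.ext (hinj a ha.1.1 a' hb.1.1 h.1) (hinj b ha.1.2 b' hb.1.2 h.2)
  · rintro ⟨u, v⟩ hu
    simp only [mem_filter, mem_product, mem_image] at hu
    obtain ⟨⟨⟨a, ha, rfl⟩, ⟨b, hb, rfl⟩⟩, hne, heq⟩ := hu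
    refine ⟨(a, b), ?_, rfl⟩
    simp only [mem_filter, mem_product]
    exact ⟨⟨ha, hb⟩, fun h => hne (by rw [h]), by rw [mul_sub]; exact heq⟩

/-- (Davis–Huczynska–Mullen) Let `T` be the Teichmüller set of the Galois ring
`R = GR(p², r)` and `T^* = T \ {0}`.  The collection
`E = {(1 + pα)T^* : α ∈ T} ∪ {pT^*}` is a near-complete `(p^{2r}, p^r - 1, p^r - 2)` disjoint
difference family in `(R, +)`: it consists of `p^r + 1` pairwise disjoint sets of size
`p^r - 1` partitioning `R \ {0}`, and every nonzero element of `R` occurs exactly `p^r - 2`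
times in the union of the internal difference multisets of the sets in `E`. -/
theorem stmt12 {R : Type*} [CommRing R] [Fintype R] [IsLocalRing R] [DecidableEq R]
    (p r : ℕ) (hp : p.Prime) (hr : 1 ≤ r)
    (hchar : CharP R (p ^ 2))
    (hmax : IsLocalRing.maximalIdeal R = Ideal.span {(p : R)})
    (hcard : Fintype.card R = p ^ (2 * r))
    (ξ : Rˣ) (hξ : orderOf ξ = p ^ r - 1)
    (Tstar T : Finset R) (E : Finset (Finset R))
    (hTstar : Tstar = (Finset.range (p ^ r - 1)).image (fun i => (ξ : R) ^ i))
    (hT : T = insert (0 : R) Tstar)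
    (hE : E = (T.image (fun α => Tstar.image (fun t => (1 + (p : R) * α) * t)))
              ∪ {Tstar.image (fun t => (p : R) * t)}) :
    E.card = p ^ r + 1 ∧
    (∀ B ∈ E, B.card = p ^ r - 1) ∧
    (∀ B ∈ E, ∀ B' ∈ E, B ≠ B' → Disjoint B B') ∧
    (E.biUnion id = Finset.univ \ {(0 : R)}) ∧
    (∀ x : R, x ≠ 0 → ∑ B ∈ E, diffCount B x = p ^ r - 2) := by
  classical
  have hp2 : 2 ≤ p := hp.two_le
  have hq2 : 2 ≤ p ^ r := le_trans hp2 (Nat.le_self_pow (by omega) p)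
  -- basic ring facts
  have hppR : (p : R) * p = 0 := by
    have h := CharP.cast_eq_zero R (p ^ 2)
    push_cast at h
    rwa [pow_two] at h
  have hp0R : (p : R) ≠ 0 := by
    intro h
    rw [CharP.cast_eq_zero_iff R (p ^ 2) p] at h
    have h1 := Nat.le_of_dvd (by omega) h
    have h2 : 2 * p ≤ p * p := Nat.mul_le_mul_right p hp2
    rw [pow_two] at h1
    omega
  have hnu : ∀ x : R, ¬ IsUnit x ↔ (p : R) ∣ x := by
    intro x
    rw [← mem_nonunits_iff, ← IsLocalRing.mem_maximalIdeal, hmax, Ideal.mem_span_singleton]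
  have hann : ∀ z : R, ((p : R) * z = 0 ↔ (p : R) ∣ z) := by
    intro z
    constructor
    · intro h
      by_cases hz : IsUnit z
      · obtain ⟨u, rfl⟩ := hz
        exfalso
        apply hp0R
        calc (p : R) = p * ↑u * ↑u⁻¹ := by rw [mul_assoc, Units.mul_inv, mul_one]
          _ = 0 * ↑u⁻¹ := by rw [h]
          _ = 0 := zero_mul _
      · exact (hnu z).1 hz
    · rintro ⟨c, rfl⟩
      rw [← mul_assoc, hppR, zero_mul]
  -- Teichmüller basics
  have hUnit_ts : ∀ t ∈ Tstar, IsUnit t := by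
    intro t ht
    rw [hTstar, mem_image] at ht
    obtain ⟨i, _, rfl⟩ := ht
    exact ξ.isUnit.pow i
  have hne0_ts : ∀ t ∈ Tstar, t ≠ 0 := fun t ht => (hUnit_ts t ht).ne_zero
  have h0nTs : (0 : R) ∉ Tstar := fun h => hne0_ts 0 h rfl
  have h1Ts : (1 : R) ∈ Tstar := by
    rw [hTstar, mem_image]
    exact ⟨0, mem_range.2 (by omega), pow_zero _⟩
  have hTsT : Tstar ⊆ T := hT ▸ subset_insert _ _
  -- key order lemma
  have horder : ∀ m : ℕ, (p : R) ∣ (ξ : R) ^ m - 1 → (p ^ r - 1) ∣ m := by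
    intro m hm
    obtain ⟨c, hc⟩ := hm
    have hpow : ((ξ ^ m : Rˣ) : R) = 1 + (p : R) * c := by
      rw [Units.val_pow_eq_pow_val]
      have := sub_eq_iff_eq_add.1 hc
      rw [this]; ring
    have hbin : (1 + (p : R) * c) ^ p = 1 := by
      rw [add_comm, add_pow]
      rw [Finset.sum_eq_single_of_mem 0 (mem_range.2 (by omega))]
      · simp
      · intro k hk hk0
        rcases Nat.lt_or_ge k 2 with h2 | h2
        · have hk1 : k = 1 := by omega
          subst hk1
          have : ((p : R) * c) ^ 1 * 1 ^ (p - 1) * (p.choose 1 : R) = (p : R) * p * c := by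
            rw [Nat.choose_one_right]; ring
          rw [this, hppR, zero_mul]
        · have hz : ((p : R) * c) ^ k = 0 := by
            have h2' : ((p : R) * c) ^ 2 = 0 := by
              have : ((p : R) * c) ^ 2 = (p : R) * p * (c * c) := by ring
              rw [this, hppR, zero_mul]
            calc ((p : R) * c) ^ k = ((p : R) * c) ^ 2 * ((p : R) * c) ^ (k - 2) := by
                  rw [← pow_add]; congr 1; omega
              _ = 0 := by rw [h2', zero_mul]
          rw [hz, zero_mul, zero_mul]
    have hone : (ξ ^ m) ^ p = 1 := by
      apply Units.ext
      rw [Units.val_pow_eq_pow_val, hpow, hbin, Units.val_one]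
    have hdvd : (p ^ r - 1) ∣ m * p := by
      rw [← hξ]
      exact orderOf_dvd_of_pow_eq_one (by rw [pow_mul]; exact hone)
    have hcop : Nat.Coprime (p ^ r - 1) p := by
      have hnd : ¬ p ∣ p ^ r - 1 := by
        intro hd
        have h1 : p ∣ p ^ r := dvd_pow_self p (by omega)
        have h2 := Nat.dvd_sub h1 hd
        have h3 : p ^ r - (p ^ r - 1) = 1 := by omega
        rw [h3] at h2
        have := Nat.le_of_dvd (by omega) h2
        omega
      exact ((hp.coprime_iff_not_dvd).2 hnd).symm
    exact hcop.dvd_of_dvd_mul_right hdvd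
  have hxiinj : ∀ i j : ℕ, i < p ^ r - 1 → j < p ^ r - 1 →
      (p : R) ∣ (ξ : R) ^ i - (ξ : R) ^ j → i = j := by
    have key : ∀ i j : ℕ, j ≤ i → i < p ^ r - 1 →
        (p : R) ∣ (ξ : R) ^ i - (ξ : R) ^ j → i = j := by
      intro i j hji hi hd
      have hfac : (ξ : R) ^ i - (ξ : R) ^ j = (ξ : R) ^ j * ((ξ : R) ^ (i - j) - 1) := by
        rw [mul_sub, mul_one, ← pow_add]
        congr 2
        omega
      rw [hfac, ← Units.val_pow_eq_pow_val] at hd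
      have hd' : (p : R) ∣ (ξ : R) ^ (i - j) - 1 := (Units.dvd_mul_left).1 hd
      have hdv := horder (i - j) hd'
      rcases Nat.eq_zero_or_pos (i - j) with h0 | hpos
      · omega
      · have := Nat.le_of_dvd hpos hdv
        omega
    intro i j hi hj hd
    rcases le_total j i with h | h
    · exact key i j h hi hd
    · exact (key j i h hj (dvd_sub_comm.1 hd)).symm
  have Tinj : ∀ a ∈ T, ∀ b ∈ T, (p : R) ∣ a - b → a = b := by
    intro a ha b hb hd
    rw [hT, mem_insert] at ha hb
    rcases ha with rfl | ha <;> rcases hb with rfl | hb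
    · rfl
    · exfalso
      rw [zero_sub, dvd_neg] at hd
      exact (hnu b).2 hd (hUnit_ts b hb)
    · exfalso
      rw [sub_zero] at hd
      exact (hnu a).2 hd (hUnit_ts a ha)
    · rw [hTstar, mem_image] at ha hb
      obtain ⟨i, hi, rfl⟩ := ha
      obtain ⟨j, hj, rfl⟩ := hb
      rw [hxiinj i j (mem_range.1 hi) (mem_range.1 hj) hd]
  have hTscard : Tstar.card = p ^ r - 1 := by
    rw [hTstar, card_image_of_injOn, card_range]
    intro i hi j hj h
    refine hxiinj i j (mem_range.1 (mem_coe.1 hi)) (mem_range.1 (mem_coe.1 hj)) ?_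
    rw [show (ξ : R) ^ i = (ξ : R) ^ j from h]
    simp
  have hTcard : T.card = p ^ r := by
    rw [hT, card_insert_of_notMem h0nTs, hTscard]
    omega
  -- the set of multiples of p
  set S : Finset R := univ.filter (fun z => (p : R) ∣ z) with hS
  have hSim : univ.image (fun x : R => (p : R) * x) = S := by
    ext z
    rw [mem_image, hS, mem_filter]
    constructor
    · rintro ⟨x, _, rfl⟩; exact ⟨mem_univ _, Dvd.intro x rfl⟩
    · rintro ⟨_, c, rfl⟩; exact ⟨c, mem_univ c, rfl⟩
  have hfib : ∀ y ∈ univ.image (fun x : R => (p : R) * x),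
      (univ.filter (fun x : R => (p : R) * x = y)).card = S.card := by
    intro y hy
    obtain ⟨x₀, -, rfl⟩ := mem_image.1 hy
    apply Finset.card_nbij' (fun x => x - x₀) (fun z => z + x₀)
    · intro a ha
      simp only [mem_coe, mem_filter] at ha
      simp only [mem_coe, hS, mem_filter]
      refine ⟨mem_univ _, (hann _).1 ?_⟩
      rw [mul_sub, ha.2, sub_self]
    · intro a ha
      simp only [mem_coe, hS, mem_filter] at ha
      simp only [mem_coe, mem_filter]
      refine ⟨mem_univ _, ?_⟩
      rw [mul_add, (hann _).2 ha.2, zero_add]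
    · intro a _; ring
    · intro a _; ring
  have hScard : S.card = p ^ r := by
    have h1 : Fintype.card R = S.card * S.card := by
      rw [← card_univ, card_eq_sum_card_fiberwise
        (f := fun x : R => (p : R) * x) (t := univ.image (fun x : R => (p : R) * x))
        (fun x _ => mem_image_of_mem _ (mem_univ x)), Finset.sum_congr rfl hfib,
        sum_const, smul_eq_mul, hSim]
    have h2 : S.card ^ 2 = (p ^ r) ^ 2 := by
      rw [pow_two, pow_two, ← h1, hcard, two_mul, pow_add]
    exact Nat.pow_left_injective (by norm_num) h2
  -- unique representatives
  have hrep : ∀ x : R, ∃! t, t ∈ T ∧ (p : R) ∣ x - t := by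
    have hcover : T.biUnion (fun t => S.image (fun s => t + s)) = univ := by
      apply eq_univ_of_card
      rw [card_biUnion]
      · have hc : ∀ t ∈ T, (S.image (fun s => t + s)).card = p ^ r := by
          intro t _
          rw [card_image_of_injective _ (add_right_injective t), hScard]
        rw [sum_congr rfl hc, sum_const, smul_eq_mul, hTcard, hcard, two_mul, pow_add]
      · intro t ht u hu htu
        simp only [Function.onFun]
        rw [Finset.disjoint_left]
        intro a hat hau
        obtain ⟨s, hs, rfl⟩ := mem_image.1 hat
        obtain ⟨s', hs', heq⟩ := mem_image.1 hau
        rw [hS, mem_filter] at hs hs'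
        apply htu
        apply Tinj t ht u hu
        have : t - u = s' - s := by linear_combination -heq
        rw [this]
        exact dvd_sub hs'.2 hs.2
    intro x
    have hx : x ∈ T.biUnion (fun t => S.image (fun s => t + s)) := hcover ▸ mem_univ x
    obtain ⟨t, ht, hmem⟩ := mem_biUnion.1 hx
    obtain ⟨s, hs, hts⟩ := mem_image.1 hmem
    rw [hS, mem_filter] at hs
    refine ⟨t, ⟨ht, ?_⟩, ?_⟩
    · have : x - t = s := by linear_combination -hts
      rw [this]; exact hs.2
    · rintro y ⟨hy, hdy⟩
      apply Tinj y hy t ht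
      have : y - t = (x - t) - (x - y) := by ring
      rw [this]
      refine dvd_sub ?_ hdy
      have hxts : x - t = s := by linear_combination -hts
      rw [hxts]; exact hs.2
  choose ρ hρ using hrep
  have hunit1p : ∀ a : R, IsUnit (1 + (p : R) * a) := by
    intro a
    by_contra h
    have hd := (hnu _).1 h
    have h1 : (p : R) ∣ 1 := by
      have : (1 : R) = (1 + (p : R) * a) - p * a := by ring
      rw [this]
      exact dvd_sub hd ⟨a, rfl⟩
    exact (hnu (p : R)).2 dvd_rfl (isUnit_of_dvd_one h1)
  -- the central counting lemma
  have hcount : ∀ y : R, ¬ (p : R) ∣ y →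
      ((Tstar ×ˢ Tstar).filter (fun q => q.1 ≠ q.2 ∧ (p : R) ∣ q.1 - q.2 - y)).card
        = p ^ r - 2 := by
    intro y hy
    have ht0T : ρ y ∈ T := (hρ y).1.1
    have ht0d : (p : R) ∣ y - ρ y := (hρ y).1.2
    have ht0Ts : ρ y ∈ Tstar := by
      rw [hT, mem_insert] at ht0T
      rcases ht0T with h0 | h
      · exact absurd (by rwa [h0, sub_zero] at ht0d) hy
      · exact h
    have hb : ((Tstar ×ˢ Tstar).filter (fun q => q.1 ≠ q.2 ∧ (p : R) ∣ q.1 - q.2 - y)).card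
        = (Tstar.erase (ρ y)).card := by
      apply Finset.card_bij (fun q _ => q.1)
      · rintro ⟨t, t'⟩ hq
        simp only [mem_filter, mem_product] at hq
        obtain ⟨⟨ht, ht'⟩, hne, hd⟩ := hq
        rw [mem_erase]
        refine ⟨?_, ht⟩
        intro heq
        have hyt : (p : R) ∣ y - t := by rw [show t = ρ y from heq]; exact ht0d
        have : (p : R) ∣ t' := by
          have h2 := dvd_add hyt hd
          have h3 : y - t + (t - t' - y) = -t' := by ring
          rwa [h3, dvd_neg] at h2
        exact (hnu t').2 this (hUnit_ts t' ht')
      · rintro ⟨t, t'⟩ h1 ⟨u, u'⟩ h2 h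
        simp only at h
        subst h
        simp only [mem_filter, mem_product] at h1 h2
        refine Prod.ext rfl ?_
        apply Tinj t' (hTsT h1.1.2) u' (hTsT h2.1.2)
        have : t' - u' = (t - u' - y) - (t - t' - y) := by ring
        rw [this]
        exact dvd_sub h2.2.2 h1.2.2
      · intro t ht
        rw [mem_erase] at ht
        obtain ⟨hne0, hts⟩ := ht
        have h1 : ρ (t - y) ∈ T := (hρ _).1.1
        have h2 : (p : R) ∣ (t - y) - ρ (t - y) := (hρ _).1.2
        have h3 : ρ (t - y) ∈ Tstar := by
          rw [hT, mem_insert] at h1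
          rcases h1 with h0 | h
          · exfalso
            rw [h0, sub_zero] at h2
            exact hne0 ((hρ y).2 t ⟨hTsT hts, dvd_sub_comm.1 h2⟩)
          · exact h
        have h4 : t ≠ ρ (t - y) := by
          intro heq
          apply hy
          have := h2
          rw [← heq] at this
          have he : t - y - t = -y := by ring
          rwa [he, dvd_neg] at this
        refine ⟨(t, ρ (t - y)), ?_, rfl⟩
        simp only [mem_filter, mem_product]
        refine ⟨⟨hts, h3⟩, h4, ?_⟩
        have he : t - ρ (t - y) - y = (t - y) - ρ (t - y) := by ring
        rw [he]
        exact h2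
    rw [hb, card_erase_of_mem ht0Ts, hTscard]
    omega
  -- counting the α's giving a fixed difference
  have halpha : ∀ t ∈ Tstar, ∀ t' ∈ Tstar, t ≠ t' → ∀ x : R,
      (T.filter (fun α => (1 + (p : R) * α) * (t - t') = x)).card
        = if (p : R) ∣ t - t' - x then 1 else 0 := by
    intro t ht t' ht' hne x
    have hdu : IsUnit (t - t') := by
      by_contra h
      exact hne (Tinj t (hTsT ht) t' (hTsT ht') ((hnu _).1 h))
    split_ifs with hdx
    · obtain ⟨u, hu⟩ := hdu
      obtain ⟨c, hc⟩ := hdx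
      have hiff : ∀ α : R, ((1 + (p : R) * α) * (t - t') = x ↔
          (p : R) ∣ (-(c * ↑u⁻¹)) - α) := by
        intro α
        constructor
        · intro h
          have h1 : (p : R) * (α * (t - t') + c) = 0 := by linear_combination h - hc
          have h2 : (p : R) ∣ α * (t - t') + c := (hann _).1 h1
          have h3 : (p : R) ∣ (α * (t - t') + c) * ↑u⁻¹ := (Units.dvd_mul_right).2 h2
          have h4 : (α * (t - t') + c) * (↑u⁻¹ : R) = α + c * ↑u⁻¹ := by
            calc (α * (t - t') + c) * (↑u⁻¹ : R)
                = α * ((t - t') * ↑u⁻¹) + c * ↑u⁻¹ := by ring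
              _ = α + c * ↑u⁻¹ := by rw [← hu, Units.mul_inv, mul_one]
          rw [h4] at h3
          have h5 : -(c * (↑u⁻¹ : R)) - α = -(α + c * ↑u⁻¹) := by ring
          rw [h5, dvd_neg]
          exact h3
        · intro h
          have h3 : (p : R) ∣ α + c * ↑u⁻¹ := by
            rw [show α + c * (↑u⁻¹ : R) = -((-(c * ↑u⁻¹)) - α) by ring, dvd_neg]
            exact h
          have h2 : (p : R) ∣ (α + c * ↑u⁻¹) * ↑u := (Units.dvd_mul_right).2 h3
          have h4 : (α + c * (↑u⁻¹ : R)) * ↑u = α * (t - t') + c := by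
            calc (α + c * (↑u⁻¹ : R)) * ↑u = α * ↑u + c * (↑u⁻¹ * ↑u) := by ring
              _ = α * (t - t') + c := by rw [Units.inv_mul, mul_one, hu]
          rw [h4] at h2
          have h1 : (p : R) * (α * (t - t') + c) = 0 := (hann _).2 h2
          have h6 : (1 + (p : R) * α) * (t - t') - x = (p : R) * (α * (t - t') + c) := by
            linear_combination hc
          rw [h1] at h6
          exact sub_eq_zero.1 h6
      rw [Finset.card_eq_one]
      refine ⟨ρ (-(c * ↑u⁻¹)), ?_⟩
      ext α
      simp only [mem_filter, mem_singleton]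
      constructor
      · rintro ⟨hαT, hαe⟩
        exact (hρ _).2 α ⟨hαT, (hiff α).1 hαe⟩
      · rintro rfl
        exact ⟨(hρ _).1.1, (hiff _).2 (hρ _).1.2⟩
    · rw [Finset.card_eq_zero, Finset.filter_eq_empty_iff]
      intro α _ h
      apply hdx
      exact ⟨-(α * (t - t')), by linear_combination h⟩
  -- the sum over α for a unit difference value
  have hsum : ∀ x : R, ¬ (p : R) ∣ x →
      ∑ α ∈ T, ((Tstar ×ˢ Tstar).filter
          (fun q => q.1 ≠ q.2 ∧ (1 + (p : R) * α) * (q.1 - q.2) = x)).card = p ^ r - 2 := by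
    intro x hx
    calc ∑ α ∈ T, ((Tstar ×ˢ Tstar).filter
            (fun q => q.1 ≠ q.2 ∧ (1 + (p : R) * α) * (q.1 - q.2) = x)).card
        = ∑ α ∈ T, ∑ q ∈ Tstar ×ˢ Tstar,
            if q.1 ≠ q.2 ∧ (1 + (p : R) * α) * (q.1 - q.2) = x then 1 else 0 := by
          exact sum_congr rfl fun α _ => card_filter _ _
      _ = ∑ q ∈ Tstar ×ˢ Tstar, ∑ α ∈ T,
            if q.1 ≠ q.2 ∧ (1 + (p : R) * α) * (q.1 - q.2) = x then 1 else 0 :=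
          Finset.sum_comm
      _ = ∑ q ∈ Tstar ×ˢ Tstar,
            if q.1 ≠ q.2 ∧ (p : R) ∣ q.1 - q.2 - x then 1 else 0 := by
          apply sum_congr rfl
          rintro ⟨t, t'⟩ hq
          rw [mem_product] at hq
          by_cases hne : t = t'
          · simp [hne]
          · have h1 : ∑ α ∈ T, (if t ≠ t' ∧ (1 + (p : R) * α) * (t - t') = x then 1 else 0)
                = (T.filter (fun α => (1 + (p : R) * α) * (t - t') = x)).card := by
              rw [card_filter]
              apply sum_congr rfl
              intro α _
              simp [hne]
            rw [h1, halpha t hq.1 t' hq.2 hne x]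
            simp [hne]
      _ = ((Tstar ×ˢ Tstar).filter
            (fun q => q.1 ≠ q.2 ∧ (p : R) ∣ q.1 - q.2 - x)).card := (card_filter _ _).symm
      _ = p ^ r - 2 := hcount x hx
  -- the blocks of the family
  set f : R → Finset R := fun α => Tstar.image (fun t => (1 + (p : R) * α) * t) with hf
  set g : Finset R := Tstar.image (fun t => (p : R) * t) with hg
  have hfc : ∀ α : R, ∀ a ∈ Tstar, ∀ b ∈ Tstar,
      (1 + (p : R) * α) * a = (1 + (p : R) * α) * b → a = b := by
    intro α a _ b _ h
    obtain ⟨u, hu⟩ := hunit1p α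
    rw [← hu] at h
    exact (Units.mul_right_inj u).1 h
  have hgc : ∀ a ∈ Tstar, ∀ b ∈ Tstar, (p : R) * a = (p : R) * b → a = b := by
    intro a ha b hb h
    apply Tinj a (hTsT ha) b (hTsT hb)
    apply (hann _).1
    rw [mul_sub, h, sub_self]
  have hfcard : ∀ α : R, (f α).card = p ^ r - 1 := by
    intro α
    simp only [hf]
    rw [card_image_of_injOn
      (fun a ha b hb h => hfc α a (mem_coe.1 ha) b (mem_coe.1 hb) h), hTscard]
  have hgcard : g.card = p ^ r - 1 := by
    simp only [hg]
    rw [card_image_of_injOn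
      (fun a ha b hb h => hgc a (mem_coe.1 ha) b (mem_coe.1 hb) h), hTscard]
  have hfinj : ∀ α ∈ T, ∀ α' ∈ T, f α = f α' → α = α' := by
    intro α hα α' hα' h
    have h1 : (1 + (p : R) * α) * 1 ∈ f α := mem_image_of_mem _ h1Ts
    rw [h] at h1
    obtain ⟨t, ht, hteq⟩ := mem_image.1 h1
    have hpt : (p : R) ∣ 1 - t := ⟨α' * t - α, by linear_combination -hteq⟩
    have h1t : (1 : R) = t := Tinj 1 (hTsT h1Ts) t (hTsT ht) hpt
    rw [← h1t, mul_one] at hteq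
    have hz : (p : R) * (α' - α) = 0 := by linear_combination hteq
    exact (Tinj α' hα' α hα ((hann _).1 hz)).symm
  have hgnotin : g ∉ T.image f := by
    intro hmem
    obtain ⟨α, hα, hfa⟩ := mem_image.1 hmem
    have h1 : (1 + (p : R) * α) * 1 ∈ f α := mem_image_of_mem _ h1Ts
    rw [hfa] at h1
    obtain ⟨t, ht, hteq⟩ := mem_image.1 h1
    have hune : IsUnit ((p : R) * t) := by rw [hteq]; exact (hunit1p α).mul isUnit_one
    exact (hnu _).2 ⟨t, rfl⟩ hune
  have hfg : ∀ α : R, Disjoint (f α) g := by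
    intro α
    rw [Finset.disjoint_left]
    intro a haf hag
    obtain ⟨t, ht, rfl⟩ := mem_image.1 haf
    obtain ⟨s', hs', heq⟩ := mem_image.1 hag
    have hu : IsUnit ((1 + (p : R) * α) * t) := (hunit1p α).mul (hUnit_ts t ht)
    rw [← heq] at hu
    exact (hnu _).2 ⟨s', rfl⟩ hu
  have hff : ∀ α ∈ T, ∀ α' ∈ T, α ≠ α' → Disjoint (f α) (f α') := by
    intro α hα α' hα' hne
    rw [Finset.disjoint_left]
    intro a haf haf'
    obtain ⟨t, ht, rfl⟩ := mem_image.1 haf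
    obtain ⟨t', ht', heq⟩ := mem_image.1 haf'
    have hptt : (p : R) ∣ t - t' := ⟨α' * t' - α * t, by linear_combination -heq⟩
    have htt : t = t' := Tinj t (hTsT ht) t' (hTsT ht') hptt
    subst htt
    have hz : (p : R) * ((α' - α) * t) = 0 := by linear_combination heq
    have hd1 : (p : R) ∣ (α' - α) * t := (hann _).1 hz
    obtain ⟨u, hu⟩ := hUnit_ts t ht
    rw [← hu] at hd1
    exact hne (Tinj α' hα' α hα ((Units.dvd_mul_right).1 hd1)).symm
  have goal1 : E.card = p ^ r + 1 := by
    rw [hE, card_union_of_disjoint (Finset.disjoint_singleton_right.2 hgnotin),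
      card_image_of_injOn (fun a ha b hb h => hfinj a (mem_coe.1 ha) b (mem_coe.1 hb) h),
      hTcard, card_singleton]
  have goal2 : ∀ B ∈ E, B.card = p ^ r - 1 := by
    intro B hB
    rw [hE, mem_union, mem_singleton] at hB
    rcases hB with h | rfl
    · obtain ⟨α, -, rfl⟩ := mem_image.1 h
      exact hfcard α
    · exact hgcard
  have goal3 : ∀ B ∈ E, ∀ B' ∈ E, B ≠ B' → Disjoint B B' := by
    intro B hB B' hB' hne
    rw [hE, mem_union, mem_singleton] at hB hB'
    rcases hB with h | rfl <;> rcases hB' with h' | rfl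
    · obtain ⟨α, hα, rfl⟩ := mem_image.1 h
      obtain ⟨α', hα', rfl⟩ := mem_image.1 h'
      exact hff α hα α' hα' (fun haa => hne (by rw [haa]))
    · obtain ⟨α, hα, rfl⟩ := mem_image.1 h
      exact hfg α
    · obtain ⟨α, hα, rfl⟩ := mem_image.1 h'
      exact (hfg α).symm
    · exact absurd rfl hne
  have goal4 : E.biUnion id = univ \ {(0 : R)} := by
    apply Finset.eq_of_subset_of_card_le
    · intro a ha
      obtain ⟨B, hB, haB⟩ := mem_biUnion.1 ha
      rw [mem_sdiff, mem_singleton]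
      refine ⟨mem_univ _, ?_⟩
      rw [hE, mem_union, mem_singleton] at hB
      simp only [id] at haB
      rcases hB with h | rfl
      · obtain ⟨α, hα, rfl⟩ := mem_image.1 h
        obtain ⟨t, ht, rfl⟩ := mem_image.1 haB
        exact ((hunit1p α).mul (hUnit_ts t ht)).ne_zero
      · obtain ⟨t, ht, rfl⟩ := mem_image.1 haB
        intro h0
        exact (hnu t).2 ((hann t).1 h0) (hUnit_ts t ht)
    · have h1 : (univ \ {(0 : R)}).card = p ^ (2 * r) - 1 := by
        rw [card_sdiff_of_subset (subset_univ _), card_singleton, card_univ, hcard]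
      have h2 : (E.biUnion id).card = (p ^ r + 1) * (p ^ r - 1) := by
        change (E.biUnion fun B => B).card = _
        rw [card_biUnion goal3, Finset.sum_congr rfl (fun B hB => goal2 B hB),
          sum_const, smul_eq_mul, goal1]
      have h3 : (p ^ r + 1) * (p ^ r - 1) = p ^ (2 * r) - 1 := by
        have e1 : p ^ (2 * r) = (p ^ r) ^ 2 := by rw [two_mul, pow_add, pow_two]
        calc (p ^ r + 1) * (p ^ r - 1) = (p ^ r) ^ 2 - 1 ^ 2 := (Nat.sq_sub_sq _ _).symm
          _ = p ^ (2 * r) - 1 := by rw [e1, one_pow]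
      rw [h1, h2, h3]
  have goal5 : ∀ x : R, x ≠ 0 → ∑ B ∈ E, diffCount B x = p ^ r - 2 := by
    intro x hx
    have hdecomp : ∑ B ∈ E, diffCount B x
        = ∑ α ∈ T, diffCount (f α) x + diffCount g x := by
      rw [hE, sum_union (Finset.disjoint_singleton_right.2 hgnotin), sum_singleton,
        Finset.sum_image hfinj]
    rw [hdecomp]
    have hfd : ∀ α : R, diffCount (f α) x
        = ((Tstar ×ˢ Tstar).filter
            (fun q => q.1 ≠ q.2 ∧ (1 + (p : R) * α) * (q.1 - q.2) = x)).card :=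
      fun α => aux_diffCount_image _ x Tstar (hfc α)
    have hgd : diffCount g x
        = ((Tstar ×ˢ Tstar).filter
            (fun q => q.1 ≠ q.2 ∧ (p : R) * (q.1 - q.2) = x)).card :=
      aux_diffCount_image _ x Tstar hgc
    by_cases hxd : (p : R) ∣ x
    · obtain ⟨y, hy⟩ := hxd
      have hyp : ¬ (p : R) ∣ y := by
        rintro ⟨z, rfl⟩
        apply hx
        rw [hy, ← mul_assoc, hppR, zero_mul]
      have hffz : ∀ α ∈ T, diffCount (f α) x = 0 := by
        intro α _
        rw [hfd α, Finset.card_eq_zero, Finset.filter_eq_empty_iff]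
        rintro ⟨t, t'⟩ hq ⟨hne, heq⟩
        rw [mem_product] at hq
        apply hne
        apply Tinj _ (hTsT hq.1) _ (hTsT hq.2)
        obtain ⟨u, hu⟩ := hunit1p α
        have hd : (p : R) ∣ (1 + (p : R) * α) * (t - t') := by
          rw [heq, hy]; exact ⟨y, rfl⟩
        rw [← hu] at hd
        exact (Units.dvd_mul_left).1 hd
      rw [Finset.sum_congr rfl hffz, Finset.sum_const_zero, zero_add, hgd]
      have hfe : (Tstar ×ˢ Tstar).filter
            (fun q => q.1 ≠ q.2 ∧ (p : R) * (q.1 - q.2) = x)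
          = (Tstar ×ˢ Tstar).filter
            (fun q => q.1 ≠ q.2 ∧ (p : R) ∣ q.1 - q.2 - y) := by
        apply filter_congr
        rintro ⟨t, t'⟩ _
        constructor
        · rintro ⟨hne, heq⟩
          refine ⟨hne, (hann _).1 ?_⟩
          rw [mul_sub, heq, hy, sub_self]
        · rintro ⟨hne, hd⟩
          refine ⟨hne, ?_⟩
          have hz := (hann _).2 hd
          rw [hy]
          linear_combination hz
      rw [hfe]
      exact hcount y hyp
    · have hgz : diffCount g x = 0 := by
        rw [hgd, Finset.card_eq_zero, Finset.filter_eq_empty_iff]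
        rintro ⟨t, t'⟩ _ ⟨hne, heq⟩
        exact hxd ⟨t - t', heq.symm⟩
      rw [hgz, add_zero]
      calc ∑ α ∈ T, diffCount (f α) x
          = ∑ α ∈ T, ((Tstar ×ˢ Tstar).filter
              (fun q => q.1 ≠ q.2 ∧ (1 + (p : R) * α) * (q.1 - q.2) = x)).card :=
            sum_congr rfl (fun α _ => hfd α)
        _ = p ^ r - 2 := hsum x hxd
  exact ⟨goal1, goal2, goal3, goal4, goal5⟩
end

section
/- In GR(4, r) with r ≥ 2, the Teichmüller set T is a (2^r, 2^r, 2^r, 1) relative difference set in the additive group of GR(4, r) relative to the maximal ideal I = 2·GR(4, r): every element of GR(4,r) \ I has exactly one representation as a difference β - β' of distinct elements β, β' ∈ T, and no nonzero element of I has such a representation. -/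
open Finset

section Aux

variable {R : Type*} [CommRing R] [IsLocalRing R]

lemma aux_two_ne_zero (hchar : CharP R 4) : (2 : R) ≠ 0 := by
  intro h
  have h2 : ((2 : ℕ) : R) = 0 := by exact_mod_cast h
  have := (CharP.cast_eq_zero_iff R 4 2).mp h2
  omega

lemma aux_four_eq_zero (hchar : CharP R 4) : (4 : R) = 0 := by
  have := CharP.cast_eq_zero R 4
  exact_mod_cast this

lemma aux_ann_two (hchar : CharP R 4)
    (hmax : IsLocalRing.maximalIdeal R = Ideal.span {(2 : R)}) (x : R) :
    2 * x = 0 ↔ x ∈ Ideal.span {(2 : R)} := by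
  constructor
  · intro h
    rw [← hmax, IsLocalRing.mem_maximalIdeal, mem_nonunits_iff]
    intro hu
    obtain ⟨u, rfl⟩ := hu
    have : (2 : R) = 2 * ↑u * ↑u⁻¹ := by
      rw [mul_assoc, Units.mul_inv, mul_one]
    rw [h, zero_mul] at this
    exact aux_two_ne_zero hchar this
  · intro h
    rw [Ideal.mem_span_singleton] at h
    obtain ⟨c, rfl⟩ := h
    have h4 : (4 : R) = 0 := aux_four_eq_zero hchar
    linear_combination c * h4

/-- Units are not in the span of 2 (the maximal ideal). -/
lemma aux_unit_notMem (hmax : IsLocalRing.maximalIdeal R = Ideal.span {(2 : R)})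
    (u : Rˣ) : (u : R) ∉ Ideal.span {(2 : R)} := by
  rw [← hmax, IsLocalRing.mem_maximalIdeal, mem_nonunits_iff]
  exact fun h => h u.isUnit

/-- Injectivity of reduction mod 2 on the Teichmüller set. -/
lemma aux_teich_inj (hchar : CharP R 4)
    (hmax : IsLocalRing.maximalIdeal R = Ideal.span {(2 : R)})
    (r : ℕ) (hr : 2 ≤ r) (ξ : Rˣ) (hξ : orderOf ξ = 2 ^ r - 1)
    {a b : R} (ha : a = 0 ∨ ∃ i : ℕ, a = (ξ : R) ^ i)
    (hb : b = 0 ∨ ∃ j : ℕ, b = (ξ : R) ^ j)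
    (h : a - b ∈ Ideal.span {(2 : R)}) : a = b := by
  have h4 : (4 : R) = 0 := aux_four_eq_zero hchar
  rcases ha with rfl | ⟨i, rfl⟩ <;> rcases hb with rfl | ⟨j, rfl⟩
  · rfl
  · exfalso
    rw [zero_sub] at h
    have h' : (((ξ ^ j : Rˣ) : R)) ∈ Ideal.span {(2 : R)} := by
      have := (Ideal.span {(2:R)}).neg_mem h
      simpa using this
    exact aux_unit_notMem hmax (ξ ^ j) h'
  · exfalso
    rw [sub_zero] at h
    have h' : (((ξ ^ i : Rˣ) : R)) ∈ Ideal.span {(2 : R)} := by simpa using h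
    exact aux_unit_notMem hmax (ξ ^ i) h'
  · -- both are powers of ξ
    set u : Rˣ := ξ ^ i * (ξ ^ j)⁻¹ with hu
    have hval : ((u : R)) = (ξ : R) ^ i * ((ξ ^ j)⁻¹ : Rˣ) := by
      simp [hu]
    have hmem : ((u : R)) - 1 ∈ Ideal.span {(2 : R)} := by
      have := Ideal.mul_mem_right (((ξ ^ j)⁻¹ : Rˣ) : R) _ h
      have heq : ((ξ : R) ^ i - (ξ : R) ^ j) * (((ξ ^ j)⁻¹ : Rˣ) : R) = (u : R) - 1 := by
        rw [hval, sub_mul]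
        congr 1
        have : ((ξ ^ j : Rˣ) : R) * (((ξ ^ j)⁻¹ : Rˣ) : R) = 1 := by
          rw [← Units.val_mul]; simp
        simpa using this
      rwa [heq] at this
    rw [Ideal.mem_span_singleton] at hmem
    obtain ⟨c, hc⟩ := hmem
    have hc' : (u : R) = 1 + 2 * c := by linear_combination hc
    have hsq : ((u : R)) ^ 2 = 1 := by
      rw [hc']; linear_combination (c + c ^ 2) * h4
    have husq : u ^ 2 = 1 := by
      ext
      simpa using hsq
    have hd2 : orderOf u ∣ 2 := orderOf_dvd_of_pow_eq_one husq
    have hord : ξ ^ (2 ^ r - 1) = 1 := by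
      rw [← hξ]; exact pow_orderOf_eq_one ξ
    have hupow : u ^ (2 ^ r - 1) = 1 := by
      rw [hu, mul_pow, ← pow_mul, inv_pow, ← pow_mul,
        mul_comm i, mul_comm j, pow_mul, pow_mul, hord, one_pow, one_pow, inv_one, mul_one]
    have hdodd : orderOf u ∣ 2 ^ r - 1 := orderOf_dvd_of_pow_eq_one hupow
    have hodd : ¬ (2 ∣ 2 ^ r - 1) := by
      have h2r : 2 ∣ 2 ^ r := dvd_pow_self 2 (by omega)
      have h2r' : 2 ^ r ≥ 4 := by
        calc 2 ^ 2 ≤ 2 ^ r := Nat.pow_le_pow_right (by norm_num) hr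
        _ = 2 ^ r := rfl
      omega
    have hone : orderOf u = 1 := by
      rcases (Nat.dvd_prime Nat.prime_two).mp hd2 with h1 | h2
      · exact h1
      · exact absurd (h2 ▸ hdodd) hodd
    have : u = 1 := orderOf_eq_one_iff.mp hone
    have : ξ ^ i = ξ ^ j := by
      rw [hu] at this
      exact mul_inv_eq_one.mp this
    calc (ξ : R) ^ i = ((ξ ^ i : Rˣ) : R) := by simp
      _ = ((ξ ^ j : Rˣ) : R) := by rw [this]
      _ = (ξ : R) ^ j := by simp

/-- the freshman's-dream style identity in characteristic 4. -/
lemma aux_pow_identity {R : Type*} [CommRing R] (h4 : (4 : R) = 0) (a b : R) (m : ℕ) :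
    (a + b) ^ (2 ^ (m + 1)) = a ^ (2 ^ (m + 1)) + b ^ (2 ^ (m + 1)) + 2 * (a * b) ^ (2 ^ m) := by
  induction m with
  | zero => ring
  | succ n ih =>
    have h2 : (2 : ℕ) ^ (n + 2) = 2 ^ (n + 1) * 2 := by ring
    rw [h2, pow_mul, pow_mul, pow_mul, mul_pow a b, ih]
    set A := a ^ (2 ^ (n + 1))
    set B := b ^ (2 ^ (n + 1))
    set C := (a * b) ^ (2 ^ n)
    linear_combination (A * C + B * C + C ^ 2) * h4

lemma aux_teich_pow (r : ℕ) (hr : 2 ≤ r) (ξ : Rˣ) (hξ : orderOf ξ = 2 ^ r - 1)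
    {t : R} (ht : t = 0 ∨ ∃ i : ℕ, t = (ξ : R) ^ i) : t ^ (2 ^ r) = t := by
  rcases ht with rfl | ⟨i, rfl⟩
  · exact zero_pow (by positivity)
  · have hord : ξ ^ (2 ^ r - 1) = 1 := by
      rw [← hξ]; exact pow_orderOf_eq_one ξ
    have h1 : 1 ≤ 2 ^ r := Nat.one_le_two_pow
    have key : ξ ^ (i * 2 ^ r) = ξ ^ i := by
      have : i * 2 ^ r = i + i * (2 ^ r - 1) := by
        have h' : 2 ^ r = 1 + (2 ^ r - 1) := by omega
        calc i * 2 ^ r = i * (1 + (2 ^ r - 1)) := by rw [← h']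
          _ = i + i * (2 ^ r - 1) := by ring
      rw [this, pow_add, mul_comm i, pow_mul, hord, one_pow, mul_one]
    calc ((ξ : R) ^ i) ^ 2 ^ r = ((ξ ^ (i * 2 ^ r) : Rˣ) : R) := by
          rw [← pow_mul]; simp
      _ = ((ξ ^ i : Rˣ) : R) := by rw [key]
      _ = (ξ : R) ^ i := by simp

lemma aux_P_mul (ξ : Rˣ) {a b : R}
    (ha : a = 0 ∨ ∃ i : ℕ, a = (ξ : R) ^ i) (hb : b = 0 ∨ ∃ j : ℕ, b = (ξ : R) ^ j) :
    a * b = 0 ∨ ∃ k : ℕ, a * b = (ξ : R) ^ k := by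
  rcases ha with rfl | ⟨i, rfl⟩
  · left; rw [zero_mul]
  rcases hb with rfl | ⟨j, rfl⟩
  · left; rw [mul_zero]
  · right; exact ⟨i + j, by rw [pow_add]⟩

lemma aux_P_pow (ξ : Rˣ) {a : R} (n : ℕ) (hn : n ≠ 0)
    (ha : a = 0 ∨ ∃ i : ℕ, a = (ξ : R) ^ i) :
    a ^ n = 0 ∨ ∃ k : ℕ, a ^ n = (ξ : R) ^ k := by
  rcases ha with rfl | ⟨i, rfl⟩
  · left; exact zero_pow hn
  · right; exact ⟨i * n, by rw [pow_mul]⟩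

/-- If two pairs of Teichmüller elements have the same sum, they have the same product. -/
lemma aux_sum_det_prod (hchar : CharP R 4)
    (hmax : IsLocalRing.maximalIdeal R = Ideal.span {(2 : R)})
    (r : ℕ) (hr : 2 ≤ r) (ξ : Rˣ) (hξ : orderOf ξ = 2 ^ r - 1)
    {a b a' b' : R}
    (ha : a = 0 ∨ ∃ i : ℕ, a = (ξ : R) ^ i) (hb : b = 0 ∨ ∃ i : ℕ, b = (ξ : R) ^ i)
    (ha' : a' = 0 ∨ ∃ i : ℕ, a' = (ξ : R) ^ i) (hb' : b' = 0 ∨ ∃ i : ℕ, b' = (ξ : R) ^ i)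
    (h : a + b = a' + b') : a * b = a' * b' := by
  have h4 : (4 : R) = 0 := aux_four_eq_zero hchar
  have hm : r - 1 + 1 = r := by omega
  have key : ∀ x y : R, (x = 0 ∨ ∃ i : ℕ, x = (ξ : R) ^ i) →
      (y = 0 ∨ ∃ i : ℕ, y = (ξ : R) ^ i) →
      (x + y) ^ (2 ^ r) = x + y + 2 * (x * y) ^ (2 ^ (r - 1)) := by
    intro x y hx hy
    have := aux_pow_identity h4 x y (r - 1)
    rw [hm] at this
    rw [this, aux_teich_pow r hr ξ hξ hx, aux_teich_pow r hr ξ hξ hy]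
  have k1 := key a b ha hb
  have k2 := key a' b' ha' hb'
  rw [h] at k1
  have h2 : 2 * ((a * b) ^ (2 ^ (r - 1)) - (a' * b') ^ (2 ^ (r - 1))) = 0 := by
    linear_combination k2 - k1
  have hmem := (aux_ann_two hchar hmax _).mp h2
  have hpos : (2 : ℕ) ^ (r - 1) ≠ 0 := by positivity
  have hu : (a * b) ^ (2 ^ (r - 1)) = (a' * b') ^ (2 ^ (r - 1)) :=
    aux_teich_inj hchar hmax r hr ξ hξ
      (aux_P_pow ξ _ hpos (aux_P_mul ξ ha hb))
      (aux_P_pow ξ _ hpos (aux_P_mul ξ ha' hb')) hmem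
  have hsq : (a * b) ^ (2 ^ r) = (a' * b') ^ (2 ^ r) := by
    have h2r : (2 : ℕ) ^ r = 2 ^ (r - 1) * 2 := by
      rw [← pow_succ, hm]
    rw [h2r, pow_mul, pow_mul, hu]
  rwa [aux_teich_pow r hr ξ hξ (aux_P_mul ξ ha hb),
    aux_teich_pow r hr ξ hξ (aux_P_mul ξ ha' hb')] at hsq

/-- uniqueness of difference representations. -/
lemma aux_unique_diff (hchar : CharP R 4)
    (hmax : IsLocalRing.maximalIdeal R = Ideal.span {(2 : R)})
    (r : ℕ) (hr : 2 ≤ r) (ξ : Rˣ) (hξ : orderOf ξ = 2 ^ r - 1)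
    {a b a' b' : R}
    (ha : a = 0 ∨ ∃ i : ℕ, a = (ξ : R) ^ i) (hb : b = 0 ∨ ∃ i : ℕ, b = (ξ : R) ^ i)
    (ha' : a' = 0 ∨ ∃ i : ℕ, a' = (ξ : R) ^ i) (hb' : b' = 0 ∨ ∃ i : ℕ, b' = (ξ : R) ^ i)
    (hne : a ≠ b) (h : a - b = a' - b') : a = a' ∧ b = b' := by
  have h' : a + b' = a' + b := by linear_combination h
  have hprod : a * b' = a' * b := aux_sum_det_prod hchar hmax r hr ξ hξ ha hb' ha' hb h'
  have hz : (a - a') * (a - b) = 0 := by linear_combination a * h' - hprod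
  have hunit : IsUnit (a - b) := by
    by_contra hcon
    apply hne
    apply aux_teich_inj hchar hmax r hr ξ hξ ha hb
    rw [← hmax, IsLocalRing.mem_maximalIdeal, mem_nonunits_iff]
    exact hcon
  obtain ⟨v, hv⟩ := hunit
  have haa' : a - a' = 0 := by
    calc a - a' = (a - a') * (↑v * ↑v⁻¹) := by rw [Units.mul_inv, mul_one]
      _ = ((a - a') * (a - b)) * ↑v⁻¹ := by rw [hv]; ring
      _ = 0 := by rw [hz, zero_mul]
  have h1 : a = a' := by linear_combination haa'
  exact ⟨h1, by linear_combination h1 - h⟩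

end Aux

/-- In `GR(4, r)` with `r ≥ 2`, the Teichmüller set `T` is a
`(2^r, 2^r, 2^r, 1)` relative difference set in `(GR(4,r), +)` relative to the maximal ideal
`I = 2·GR(4,r)`: every element outside `I` has exactly one representation as a difference of
two distinct elements of `T`, and no nonzero element of `I` has such a representation. -/
theorem stmt14 {R : Type*} [CommRing R] [Fintype R] [IsLocalRing R] [DecidableEq R]
    (r : ℕ) (hr : 2 ≤ r)
    (hchar : CharP R 4)
    (hmax : IsLocalRing.maximalIdeal R = Ideal.span {(2 : R)})
    (hcard : Fintype.card R = 4 ^ r)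
    (ξ : Rˣ) (hξ : orderOf ξ = 2 ^ r - 1)
    (T : Finset R)
    (hT : T = insert (0 : R) ((Finset.range (2 ^ r - 1)).image (fun i => (ξ : R) ^ i))) :
    (∀ x : R, x ∉ Ideal.span {(2 : R)} → diffCount T x = 1) ∧
    (∀ x : R, x ∈ Ideal.span {(2 : R)} → x ≠ 0 → diffCount T x = 0) := by
  classical
  have h2ne : (2 : R) ≠ 0 := aux_two_ne_zero hchar
  have hordpos : 0 < 2 ^ r - 1 := by
    have : (2:ℕ) ^ 2 ≤ 2 ^ r := Nat.pow_le_pow_right (by norm_num) hr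
    omega
  -- membership characterization
  have hmem : ∀ t ∈ T, t = 0 ∨ ∃ i : ℕ, t = (ξ : R) ^ i := by
    intro t ht'
    rw [hT, mem_insert] at ht'
    rcases ht' with rfl | ht'
    · exact Or.inl rfl
    · rw [mem_image] at ht'
      obtain ⟨i, _, rfl⟩ := ht'
      exact Or.inr ⟨i, rfl⟩
  -- the difference of two distinct Teichmüller elements is not in I
  have hdiff : ∀ a ∈ T, ∀ b ∈ T, a ≠ b → a - b ∉ Ideal.span {(2 : R)} := by
    intro a ha b hb hne hcon
    exact hne (aux_teich_inj hchar hmax r hr ξ hξ (hmem a ha) (hmem b hb) hcon)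
  -- uniqueness
  have huniq : ∀ a ∈ T, ∀ b ∈ T, ∀ a' ∈ T, ∀ b' ∈ T, a ≠ b → a - b = a' - b' →
      a = a' ∧ b = b' := by
    intro a ha b hb a' ha' b' hb' hne h
    exact aux_unique_diff hchar hmax r hr ξ hξ (hmem a ha) (hmem b hb)
      (hmem a' ha') (hmem b' hb') hne h
  -- cardinality of T
  have hcardT : T.card = 2 ^ r := by
    rw [hT]
    rw [card_insert_of_notMem]
    · rw [Finset.card_image_of_injOn, card_range]
      · omega
      · intro i hi j hj hij
        simp only [coe_range, Set.mem_Iio] at hi hj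
        have : ξ ^ i = ξ ^ j := by
          ext; simpa using hij
        have := pow_injOn_Iio_orderOf (x := ξ) (by rw [hξ]; exact hi) (by rw [hξ]; exact hj) this
        exact this
    · simp only [mem_image, not_exists]
      intro i hi
      exact (ξ ^ i).ne_zero (by simpa using hi.2)
  -- counting
  set Ifin : Finset R := Finset.univ.filter (· ∈ Ideal.span {(2 : R)}) with hIfin
  set Dfin : Finset R := Finset.univ.filter (· ∉ Ideal.span {(2 : R)}) with hDfin
  set D : Finset R := T.offDiag.image (fun p => p.1 - p.2) with hD
  have hinj : Set.InjOn (fun p : R × R => p.1 - p.2) T.offDiag := by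
    intro p hp q hq hpq
    simp only [coe_offDiag, Set.mem_offDiag] at hp hq
    obtain ⟨hp1, hp2, hpne⟩ := hp
    obtain ⟨hq1, hq2, hqne⟩ := hq
    obtain ⟨h1, h2⟩ := huniq p.1 hp1 p.2 hp2 q.1 hq1 q.2 hq2 hpne hpq
    exact Prod.ext h1 h2
  have hcardD : D.card = 2 ^ r * 2 ^ r - 2 ^ r := by
    rw [hD, Finset.card_image_of_injOn hinj, Finset.offDiag_card, hcardT]
  have hDsub : D ⊆ Dfin := by
    intro x hx
    rw [hD, mem_image] at hx
    obtain ⟨p, hp, rfl⟩ := hx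
    rw [Finset.mem_offDiag] at hp
    rw [hDfin, mem_filter]
    exact ⟨mem_univ _, hdiff p.1 hp.1 p.2 hp.2.1 hp.2.2⟩
  -- lower bound for card of Ifin
  have hIcard : 2 ^ r ≤ Ifin.card := by
    have hsub : T.image (fun t => 2 * t) ⊆ Ifin := by
      intro x hx
      rw [mem_image] at hx
      obtain ⟨t, _, rfl⟩ := hx
      rw [hIfin, mem_filter]
      exact ⟨mem_univ _, Ideal.mem_span_singleton.mpr ⟨t, rfl⟩⟩
    have hinj2 : Set.InjOn (fun t : R => 2 * t) T := by
      intro s hs t ht hst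
      apply aux_teich_inj hchar hmax r hr ξ hξ (hmem s hs) (hmem t ht)
      apply (aux_ann_two hchar hmax _).mp
      linear_combination hst
    calc 2 ^ r = (T.image (fun t => 2 * t)).card := by
          rw [Finset.card_image_of_injOn hinj2, hcardT]
      _ ≤ Ifin.card := Finset.card_le_card hsub
  have hIDcard : Ifin.card + Dfin.card = 4 ^ r := by
    rw [hIfin, hDfin, Finset.card_filter_add_card_filter_not, Finset.card_univ, hcard]
  have h4r : (4:ℕ) ^ r = 2 ^ r * 2 ^ r := by
    rw [← mul_pow]; norm_num
  have hDcard_le : Dfin.card ≤ D.card := by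
    rw [hcardD]; omega
  have hDeq : D = Dfin := Finset.eq_of_subset_of_card_le hDsub hDcard_le
  constructor
  · intro x hx
    unfold diffCount
    apply le_antisymm
    · apply Finset.card_le_one.mpr
      intro p hp q hq
      rw [mem_filter, Finset.mem_product] at hp hq
      obtain ⟨⟨hp1, hp2⟩, hpne, hpd⟩ := hp
      obtain ⟨⟨hq1, hq2⟩, hqne, hqd⟩ := hq
      obtain ⟨h1, h2⟩ := huniq p.1 hp1 p.2 hp2 q.1 hq1 q.2 hq2 hpne (by rw [hpd, hqd])
      exact Prod.ext h1 h2
    · rw [Nat.one_le_iff_ne_zero, ← Nat.pos_iff_ne_zero, Finset.card_pos]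
      have hxD : x ∈ D := by
        rw [hDeq, hDfin, mem_filter]
        exact ⟨mem_univ _, hx⟩
      rw [hD, mem_image] at hxD
      obtain ⟨p, hp, hpx⟩ := hxD
      rw [Finset.mem_offDiag] at hp
      exact ⟨p, by
        rw [mem_filter, Finset.mem_product]
        exact ⟨⟨hp.1, hp.2.1⟩, hp.2.2, hpx⟩⟩
  · intro x hx _
    unfold diffCount
    rw [Finset.card_eq_zero, Finset.filter_eq_empty_iff]
    intro p hp
    rw [Finset.mem_product] at hp
    rintro ⟨hne, hdx⟩
    exact hdiff p.1 hp.1 p.2 hp.2 hne (hdx ▸ hx)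
end

section
/- In GR(4, r) with r ≥ 2, for each Teichmüller element α, the multiset Δ((1+2α)T^*) of differences of distinct elements of the coset (1+2α)T^* equals (as a set with all multiplicities 1) GR(4,r) \ (I ∪ (1+2α)T^* ∪ -(1+2α)T^*), where I = 2·GR(4,r). -/
open Finset

open scoped Classical in
theorem gr4_key {R : Type*} [CommRing R] [Fintype R] [IsLocalRing R] [DecidableEq R]
    (r : ℕ) (hr : 2 ≤ r)
    (hchar : CharP R 4)
    (hmax : IsLocalRing.maximalIdeal R = Ideal.span {(2 : R)})
    (hcard : Fintype.card R = 4 ^ r)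
    (ξ : Rˣ) (hξ : orderOf ξ = 2 ^ r - 1)
    (Tstar T : Finset R)
    (hTstar : Tstar = (Finset.range (2 ^ r - 1)).image (fun i => (ξ : R) ^ i))
    (hT : T = insert (0 : R) Tstar) :
    ∀ y : R, diffCount Tstar y =
      if y ∉ Ideal.span {(2:R)} ∧ y ∉ Tstar ∧ -y ∉ Tstar then 1 else 0 := by
  set n := 2 ^ r - 1 with hn
  have h2r : 4 ≤ 2 ^ r := by calc 4 = 2^2 := rfl
                                 _ ≤ 2^r := Nat.pow_le_pow_right (by norm_num) hr
  have hnpos : 0 < n := by omega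
  have h2r' : 2^r = 2 * 2^(r-1) := by
    conv_lhs => rw [show r = (r-1)+1 by omega]
    rw [pow_succ]; ring
  have hodd : Nat.gcd n 2 = 1 := by
    have hoddn : Odd n := Nat.odd_iff.mpr (by omega)
    exact Nat.coprime_two_right.mpr hoddn
  have h4 : (4 : R) = 0 := by
    have := CharP.cast_eq_zero R 4
    norm_num at this
    exact_mod_cast this
  have h2ne : (2 : R) ≠ 0 := by
    intro h
    have : ((2:ℕ) : R) = 0 := by exact_mod_cast h
    have := (CharP.cast_eq_zero_iff R 4 2).mp this
    omega
  have memI : ∀ x : R, x ∈ Ideal.span {(2:R)} ↔ (2:R) ∣ x := fun x => Ideal.mem_span_singleton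
  have unitNotI : ∀ z : R, IsUnit z → z ∉ Ideal.span {(2:R)} := by
    intro z hz hmem
    rw [← hmax] at hmem
    exact (IsLocalRing.mem_maximalIdeal z).mp hmem hz
  have notIUnit : ∀ z : R, z ∉ Ideal.span {(2:R)} → IsUnit z := by
    intro z hz
    by_contra hu
    exact hz (hmax ▸ (IsLocalRing.mem_maximalIdeal z).mpr hu)
  have ann : ∀ x : R, 2 * x = 0 ↔ x ∈ Ideal.span {(2:R)} := by
    intro x
    constructor
    · intro hx
      by_contra hxI
      rcases (notIUnit x hxI).exists_right_inv with ⟨v, hv⟩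
      apply h2ne
      calc (2:R) = 2 * (x * v) := by rw [hv, mul_one]
        _ = (2 * x) * v := by ring
        _ = 0 := by rw [hx, zero_mul]
    · rintro hx
      rcases (memI x).mp hx with ⟨c, rfl⟩
      calc (2:R) * (2 * c) = 4 * c := by ring
        _ = 0 := by rw [h4, zero_mul]
  have memTstar : ∀ z : R, z ∈ Tstar ↔ ∃ i : ℕ, z = (ξ : R) ^ i := by
    intro z
    rw [hTstar]
    simp only [mem_image, mem_range]
    constructor
    · rintro ⟨i, _, rfl⟩; exact ⟨i, rfl⟩
    · rintro ⟨i, rfl⟩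
      refine ⟨i % n, Nat.mod_lt _ hnpos, ?_⟩
      have : ξ ^ (i % n) = ξ ^ i := by
        rw [← hξ]; exact pow_mod_orderOf _ _
      calc (ξ:R) ^ (i % n) = ((ξ ^ (i % n) : Rˣ) : R) := (Units.val_pow_eq_pow_val _ _).symm
        _ = ((ξ ^ i : Rˣ) : R) := by rw [this]
        _ = (ξ:R) ^ i := Units.val_pow_eq_pow_val _ _
  have TstarUnit : ∀ z ∈ Tstar, IsUnit z := by
    intro z hz
    rcases (memTstar z).mp hz with ⟨i, rfl⟩
    exact ⟨ξ ^ i, Units.val_pow_eq_pow_val _ _⟩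
  have Tstar0 : (0 : R) ∉ Tstar := fun h => by
    simpa using (TstarUnit 0 h).ne_zero
  have memT0 : ∀ t ∈ T, t = 0 ∨ t ∈ Tstar := by
    intro t ht; rw [hT, mem_insert] at ht; exact ht
  have TstarT : Tstar ⊆ T := by rw [hT]; exact subset_insert _ _
  have zeroT : (0:R) ∈ T := by rw [hT]; exact mem_insert_self _ _
  -- separation: distinct elements of T differ by a non-ideal element
  have sep : ∀ t ∈ T, ∀ t' ∈ T, t - t' ∈ Ideal.span {(2:R)} → t = t' := by
    intro t ht t' ht' hd
    rcases memT0 t ht with rfl | htU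
    · rcases memT0 t' ht' with rfl | ht'U
      · rfl
      · exfalso
        have : t' ∈ Ideal.span {(2:R)} := by
          have := (Ideal.span {(2:R)}).neg_mem hd; simpa using this
        exact unitNotI t' (TstarUnit t' ht'U) this
    · rcases memT0 t' ht' with rfl | ht'U
      · exfalso
        have : t ∈ Ideal.span {(2:R)} := by simpa using hd
        exact unitNotI t (TstarUnit t htU) this
      · rcases (memTstar t).mp htU with ⟨i, rfl⟩
        rcases (memTstar t').mp ht'U with ⟨j, rfl⟩
        rcases (memI _).mp hd with ⟨c, hc⟩
        have hsq : (ξ:R) ^ (2*i) = (ξ:R) ^ (2*j) := by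
          have heq : (ξ:R)^i = (ξ:R)^j + 2*c := by linear_combination hc
          calc (ξ:R)^(2*i) = ((ξ:R)^i)^2 := by rw [pow_mul]; ring
            _ = ((ξ:R)^j + 2*c)^2 := by rw [heq]
            _ = ((ξ:R)^j)^2 + (c*(ξ:R)^j + c*c)*4 := by ring
            _ = ((ξ:R)^j)^2 := by rw [h4]; ring
            _ = (ξ:R)^(2*j) := by rw [pow_mul]; ring
        have husq : ξ ^ (2*i) = ξ ^ (2*j) := by
          apply Units.ext
          simpa [Units.val_pow_eq_pow_val] using hsq
        have hmod : 2*i ≡ 2*j [MOD n] := by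
          rw [← hξ]; exact pow_eq_pow_iff_modEq.mp husq
        have hij : i ≡ j [MOD n] := Nat.ModEq.cancel_left_of_coprime hodd hmod
        have : ξ ^ i = ξ ^ j := by rw [← hξ] at hij; exact pow_eq_pow_iff_modEq.mpr hij
        calc (ξ:R)^i = ((ξ^i : Rˣ) : R) := (Units.val_pow_eq_pow_val _ _).symm
          _ = ((ξ^j : Rˣ) : R) := by rw [this]
          _ = (ξ:R)^j := Units.val_pow_eq_pow_val _ _
  have repInj : ∀ a ∈ T, ∀ b ∈ T, ∀ a' ∈ T, ∀ b' ∈ T,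
      a + 2*b = a' + 2*b' → a = a' ∧ b = b' := by
    intro a ha b hb a' ha' b' hb' heq
    have h1 : a - a' ∈ Ideal.span {(2:R)} := by
      rw [memI]
      exact ⟨b' - b, by linear_combination heq⟩
    have haa : a = a' := sep a ha a' ha' h1
    subst haa
    have h2 : 2 * (b - b') = 0 := by linear_combination heq
    have : b - b' ∈ Ideal.span {(2:R)} := (ann _).mp h2
    exact ⟨rfl, sep b hb b' hb' this⟩
  have cardTstar : Tstar.card = n := by
    rw [hTstar]
    rw [card_image_of_injOn, card_range]
    intro i hi j hj hij
    simp only [mem_coe, mem_range] at hi hj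
    have husq : ξ ^ i = ξ ^ j := by
      apply Units.ext
      simpa [Units.val_pow_eq_pow_val] using hij
    have := pow_eq_pow_iff_modEq.mp husq
    rw [hξ] at this
    unfold Nat.ModEq at this
    rwa [Nat.mod_eq_of_lt hi, Nat.mod_eq_of_lt hj] at this
  have cardT : T.card = 2 ^ r := by
    rw [hT, card_insert_of_notMem Tstar0, cardTstar]
    omega
  -- surjectivity of 2-adic representation
  have repSurj : ∀ x : R, ∃ a ∈ T, ∃ b ∈ T, x = a + 2*b := by
    have himg : ((T ×ˢ T).image (fun p : R × R => p.1 + 2*p.2)) = univ := by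
      apply eq_univ_of_card
      rw [card_image_of_injOn, card_product, cardT, hcard]
      · rw [show (4:ℕ) = 2*2 from rfl, mul_pow]
      · rintro ⟨a, b⟩ hab ⟨a', b'⟩ hab' h
        simp only [mem_coe, mem_product] at hab hab'
        have := repInj a hab.1 b hab.2 a' hab'.1 b' hab'.2 h
        exact Prod.ext this.1 this.2
    intro x
    have : x ∈ ((T ×ˢ T).image (fun p : R × R => p.1 + 2*p.2)) := by rw [himg]; exact mem_univ x
    simp only [mem_image, mem_product] at this
    rcases this with ⟨⟨a, b⟩, ⟨ha, hb⟩, h⟩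
    exact ⟨a, ha, b, hb, h.symm⟩
  -- T is closed under multiplication and contains square roots
  have mulT : ∀ a ∈ T, ∀ b ∈ T, a * b ∈ T := by
    intro a ha b hb
    rcases memT0 a ha with rfl | haU
    · rw [zero_mul]; exact zeroT
    rcases memT0 b hb with rfl | hbU
    · rw [mul_zero]; exact zeroT
    rcases (memTstar a).mp haU with ⟨i, rfl⟩
    rcases (memTstar b).mp hbU with ⟨j, rfl⟩
    exact TstarT ((memTstar _).mpr ⟨i + j, (pow_add _ _ _).symm⟩)
  have sqT : ∀ a ∈ T, a^2 ∈ T := by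
    intro a ha
    have := mulT a ha a ha
    rwa [← sq] at this
  have sqrtT : ∀ t ∈ T, t ^ (2^(r-1)) ∈ T ∧ (t ^ (2^(r-1)))^2 = t := by
    intro t ht
    rcases memT0 t ht with rfl | htU
    · constructor
      · rw [zero_pow (by positivity)]; exact zeroT
      · rw [zero_pow (by positivity), zero_pow (by norm_num)]
    · rcases (memTstar t).mp htU with ⟨i, rfl⟩
      constructor
      · exact TstarT ((memTstar _).mpr ⟨i * 2^(r-1), by rw [pow_mul]⟩)
      · have hkey : ξ ^ (2^r) = ξ := by
          have : (2:ℕ)^r = n + 1 := by omega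
          rw [this, pow_succ, ← hξ, pow_orderOf_eq_one, one_mul]
        have key2 : ((ξ:R)^i) ^ (2^(r-1)*2) = (ξ:R)^i := by
          have h1 : 2^(r-1)*2 = 2^r := by
            rw [← pow_succ]
            congr 1
            omega
          rw [h1]
          have h2 : (ξ^i)^(2^r) = ξ^i := by
            rw [← pow_mul, mul_comm, pow_mul, hkey]
          calc ((ξ:R)^i)^(2^r) = (((ξ^i)^(2^r) : Rˣ) : R) := by
                rw [Units.val_pow_eq_pow_val, Units.val_pow_eq_pow_val]
            _ = ((ξ^i : Rˣ) : R) := by rw [h2]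
            _ = (ξ:R)^i := Units.val_pow_eq_pow_val _ _
        rw [← pow_mul]
        exact key2
  -- quotient field
  haveI hIm : (Ideal.span {(2:R)}).IsMaximal := hmax ▸ IsLocalRing.maximalIdeal.isMaximal R
  haveI : (Ideal.span {(2:R)}).IsPrime := hIm.isPrime
  set π := Ideal.Quotient.mk (Ideal.span {(2:R)}) with hπ
  have π2 : π 2 = 0 := Ideal.Quotient.eq_zero_iff_mem.mpr (Ideal.mem_span_singleton_self 2)
  have πeq : ∀ x y : R, π x = π y ↔ x - y ∈ Ideal.span {(2:R)} :=
    fun x y => Ideal.Quotient.mk_eq_mk_iff_sub_mem x y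
  have negQ : ∀ z : R ⧸ Ideal.span {(2:R)}, -z = z := by
    intro z
    have h2 : (2 : R ⧸ Ideal.span {(2:R)}) = 0 := by
      rw [show ((2:R ⧸ Ideal.span {(2:R)})) = π 2 from (map_ofNat π 2).symm, π2]
    have hz : (2 : R ⧸ Ideal.span {(2:R)}) * z = 0 := by rw [h2, zero_mul]
    linear_combination -hz
  -- addition formula : a + b = u + 2·√a√b with u ≡ (√a+√b)² mod 2
  have addRep : ∀ a ∈ T, ∀ b ∈ T, ∃ u ∈ T,
      a + b = u + 2 * (a^(2^(r-1)) * b^(2^(r-1))) ∧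
      π u = (π (a^(2^(r-1))) + π (b^(2^(r-1))))^2 := by
    intro a ha b hb
    obtain ⟨hA, hA2⟩ := sqrtT a ha
    obtain ⟨hB, hB2⟩ := sqrtT b hb
    obtain ⟨c, hc, d, hd, hcd⟩ := repSurj (a^(2^(r-1)) + b^(2^(r-1)))
    have e1 : c = a^(2^(r-1)) + b^(2^(r-1)) - 2*d := by linear_combination -hcd
    refine ⟨c^2, sqT c hc, ?_, ?_⟩
    · rw [e1]
      linear_combination -hA2 - hB2 + (d*a^(2^(r-1)) + d*b^(2^(r-1)) - a^(2^(r-1))*b^(2^(r-1)) - d*d) * h4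
    · have hπc : π c = π (a^(2^(r-1))) + π (b^(2^(r-1))) := by
        rw [e1]
        simp only [map_sub, map_add, map_mul, π2, zero_mul, sub_zero]
      rw [map_pow, hπc]
  -- uniqueness of difference representations
  have uniq : ∀ t ∈ T, ∀ t' ∈ T, ∀ s ∈ T, ∀ s' ∈ T, t ≠ t' → s ≠ s' →
      t - t' = s - s' → t = s ∧ t' = s' := by
    intro t ht t' ht' s hs s' hs' htt hss hdiff
    obtain ⟨u, hu, hurep, huπ⟩ := addRep t ht s' hs'
    obtain ⟨w, hw, hwrep, hwπ⟩ := addRep s hs t' ht'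
    have heq : u + 2 * (t^(2^(r-1)) * s'^(2^(r-1))) = w + 2 * (s^(2^(r-1)) * t'^(2^(r-1))) := by
      linear_combination hdiff - hurep + hwrep
    have hmem1 : t^(2^(r-1)) * s'^(2^(r-1)) ∈ T := mulT _ (sqrtT t ht).1 _ (sqrtT s' hs').1
    have hmem2 : s^(2^(r-1)) * t'^(2^(r-1)) ∈ T := mulT _ (sqrtT s hs).1 _ (sqrtT t' ht').1
    obtain ⟨huw, hprod⟩ := repInj u hu _ hmem1 w hw _ hmem2 heq
    -- pass to the residue field
    have hsq : (π (t^(2^(r-1))) + π (s'^(2^(r-1))))^2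
        = (π (s^(2^(r-1))) + π (t'^(2^(r-1))))^2 := by
      rw [← huπ, ← hwπ, huw]
    have hp : π (t^(2^(r-1))) * π (s'^(2^(r-1))) = π (s^(2^(r-1))) * π (t'^(2^(r-1))) := by
      rw [← map_mul, ← map_mul, hprod]
    have hsum : π (t^(2^(r-1))) + π (s'^(2^(r-1))) = π (s^(2^(r-1))) + π (t'^(2^(r-1))) := by
      have hfac : ((π (t^(2^(r-1))) + π (s'^(2^(r-1)))) - (π (s^(2^(r-1))) + π (t'^(2^(r-1)))))
          * ((π (t^(2^(r-1))) + π (s'^(2^(r-1)))) + (π (s^(2^(r-1))) + π (t'^(2^(r-1))))) = 0 := by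
        linear_combination hsq
      rcases mul_eq_zero.mp hfac with h | h
      · linear_combination h
      · have := negQ (π (s^(2^(r-1))) + π (t'^(2^(r-1))))
        linear_combination h + this
    have hfac2 : (π (s^(2^(r-1))) - π (t^(2^(r-1)))) * (π (s^(2^(r-1))) - π (s'^(2^(r-1)))) = 0 := by
      linear_combination (- (π (s^(2^(r-1))))) * hsum + hp
    have sqeq : ∀ x ∈ T, ∀ z ∈ T, π (x^(2^(r-1))) = π (z^(2^(r-1))) → x = z := by
      intro x hx z hz hpi
      have : x^(2^(r-1)) = z^(2^(r-1)) :=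
        sep _ (sqrtT x hx).1 _ (sqrtT z hz).1 ((πeq _ _).mp hpi)
      calc x = (x^(2^(r-1)))^2 := (sqrtT x hx).2.symm
        _ = (z^(2^(r-1)))^2 := by rw [this]
        _ = z := (sqrtT z hz).2
    rcases mul_eq_zero.mp hfac2 with h | h
    · have hts : s = t := sqeq s hs t ht (by linear_combination h)
      refine ⟨hts.symm, ?_⟩
      linear_combination hts.symm - hdiff
    · exact absurd (sqeq s hs s' hs' (by linear_combination h)) hss
  -- existence: every element outside the ideal is a difference of distinct elements of T
  have exI : ∀ y : R, y ∉ Ideal.span {(2:R)} → ∃ t ∈ T, ∃ t' ∈ T, t ≠ t' ∧ t - t' = y := by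
    set S := (T ×ˢ T).filter (fun q : R × R => q.1 ≠ q.2) with hS
    have hinj : Set.InjOn (fun q : R × R => q.1 - q.2) S := by
      rintro ⟨a, b⟩ ha ⟨c, d⟩ hc h
      simp only [mem_coe, hS, mem_filter, mem_product] at ha hc
      obtain ⟨h1, h2⟩ := uniq a ha.1.1 b ha.1.2 c hc.1.1 d hc.1.2 ha.2 hc.2 h
      exact Prod.ext h1 h2
    have hsub : S.image (fun q : R × R => q.1 - q.2)
        ⊆ univ.filter (fun z => z ∉ Ideal.span {(2:R)}) := by
      intro z hz
      simp only [mem_image] at hz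
      rcases hz with ⟨⟨a, b⟩, hab, rfl⟩
      simp only [hS, mem_filter, mem_product] at hab
      simp only [mem_filter, mem_univ, true_and]
      intro hmem
      exact hab.2 (sep a hab.1.1 b hab.1.2 hmem)
    have cardIset : (univ.filter (fun z : R => z ∈ Ideal.span {(2:R)})).card = 2 ^ r := by
      have himg : univ.filter (fun z : R => z ∈ Ideal.span {(2:R)})
          = T.image (fun b => 2 * b) := by
        ext z
        simp only [mem_filter, mem_univ, true_and, mem_image]
        constructor
        · intro hz
          rcases (memI z).mp hz with ⟨c, hc⟩
          rcases repSurj c with ⟨a, ha, b, hb, rfl⟩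
          refine ⟨a, ha, ?_⟩
          rw [hc]
          linear_combination (-b) * h4
        · rintro ⟨b, _, rfl⟩
          exact (memI _).mpr ⟨b, rfl⟩
      rw [himg, card_image_of_injOn, cardT]
      intro a ha b hb h
      simp only [mem_coe] at ha hb
      have : a - b ∈ Ideal.span {(2:R)} := (ann _).mp (by linear_combination h)
      exact sep a ha b hb this
    have cardCompl : (univ.filter (fun z : R => z ∉ Ideal.span {(2:R)})).card = 4^r - 2^r := by
      have hsplit := Finset.card_filter_add_card_filter_not
        (s := (univ : Finset R)) (p := fun z : R => z ∈ Ideal.span {(2:R)})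
      have hu : (univ : Finset R).card = 4 ^ r := by rw [card_univ, hcard]
      omega
    have cardS : S.card = 4^r - 2^r := by
      have hsplit := Finset.card_filter_add_card_filter_not
        (s := T ×ˢ T) (p := fun q : R × R => q.1 ≠ q.2)
      have hdiag : (T ×ˢ T).filter (fun q : R × R => ¬ q.1 ≠ q.2)
          = T.image (fun a => (a, a)) := by
        ext ⟨a, b⟩
        simp only [mem_filter, mem_product, mem_image, not_not, Prod.mk.injEq]
        constructor
        · rintro ⟨⟨ha, _⟩, rfl⟩
          exact ⟨a, ha, rfl, rfl⟩
        · rintro ⟨c, hc, rfl, rfl⟩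
          exact ⟨⟨hc, hc⟩, rfl⟩
      have hdcard : ((T ×ˢ T).filter (fun q : R × R => ¬ q.1 ≠ q.2)).card = 2 ^ r := by
        rw [hdiag, card_image_of_injOn, cardT]
        rintro a _ b _ h
        exact (Prod.mk.injEq _ _ _ _ ▸ h).1
      have hprod : (T ×ˢ T).card = 4 ^ r := by
        rw [card_product, cardT, show (4:ℕ) = 2*2 from rfl, mul_pow]
      rw [← hS] at hsplit
      omega
    have himgeq : S.image (fun q : R × R => q.1 - q.2)
        = univ.filter (fun z => z ∉ Ideal.span {(2:R)}) := by
      apply eq_of_subset_of_card_le hsub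
      rw [cardCompl, card_image_of_injOn hinj, cardS]
    intro y hy
    have : y ∈ S.image (fun q : R × R => q.1 - q.2) := by
      rw [himgeq]
      simp only [mem_filter, mem_univ, true_and]
      exact hy
    simp only [mem_image, hS, mem_filter, mem_product] at this
    rcases this with ⟨⟨a, b⟩, ⟨⟨ha, hb⟩, hne⟩, hd⟩
    exact ⟨a, ha, b, hb, hne, hd⟩
  -- final case analysis
  intro y
  by_cases hyI : y ∈ Ideal.span {(2:R)}
  · rw [if_neg (fun h => h.1 hyI)]
    simp only [diffCount]
    rw [Finset.card_eq_zero, Finset.filter_eq_empty_iff]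
    rintro ⟨a, b⟩ hab ⟨hne, hd⟩
    simp only [mem_product] at hab
    exact hne (sep a (TstarT hab.1) b (TstarT hab.2) (hd ▸ hyI))
  · have hy0 : y ≠ 0 := fun h => hyI (h ▸ Ideal.zero_mem _)
    by_cases h1 : y ∈ Tstar
    · rw [if_neg (fun h => h.2.1 h1)]
      simp only [diffCount]
      rw [Finset.card_eq_zero, Finset.filter_eq_empty_iff]
      rintro ⟨a, b⟩ hab ⟨hne, hd⟩
      simp only [mem_product] at hab
      have h2 := uniq a (TstarT hab.1) b (TstarT hab.2) y (TstarT h1) 0 zeroT hne hy0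
        (by rw [hd, sub_zero])
      exact Tstar0 (h2.2 ▸ hab.2)
    · by_cases h2 : -y ∈ Tstar
      · rw [if_neg (fun h => h.2.2 h2)]
        simp only [diffCount]
        rw [Finset.card_eq_zero, Finset.filter_eq_empty_iff]
        rintro ⟨a, b⟩ hab ⟨hne, hd⟩
        simp only [mem_product] at hab
        have hne0 : (0:R) ≠ -y := fun h => Tstar0 (h ▸ h2)
        have h3 := uniq a (TstarT hab.1) b (TstarT hab.2) 0 zeroT (-y) (TstarT h2) hne hne0
          (by rw [hd]; ring)
        exact Tstar0 (h3.1 ▸ hab.1)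
      · rw [if_pos ⟨hyI, h1, h2⟩]
        obtain ⟨t, ht, t', ht', hne, hd⟩ := exI y hyI
        have htS : t ∈ Tstar := by
          rcases memT0 t ht with rfl | h
          · exfalso
            rcases memT0 t' ht' with rfl | h'
            · exact hne rfl
            · exact h2 (by rw [show -y = t' by linear_combination hd]; exact h')
          · exact h
        have ht'S : t' ∈ Tstar := by
          rcases memT0 t' ht' with rfl | h
          · exfalso
            exact h1 (by rw [show y = t by linear_combination -hd]; exact htS)
          · exact h
        simp only [diffCount]
        rw [Finset.card_eq_one]
        refine ⟨(t, t'), ?_⟩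
        ext ⟨a, b⟩
        simp only [mem_filter, mem_product, mem_singleton, Prod.mk.injEq]
        constructor
        · rintro ⟨⟨ha, hb⟩, hne', hd'⟩
          have := uniq a (TstarT ha) b (TstarT hb) t ht t' ht' hne' hne (by rw [hd', hd])
          exact this
        · rintro ⟨rfl, rfl⟩
          exact ⟨⟨htS, ht'S⟩, hne, hd⟩

open scoped Classical in
/-- In `GR(4, r)` with `r ≥ 2`, for each Teichmüller element `α`, the multiset of
differences of distinct elements of the coset `(1+2α)T^*` equals, with all multiplicities `1`,
the set `GR(4,r) \ (I ∪ (1+2α)T^* ∪ -(1+2α)T^*)`, where `I = 2·GR(4,r)`. -/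
theorem stmt15 {R : Type*} [CommRing R] [Fintype R] [IsLocalRing R] [DecidableEq R]
    (r : ℕ) (hr : 2 ≤ r)
    (hchar : CharP R 4)
    (hmax : IsLocalRing.maximalIdeal R = Ideal.span {(2 : R)})
    (hcard : Fintype.card R = 4 ^ r)
    (ξ : Rˣ) (hξ : orderOf ξ = 2 ^ r - 1)
    (Tstar T : Finset R)
    (hTstar : Tstar = (Finset.range (2 ^ r - 1)).image (fun i => (ξ : R) ^ i))
    (hT : T = insert (0 : R) Tstar) :
    ∀ α ∈ T, ∀ x : R,
      diffCount (Tstar.image (fun t => (1 + 2 * α) * t)) x =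
        if x ∉ Ideal.span {(2 : R)}
            ∧ x ∉ Tstar.image (fun t => (1 + 2 * α) * t)
            ∧ -x ∉ Tstar.image (fun t => (1 + 2 * α) * t)
        then 1 else 0 := by
  intro α _ x
  have h4 : (4 : R) = 0 := by
    have := CharP.cast_eq_zero R 4
    norm_num at this
    exact_mod_cast this
  set u := 1 + 2*α with hu
  have huu : u * u = 1 := by rw [hu]; linear_combination (α + α*α)*h4
  have hinv : ∀ z : R, u * (u * z) = z := fun z => by rw [← mul_assoc, huu, one_mul]
  have key := gr4_key r hr hchar hmax hcard ξ hξ Tstar T hTstar hT (u * x)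
  have hmemA : ∀ z : R, z ∈ Tstar.image (fun t => u*t) ↔ u*z ∈ Tstar := by
    intro z
    simp only [mem_image]
    constructor
    · rintro ⟨t, ht, rfl⟩
      rwa [hinv]
    · intro hz
      exact ⟨u*z, hz, hinv z⟩
  have hmemI : x ∈ Ideal.span {(2:R)} ↔ u*x ∈ Ideal.span {(2:R)} := by
    constructor
    · exact fun h => Ideal.mul_mem_left _ _ h
    · intro h
      rw [show x = u*(u*x) from (hinv x).symm]
      exact Ideal.mul_mem_left _ _ h
  have hcount : diffCount (Tstar.image (fun t => u * t)) x = diffCount Tstar (u * x) := by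
    simp only [diffCount]
    symm
    apply Finset.card_bij' (i := fun p _ => (u*p.1, u*p.2)) (j := fun p _ => (u*p.1, u*p.2))
    · rintro ⟨a, b⟩ hab
      simp only [mem_filter, mem_product] at hab ⊢
      obtain ⟨⟨ha, hb⟩, hne, hd⟩ := hab
      refine ⟨⟨?_, ?_⟩, ?_, ?_⟩
      · exact mem_image.mpr ⟨a, ha, rfl⟩
      · exact mem_image.mpr ⟨b, hb, rfl⟩
      · intro h
        exact hne (by rw [← hinv a, ← hinv b, h])
      · calc u*a - u*b = u*(a - b) := by ring
          _ = u*(u*x) := by rw [hd]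
          _ = x := hinv x
    · rintro ⟨a, b⟩ hab
      simp only [mem_filter, mem_product] at hab ⊢
      obtain ⟨⟨ha, hb⟩, hne, hd⟩ := hab
      refine ⟨⟨(hmemA a).mp ha, (hmemA b).mp hb⟩, ?_, ?_⟩
      · intro h
        exact hne (by rw [← hinv a, ← hinv b, h])
      · calc u*a - u*b = u*(a - b) := by ring
          _ = u*x := by rw [hd]
    · rintro ⟨a, b⟩ _
      simp only [hinv]
    · rintro ⟨a, b⟩ _
      simp only [hinv]
  rw [hcount, key]
  apply if_congr _ rfl rfl
  have e3 : u * (-x) = -(u*x) := by ring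
  constructor
  · rintro ⟨i1, i2, i3⟩
    exact ⟨fun h => i1 (hmemI.mp h), fun h => i2 ((hmemA x).mp h),
      fun h => i3 (e3 ▸ (hmemA (-x)).mp h)⟩
  · rintro ⟨i1, i2, i3⟩
    exact ⟨fun h => i1 (hmemI.mpr h), fun h => i2 ((hmemA x).mpr h),
      fun h => i3 ((hmemA (-x)).mpr (e3.symm ▸ h))⟩
end

section
/- In GR(4, r) with r ≥ 2, consider the multiset Δ_+ T^* = {β + γ : β, γ ∈ T^*, β ≠ -γ} of sums of elements of the Teichmüller group (note -γ ∉ T^* for γ ∈ T^* here since characteristic is 4, so all ordered pairs are counted). Then every element of Δ_+ T^* that is a unit has multiplicity exactly 2, and every element of Δ_+ T^* lying in I \ {0} (where I = 2·GR(4,r)) has multiplicity exactly 1. -/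
open Finset

/-- Multiplicity of `x` in the sum multiset `Δ₊A = {a + a' : a, a' ∈ A, a ≠ -a'}`, counting
ordered pairs. -/
def sumCount {G : Type*} [AddCommGroup G] [DecidableEq G] (A : Finset G) (x : G) : ℕ :=
  ((A ×ˢ A).filter (fun q => q.1 ≠ -q.2 ∧ q.1 + q.2 = x)).card

/-- Char-4 Frobenius identity: `(a+b)^(2^(n+1)) = a^(2^(n+1)) + b^(2^(n+1)) + 2(ab)^(2^n)`. -/
lemma aux_pow_char4 {R : Type*} [CommRing R] (h4 : (4 : R) = 0) (a b : R) :
    ∀ n : ℕ, (a + b) ^ (2 ^ (n + 1)) = a ^ (2 ^ (n + 1)) + b ^ (2 ^ (n + 1)) + 2 * (a * b) ^ (2 ^ n) := by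
  intro n
  induction n with
  | zero => norm_num; ring
  | succ n ih =>
      have hpow : (2 : ℕ) ^ (n + 2) = 2 ^ (n + 1) * 2 := by ring
      set u := a ^ (2 ^ (n + 1)) with hu
      set v := b ^ (2 ^ (n + 1)) with hv
      set c := (a * b) ^ (2 ^ n) with hcdef
      have hc : c ^ 2 = u * v := by
        rw [hu, hv, hcdef, ← pow_mul, ← mul_pow]
        congr 1
      have h1 : (a + b) ^ (2 ^ (n + 2)) = (u + v + 2 * c) ^ 2 := by
        rw [hpow, pow_mul, ih]
      have h2 : a ^ (2 ^ (n + 2)) = u ^ 2 := by rw [hpow, pow_mul]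
      have h3 : b ^ (2 ^ (n + 2)) = v ^ 2 := by rw [hpow, pow_mul]
      have h4' : (a * b) ^ (2 ^ (n + 1)) = c ^ 2 := by rw [hcdef, ← pow_mul, ← pow_succ]
      rw [h1, h2, h3, h4']
      linear_combination 4 * hc + (u * v + u * c + v * c) * h4

open scoped Classical in
/-- In `GR(4, r)` with `r ≥ 2`, consider the multiset
`Δ₊T^* = {β + γ : β, γ ∈ T^*, β ≠ -γ}` of sums of elements of the Teichmüller group (all
ordered pairs are counted, since `-γ ∉ T^*` for `γ ∈ T^*`).  Every unit occurring in `Δ₊T^*`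
has multiplicity exactly `2`, and every element of `Δ₊T^*` lying in `I \ {0}` (where
`I = 2·GR(4,r)`) has multiplicity exactly `1`. -/
theorem stmt16 {R : Type*} [CommRing R] [Fintype R] [IsLocalRing R] [DecidableEq R]
    (r : ℕ) (hr : 2 ≤ r)
    (hchar : CharP R 4)
    (hmax : IsLocalRing.maximalIdeal R = Ideal.span {(2 : R)})
    (hcard : Fintype.card R = 4 ^ r)
    (ξ : Rˣ) (hξ : orderOf ξ = 2 ^ r - 1)
    (Tstar : Finset R)
    (hTstar : Tstar = (Finset.range (2 ^ r - 1)).image (fun i => (ξ : R) ^ i)) :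
    ∀ x : R, 0 < sumCount Tstar x →
      (IsUnit x → sumCount Tstar x = 2) ∧
      (x ∈ Ideal.span {(2 : R)} → x ≠ 0 → sumCount Tstar x = 1) := by
  have h4 : (4 : R) = 0 := by exact_mod_cast CharP.cast_eq_zero R 4
  have h2 : (2 : R) ≠ 0 := by
    intro h
    have := (CharP.cast_eq_zero_iff R 4 2).mp (by exact_mod_cast h)
    omega
  -- ξ^(2^r) = ξ
  have hxiu : ξ ^ (2 ^ r) = ξ := by
    have h1 : ξ ^ (2 ^ r - 1) = 1 := by rw [← hξ]; exact pow_orderOf_eq_one ξ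
    have e : 2 ^ r = (2 ^ r - 1) + 1 := by
      have : 1 ≤ 2 ^ r := Nat.one_le_two_pow
      omega
    rw [e, pow_succ, h1, one_mul]
  have hxipow : ((ξ : R)) ^ (2 ^ r) = (ξ : R) := by
    rw [← Units.val_pow_eq_pow_val, hxiu]
  -- membership in Tstar
  have hTmem : ∀ t ∈ Tstar, ∃ i : ℕ, t = (ξ : R) ^ i := by
    intro t ht
    rw [hTstar, Finset.mem_image] at ht
    obtain ⟨i, _, hi⟩ := ht
    exact ⟨i, hi.symm⟩
  -- every ξ-power is fixed by x ↦ x^(2^r)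
  have hpowT : ∀ i : ℕ, ((ξ : R) ^ i) ^ (2 ^ r) = (ξ : R) ^ i := by
    intro i
    rw [pow_right_comm, hxipow]
  have hfix : ∀ t : R, (∃ i : ℕ, t = (ξ : R) ^ i) → t ^ (2 ^ r) = t := by
    rintro t ⟨i, rfl⟩; exact hpowT i
  -- squaring is injective on ξ-powers
  have hinj2 : ∀ s t : R, (∃ i : ℕ, s = (ξ : R) ^ i) → (∃ i : ℕ, t = (ξ : R) ^ i) →
      s ^ 2 = t ^ 2 → s = t := by
    intro s t hs ht h
    have e : 2 * 2 ^ (r - 1) = 2 ^ r := by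
      rw [← pow_succ']
      congr 1
      omega
    calc s = s ^ (2 ^ r) := (hfix s hs).symm
      _ = (s ^ 2) ^ (2 ^ (r - 1)) := by rw [← pow_mul, e]
      _ = (t ^ 2) ^ (2 ^ (r - 1)) := by rw [h]
      _ = t ^ (2 ^ r) := by rw [← pow_mul, e]
      _ = t := hfix t ht
  -- congruence mod 2 is injective on ξ-powers
  have hinjm : ∀ s t : R, (∃ i : ℕ, s = (ξ : R) ^ i) → (∃ i : ℕ, t = (ξ : R) ^ i) →
      (2 : R) ∣ s - t → s = t := by
    intro s t hs ht hd
    obtain ⟨c, hc⟩ := hd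
    apply hinj2 s t hs ht
    linear_combination (s + t + 2 * c) * hc + (c ^ 2 + c * t) * h4
  -- doubling is injective on ξ-powers
  have h2inj : ∀ s t : R, (∃ i : ℕ, s = (ξ : R) ^ i) → (∃ i : ℕ, t = (ξ : R) ^ i) →
      2 * s = 2 * t → s = t := by
    intro s t hs ht h
    by_cases hu : IsUnit (s - t)
    · exfalso
      obtain ⟨u, hu⟩ := hu
      apply h2
      have : (2 : R) * u = 0 := by rw [hu]; linear_combination h
      exact (Units.mul_left_eq_zero u).mp this
    · have hm : s - t ∈ IsLocalRing.maximalIdeal R := hu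
      rw [hmax, Ideal.mem_span_singleton] at hm
      exact hinjm s t hs ht hm
  -- key identity for Teichmüller elements
  have hkey : ∀ a b : R, (∃ i : ℕ, a = (ξ : R) ^ i) → (∃ i : ℕ, b = (ξ : R) ^ i) →
      (a + b) ^ (2 ^ r) = a + b + 2 * (a * b) ^ (2 ^ (r - 1)) := by
    intro a b ha hb
    have e : r - 1 + 1 = r := by omega
    have := aux_pow_char4 h4 a b (r - 1)
    rw [e] at this
    rw [this, hfix a ha, hfix b hb]
  -- the product of a representing pair is determined by the sum
  have hprod : ∀ a b a' b' : R, (∃ i : ℕ, a = (ξ : R) ^ i) → (∃ i : ℕ, b = (ξ : R) ^ i) →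
      (∃ i : ℕ, a' = (ξ : R) ^ i) → (∃ i : ℕ, b' = (ξ : R) ^ i) →
      a + b = a' + b' → a * b = a' * b' := by
    intro a b a' b' ha hb ha' hb' hs
    obtain ⟨i, hi⟩ := ha
    obtain ⟨j, hj⟩ := hb
    obtain ⟨i', hi'⟩ := ha'
    obtain ⟨j', hj'⟩ := hb'
    have hab : ∃ k : ℕ, a * b = (ξ : R) ^ k := ⟨i + j, by rw [hi, hj, pow_add]⟩
    have hab' : ∃ k : ℕ, a' * b' = (ξ : R) ^ k := ⟨i' + j', by rw [hi', hj', pow_add]⟩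
    have habp : ∃ k : ℕ, (a * b) ^ (2 ^ (r - 1)) = (ξ : R) ^ k := by
      obtain ⟨k, hk⟩ := hab
      exact ⟨k * 2 ^ (r - 1), by rw [hk, ← pow_mul]⟩
    have habp' : ∃ k : ℕ, (a' * b') ^ (2 ^ (r - 1)) = (ξ : R) ^ k := by
      obtain ⟨k, hk⟩ := hab'
      exact ⟨k * 2 ^ (r - 1), by rw [hk, ← pow_mul]⟩
    have h1 := hkey a b ⟨i, hi⟩ ⟨j, hj⟩
    have h2' := hkey a' b' ⟨i', hi'⟩ ⟨j', hj'⟩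
    have hP : 2 * (a * b) ^ (2 ^ (r - 1)) = 2 * (a' * b') ^ (2 ^ (r - 1)) := by
      rw [hs] at h1
      linear_combination h2' - h1
    have hPP := h2inj _ _ habp habp' hP
    have e : 2 ^ (r - 1) * 2 = 2 ^ r := by
      rw [← pow_succ]
      congr 1
      omega
    calc a * b = (a * b) ^ (2 ^ r) := (hfix _ hab).symm
      _ = ((a * b) ^ (2 ^ (r - 1))) ^ 2 := by rw [← pow_mul, e]
      _ = ((a' * b') ^ (2 ^ (r - 1))) ^ 2 := by rw [hPP]
      _ = (a' * b') ^ (2 ^ r) := by rw [← pow_mul, e]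
      _ = a' * b' := hfix _ hab'
  -- 2 is not a unit
  have h2nu : ¬ IsUnit (2 : R) := by
    have : (2 : R) ∈ IsLocalRing.maximalIdeal R := by
      rw [hmax]; exact Ideal.mem_span_singleton_self 2
    exact (IsLocalRing.mem_maximalIdeal _).mp this
  intro x hpos
  obtain ⟨⟨β, γ⟩, hq⟩ := Finset.card_pos.mp hpos
  simp only [Finset.mem_filter, Finset.mem_product] at hq
  obtain ⟨⟨hβ, hγ⟩, hneq, hsum⟩ := hq
  constructor
  · -- unit case
    intro hx
    have hβγ : β ≠ γ := by
      rintro rfl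
      apply h2nu
      have : x = 2 * β := by rw [← hsum]; ring
      rw [this] at hx
      exact isUnit_of_mul_isUnit_left hx
    have hset : (Tstar ×ˢ Tstar).filter (fun q => q.1 ≠ -q.2 ∧ q.1 + q.2 = x)
        = ({(β, γ), (γ, β)} : Finset (R × R)) := by
      ext ⟨a', b'⟩
      simp only [Finset.mem_filter, Finset.mem_product, Finset.mem_insert,
        Finset.mem_singleton, Prod.mk.injEq]
      constructor
      · rintro ⟨⟨ha', hb'⟩, hne', hsum'⟩
        have hs : β + γ = a' + b' := by rw [hsum, hsum']
        have hp : β * γ = a' * b' :=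
          hprod β γ a' b' (hTmem β hβ) (hTmem γ hγ) (hTmem a' ha') (hTmem b' hb') hs
        have hzero : (a' - β) * (a' - γ) = 0 := by
          linear_combination (-a') * hs + hp
        by_cases hu : IsUnit (a' - β)
        · right
          have h1 : a' - γ = 0 := by
            rcases hu with ⟨u, hu⟩
            rw [← hu] at hzero
            exact (Units.mul_right_eq_zero u).mp hzero
          have ha'γ : a' = γ := by linear_combination h1
          constructor
          · exact ha'γ
          · have := hs
            rw [ha'γ] at this
            linear_combination -this
        · left
          have hm : a' - β ∈ IsLocalRing.maximalIdeal R := hu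
          rw [hmax, Ideal.mem_span_singleton] at hm
          have ha'β : a' = β :=
            hinjm a' β (hTmem a' ha') (hTmem β hβ) hm
          constructor
          · exact ha'β
          · rw [ha'β] at hs
            linear_combination -hs
      · have hx0 : x ≠ 0 := by
          rintro rfl
          exact not_isUnit_zero hx
        rintro (⟨rfl, rfl⟩ | ⟨rfl, rfl⟩)
        · exact ⟨⟨hβ, hγ⟩, hneq, hsum⟩
        · refine ⟨⟨hγ, hβ⟩, ?_, by rw [add_comm]; exact hsum⟩
          intro h
          apply hx0
          rw [← hsum, h]
          ring
    rw [sumCount, hset]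
    rw [Finset.card_insert_of_notMem (by
      simp only [Finset.mem_singleton, Prod.mk.injEq, not_and]
      intro h; exact absurd h hβγ), Finset.card_singleton]
  · -- ideal case
    intro hxI hx0
    rw [Ideal.mem_span_singleton] at hxI
    obtain ⟨c, hc⟩ := hxI
    have hββ : β = γ := by
      apply hinjm β γ (hTmem β hβ) (hTmem γ hγ)
      exact ⟨c - γ, by linear_combination hsum + hc⟩
    subst hββ
    have hx2β : x = 2 * β := by linear_combination -hsum
    have hset : (Tstar ×ˢ Tstar).filter (fun q => q.1 ≠ -q.2 ∧ q.1 + q.2 = x)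
        = ({(β, β)} : Finset (R × R)) := by
      ext ⟨a', b'⟩
      simp only [Finset.mem_filter, Finset.mem_product, Finset.mem_singleton, Prod.mk.injEq]
      constructor
      · rintro ⟨⟨ha', hb'⟩, hne', hsum'⟩
        have hab : a' = b' := by
          apply hinjm a' b' (hTmem a' ha') (hTmem b' hb')
          exact ⟨c - b', by linear_combination hsum' + hc⟩
        subst hab
        have h2a : 2 * a' = 2 * β := by
          rw [← hx2β, ← hsum']
          ring
        have := h2inj a' β (hTmem a' ha') (hTmem β hβ) h2a
        exact ⟨this, this⟩
      · rintro ⟨rfl, rfl⟩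
        refine ⟨⟨hβ, hβ⟩, ?_, hsum⟩
        intro h
        apply hx0
        rw [hx2β]
        linear_combination h
    rw [sumCount, hset, Finset.card_singleton]
end

section
/- Let p be an odd prime and R = GR(p^2, r) with Teichmüller group T^*. Then T^* = -T^*, and for any d ∈ ΔT^*: the multiplicity of d in the multiset ΔT^* is odd if and only if d ∈ 2T^* = {2α : α ∈ T^*}. -/
open Finset

/-- A finset with a fixed-point-free involution has even cardinality. -/
lemma even_card_of_invol {α : Type*} [DecidableEq α] (s : Finset α) (g : α → α)
    (hmem : ∀ a ∈ s, g a ∈ s) (hinv : ∀ a ∈ s, g (g a) = a) (hne : ∀ a ∈ s, g a ≠ a) :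
    Even s.card := by
  have hsum : ∑ _x ∈ s, (1 : ZMod 2) = 0 := by
    refine Finset.sum_involution (fun a _ => g a) (fun a ha => ?_) (fun a ha _ => hne a ha)
      (fun a ha => hmem a ha) (fun a ha => hinv a ha)
    decide
  have : ((s.card : ℕ) : ZMod 2) = 0 := by
    simpa using hsum
  have h2 : (2 : ℕ) ∣ s.card := (ZMod.natCast_eq_zero_iff _ _).mp this
  exact even_iff_two_dvd.mpr h2

/-- Let `p` be an odd prime and `R = GR(p², r)` with Teichmüller group `T^*`.
Then `T^* = -T^*`, and for any `d` occurring in the multiset `ΔT^*`, the multiplicity of `d`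
in `ΔT^*` is odd if and only if `d ∈ 2T^* = {2α : α ∈ T^*}`. -/
theorem stmt17 {R : Type*} [CommRing R] [Fintype R] [IsLocalRing R] [DecidableEq R]
    (p r : ℕ) (hp : p.Prime) (hodd : Odd p) (hr : 1 ≤ r)
    (hchar : CharP R (p ^ 2))
    (hmax : IsLocalRing.maximalIdeal R = Ideal.span {(p : R)})
    (hcard : Fintype.card R = p ^ (2 * r))
    (ξ : Rˣ) (hξ : orderOf ξ = p ^ r - 1)
    (Tstar : Finset R)
    (hTstar : Tstar = (Finset.range (p ^ r - 1)).image (fun i => (ξ : R) ^ i)) :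
    (Tstar.image (fun t => -t) = Tstar) ∧
    (∀ d : R, 0 < diffCount Tstar d →
      (Odd (diffCount Tstar d) ↔ d ∈ Tstar.image (fun t => 2 * t))) := by
  have hp3 : 3 ≤ p := by
    rcases hp.eq_two_or_odd with h2 | _
    · exact absurd (h2 ▸ hodd) (by decide)
    · have := hp.two_le; omega
  have hpr3 : 3 ≤ p ^ r :=
    le_trans hp3 (Nat.le_self_pow (by omega : r ≠ 0) p)
  have hord2 : 2 ≤ p ^ r - 1 := by omega
  -- membership characterization
  have hmemT : ∀ x : R, x ∈ Tstar ↔ ∃ n : ℕ, x = (ξ : R) ^ n := by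
    intro x
    subst hTstar
    simp only [Finset.mem_image, Finset.mem_range]
    constructor
    · rintro ⟨i, _, rfl⟩; exact ⟨i, rfl⟩
    · rintro ⟨n, rfl⟩
      refine ⟨n % (p ^ r - 1), Nat.mod_lt _ (by omega), ?_⟩
      have : orderOf ((ξ : R)) = p ^ r - 1 := by rw [orderOf_units, hξ]
      rw [← this, pow_mod_orderOf]
  -- nontrivial
  have hnontriv : Nontrivial R := by
    have : p ^ 2 ≠ 1 := by nlinarith
    exact CharP.nontrivial_of_char_ne_one this
  -- 2 is a unit in R
  have h2unit : IsUnit (2 : R) := by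
    have hc : Nat.Coprime 2 (p ^ 2) :=
      Nat.Coprime.pow_right _ (Nat.coprime_two_left.mpr hodd)
    have hz : IsUnit ((2 : ℕ) : ZMod (p ^ 2)) := (ZMod.isUnit_iff_coprime 2 (p ^ 2)).mpr hc
    have hmap := hz.map (ZMod.castHom (dvd_refl (p ^ 2)) R)
    rwa [map_natCast, Nat.cast_ofNat] at hmap
  -- -1 ∈ Tstar
  have hm : 2 * ((p ^ r - 1) / 2) = p ^ r - 1 := by
    have hev : Even (p ^ r - 1) :=
      Nat.Odd.sub_odd (Odd.pow hodd) (by norm_num)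
    obtain ⟨k, hk⟩ := hev
    omega
  have hneg1 : (-1 : R) ∈ Tstar := by
    rw [hmemT]
    set m := (p ^ r - 1) / 2 with hmdef
    refine ⟨m, ?_⟩
    have hx2 : ((ξ : R) ^ m) ^ 2 = 1 := by
      rw [← pow_mul, mul_comm, hm]
      have h1 : ξ ^ (p ^ r - 1) = 1 := by rw [← hξ]; exact pow_orderOf_eq_one ξ
      have := congrArg (Units.val) h1
      simpa using this
    have hxne1 : ((ξ : R) ^ m) ≠ 1 := by
      intro h
      have h1 : (ξ ^ m : Rˣ) = 1 := Units.ext (by simpa using h)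
      have hdvd : orderOf ξ ∣ m := orderOf_dvd_of_pow_eq_one h1
      have hle : p ^ r - 1 ≤ m := hξ ▸ Nat.le_of_dvd (by omega) hdvd
      omega
    set y : R := (ξ : R) ^ m with hy
    have hmul : (y - 1) * (y + 1) = 0 := by linear_combination hx2
    have hsum : IsUnit ((y + 1) + (1 - y)) := by
      have h' : (y + 1) + (1 - y) = 2 := by ring
      rw [h']; exact h2unit
    rcases IsLocalRing.isUnit_or_isUnit_of_isUnit_add hsum with hu | hu
    · exfalso
      have hz : y - 1 = 0 := by
        have := hu.mul_left_cancel (show (y + 1) * (y - 1) = (y + 1) * 0 by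
          rw [mul_comm] at hmul; simpa using hmul)
        simpa using this
      exact hxne1 (by linear_combination hz)
    · have hu' : IsUnit (y - 1) := by
        have h' : y - 1 = -(1 - y) := by ring
        rw [h']; exact hu.neg
      have hy1 : y + 1 = 0 := by
        have := hu'.mul_left_cancel (show (y - 1) * (y + 1) = (y - 1) * 0 by simpa using hmul)
        simpa using this
      linear_combination -hy1
  -- closure under negation
  have hnegmem : ∀ x ∈ Tstar, -x ∈ Tstar := by
    intro x hx
    rw [hmemT] at hx hneg1 ⊢
    obtain ⟨n, rfl⟩ := hx
    obtain ⟨k, hk⟩ := hneg1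
    exact ⟨k + n, by rw [pow_add, ← hk]; ring⟩
  -- elements of Tstar are units
  have hTunit : ∀ x ∈ Tstar, IsUnit x := by
    intro x hx
    obtain ⟨n, rfl⟩ := (hmemT x).mp hx
    exact (ξ ^ n).isUnit
  have part1 : Tstar.image (fun t => -t) = Tstar := by
    ext x
    simp only [Finset.mem_image]
    constructor
    · rintro ⟨t, ht, rfl⟩; exact hnegmem t ht
    · intro hx; exact ⟨-x, hnegmem x hx, by ring⟩
  refine ⟨part1, ?_⟩
  intro d _
  set S := (Tstar ×ˢ Tstar).filter (fun q => q.1 ≠ q.2 ∧ q.1 - q.2 = d) with hS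
  set Sfix := S.filter (fun q => q.2 = -q.1) with hSfix
  set Smov := S.filter (fun q => ¬ q.2 = -q.1) with hSmov
  have hSmem : ∀ a b : R, ((a, b) : R × R) ∈ S ↔ (a ∈ Tstar ∧ b ∈ Tstar ∧ a ≠ b ∧ a - b = d) := by
    intro a b
    rw [hS, Finset.mem_filter, Finset.mem_product]
    tauto
  have hsplit : S.card = Sfix.card + Smov.card :=
    (Finset.card_filter_add_card_filter_not _).symm
  -- the moved part is even via the involution q ↦ (-q.2, -q.1)
  have hmovmem : ∀ q ∈ S, ((-q.2, -q.1) : R × R) ∈ S := by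
    rintro ⟨a, b⟩ hq
    rw [hSmem] at hq ⊢
    obtain ⟨ha, hb, hne, hd⟩ := hq
    exact ⟨hnegmem b hb, hnegmem a ha, fun h => hne (by linear_combination h),
      by linear_combination hd⟩
  have heven : Even Smov.card := by
    refine even_card_of_invol Smov (fun q => (-q.2, -q.1)) ?_ ?_ ?_
    · rintro ⟨a, b⟩ hq
      rw [hSmov, Finset.mem_filter] at hq ⊢
      refine ⟨hmovmem _ hq.1, ?_⟩
      intro h
      exact hq.2 (by linear_combination -h)
    · rintro ⟨a, b⟩ _
      show ((-(-a), -(-b)) : R × R) = (a, b)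
      rw [neg_neg, neg_neg]
    · rintro ⟨a, b⟩ hq h
      rw [hSmov, Finset.mem_filter] at hq
      apply hq.2
      have h2 := congrArg Prod.snd h
      simp only at h2 ⊢
      linear_combination -h2
  -- parity determined by Sfix
  have hparity : Odd S.card ↔ Odd Sfix.card := by
    rw [hsplit, Nat.odd_add]
    rcases heven with ⟨k, hk⟩
    simp [hk, Nat.even_add, parity_simps]
  have hfixcard : d ∈ Tstar.image (fun t => 2 * t) ↔ Sfix.card = 1 := by
    constructor
    · intro hd
      obtain ⟨α, hα, hdα⟩ := Finset.mem_image.mp hd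
      have hdne : d ≠ 0 := by
        intro h0
        have hud : IsUnit d := hdα ▸ (h2unit.mul (hTunit α hα))
        rw [h0] at hud
        exact not_isUnit_zero hud
      have hmemfix : ((α, -α) : R × R) ∈ Sfix := by
        rw [hSfix, Finset.mem_filter]
        constructor
        · rw [hSmem]
          refine ⟨hα, hnegmem α hα, ?_, by linear_combination hdα⟩
          intro h
          exact hdne (by linear_combination h - hdα)
        · show (α, -α).2 = -(α, -α).1
          rfl
      have huniq : ∀ q ∈ Sfix, q = (α, -α) := by
        rintro ⟨a, b⟩ hq
        rw [hSfix, Finset.mem_filter, hSmem] at hq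
        obtain ⟨⟨_, _, _, hd'⟩, hb⟩ := hq
        simp only at hb hd'
        have ha' : a = α := h2unit.mul_left_cancel (by linear_combination hd' - hdα + hb)
        subst ha'
        rw [Prod.mk.injEq]
        exact ⟨rfl, hb⟩
      rw [Finset.card_eq_one]
      exact ⟨(α, -α), Finset.eq_singleton_iff_unique_mem.mpr ⟨hmemfix, huniq⟩⟩
    · intro h1
      obtain ⟨q, hq⟩ := Finset.card_eq_one.mp h1
      have hqmem : q ∈ Sfix := hq ▸ Finset.mem_singleton_self q
      rw [hSfix, Finset.mem_filter] at hqmem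
      obtain ⟨hqS, hb⟩ := hqmem
      obtain ⟨a, b⟩ := q
      rw [hSmem] at hqS
      obtain ⟨ha, _, _, hd'⟩ := hqS
      simp only at hb
      refine Finset.mem_image.mpr ⟨a, ha, ?_⟩
      show 2 * a = d
      linear_combination hd' + hb
  rw [show diffCount Tstar d = S.card from rfl, hparity, hfixcard]
  constructor
  · intro hoddf
    by_contra hne1
    have h01 : Sfix.card = 0 ∨ 2 ≤ Sfix.card := by omega
    rcases h01 with h0 | h2le
    · rw [h0] at hoddf; exact absurd hoddf (by decide)
    · obtain ⟨a, ha, b, hb, hab⟩ := Finset.one_lt_card.mp h2le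
      apply hab
      rw [hSfix, Finset.mem_filter] at ha hb
      obtain ⟨haS, ha2⟩ := ha
      obtain ⟨hbS, hb2⟩ := hb
      obtain ⟨a1, a2⟩ := a
      obtain ⟨b1, b2⟩ := b
      rw [hSmem] at haS hbS
      obtain ⟨_, _, _, hda⟩ := haS
      obtain ⟨_, _, _, hdb⟩ := hbS
      simp only at ha2 hb2
      have h1 : a1 = b1 := h2unit.mul_left_cancel (by linear_combination hda - hdb + ha2 - hb2)
      rw [Prod.mk.injEq]
      exact ⟨h1, by rw [ha2, hb2, h1]⟩
  · intro h1; rw [h1]; exact odd_one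
end

section
/- Let p be an odd prime and r ≥ 1 with (p, r) ≠ (3, 1), and let T^* be the Teichmüller group of GR(p^2, r). Then no element d of the multiset ΔT^* has multiplicity p^r - 2 in ΔT^*; equivalently, for every d, the intersection number |T^* ∩ (T^* + d)| is strictly less than p^r - 2 whenever d ≠ 0. -/
open Finset

set_option maxHeartbeats 2000000

private lemma one_add_pow_sq_zero {R : Type*} [CommRing R] {z : R} (hz : z * z = 0) :
    ∀ m : ℕ, (1 + z) ^ m = 1 + (m : R) * z := by
  intro m
  induction m with
  | zero => simp
  | succ m ih =>
    rw [pow_succ, ih]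
    push_cast
    linear_combination (m : R) * hz

private lemma exists_fixed_of_odd_card {α : Type*} [DecidableEq α] (s : Finset α) (f : α → α)
    (hmap : ∀ x ∈ s, f x ∈ s) (hinv : ∀ x ∈ s, f (f x) = x) (hodd : Odd s.card) :
    ∃ x ∈ s, f x = x := by
  induction s using Finset.strongInduction with
  | _ s ih =>
    rcases s.eq_empty_or_nonempty with rfl | ⟨x, hx⟩
    · simp at hodd
    · by_cases hfx : f x = x
      · exact ⟨x, hx, hfx⟩
      · have hfxs := hmap x hx
        have hpair : ({x, f x} : Finset α) ⊆ s := by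
          intro y hy; simp at hy; rcases hy with rfl | rfl <;> assumption
        have hcardpair : ({x, f x} : Finset α).card = 2 := by
          rw [Finset.card_insert_of_notMem (by simpa using fun h => hfx h.symm)]
          simp
        have hssub : s \ {x, f x} ⊂ s := by
          apply Finset.sdiff_ssubset hpair
          simp
        have hmem : ∀ y, y ∈ s \ {x, f x} ↔ y ∈ s ∧ y ≠ x ∧ y ≠ f x := by
          intro y; simp [Finset.mem_sdiff]
        have hmap' : ∀ y ∈ s \ {x, f x}, f y ∈ s \ {x, f x} := by
          intro y hy
          rw [hmem] at hy ⊢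
          obtain ⟨hys, hyx, hyfx⟩ := hy
          refine ⟨hmap y hys, ?_, ?_⟩
          · intro h
            exact hyfx (by rw [← hinv y hys, h])
          · intro h
            exact hyx (by rw [← hinv y hys, h, hinv x hx])
        obtain ⟨y, hy, hfy⟩ := ih _ hssub hmap'
          (fun y hy => hinv y ((hmem y).1 hy).1)
          (by
            rw [Finset.card_sdiff_of_subset hpair, hcardpair]
            have h2 : 2 ≤ s.card := hcardpair ▸ Finset.card_le_card hpair
            rcases hodd with ⟨t, ht⟩
            exact ⟨t - 1, by omega⟩)
        exact ⟨y, ((hmem y).1 hy).1, hfy⟩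


private lemma key {R : Type*} [CommRing R] [Fintype R] [IsLocalRing R] [DecidableEq R]
    (p r : ℕ) (hp : p.Prime) (hodd : Odd p) (hr : 1 ≤ r) (hpr : ¬(p = 3 ∧ r = 1))
    (hchar : CharP R (p ^ 2))
    (hmax : IsLocalRing.maximalIdeal R = Ideal.span {(p : R)})
    (ξ : Rˣ) (hξ : orderOf ξ = p ^ r - 1)
    (Tstar : Finset R)
    (hTstar : Tstar = (Finset.range (p ^ r - 1)).image (fun i => (ξ : R) ^ i)) :
    ∀ d : R, diffCount Tstar d ≠ p ^ r - 2 := by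
  intro d hd
  set n := p ^ r - 1 with hn
  -- basic numerics
  have hp3 : 3 ≤ p := by
    obtain ⟨t, ht⟩ := hodd
    have := hp.two_le
    omega
  have hprn : 3 ≤ p ^ r := by
    have h := Nat.le_self_pow (Nat.one_le_iff_ne_zero.mp hr) p
    omega
  have hn2 : 2 ≤ n := by omega
  have hpodd : Odd (p ^ r) := hodd.pow
  have hp2pos : 0 < p ^ 2 := by positivity
  -- char facts
  have hp2zero : ((p : R)) * ((p : R)) = 0 := by
    have : ((p ^ 2 : ℕ) : R) = 0 := CharP.cast_eq_zero R (p ^ 2)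
    push_cast at this
    linear_combination this
  have hcast0 : ∀ m : ℕ, ((m : ℕ) : R) = 0 ↔ p ^ 2 ∣ m := fun m => CharP.cast_eq_zero_iff R (p ^ 2) m
  have hpne : (p : R) ≠ 0 := by
    intro h
    have := (hcast0 p).1 h
    have := Nat.le_of_dvd (by omega) this
    nlinarith
  have h2R : (2 : R) ≠ 0 := by
    intro h
    have : ((2 : ℕ) : R) = 0 := by push_cast; exact h
    have := Nat.le_of_dvd (by omega) ((hcast0 2).1 this)
    nlinarith
  have hpnonunit : ¬ IsUnit (p : R) := by
    intro h
    have hm : (p : R) ∈ IsLocalRing.maximalIdeal R := by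
      rw [hmax]; exact Ideal.mem_span_singleton_self _
    exact (IsLocalRing.mem_maximalIdeal _).1 hm h
  have h2unit : IsUnit (2 : R) := by
    by_contra h
    have hm : (2 : R) ∈ Ideal.span {(p : R)} := by
      rw [← hmax, IsLocalRing.mem_maximalIdeal]; exact h
    obtain ⟨c, hc⟩ := Ideal.mem_span_singleton'.1 hm
    have : (2 : R) * (p : R) = 0 := by
      rw [← hc]; rw [mul_assoc, hp2zero, mul_zero]
    have h2p : ((2 * p : ℕ) : R) = 0 := by push_cast; linear_combination this
    have := (hcast0 (2 * p)).1 h2p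
    have hpd : p ∣ 2 := by
      have := (Nat.mul_dvd_mul_iff_right (show 0 < p by omega)).1 (by
        calc p * p = p ^ 2 := by ring
        _ ∣ 2 * p := this)
      exact this
    have := Nat.le_of_dvd (by omega) hpd
    omega
  -- Tstar membership API
  have hxin : (ξ : R) ^ n = 1 := by
    have h := pow_orderOf_eq_one ξ
    rw [hξ] at h
    have h2 := congrArg Units.val h
    simpa using h2
  have hmem : ∀ x : R, x ∈ Tstar ↔ ∃ i : ℕ, x = (ξ : R) ^ i := by
    intro x
    rw [hTstar]
    simp only [Finset.mem_image, Finset.mem_range]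
    constructor
    · rintro ⟨i, _, rfl⟩; exact ⟨i, rfl⟩
    · rintro ⟨i, rfl⟩
      refine ⟨i % n, Nat.mod_lt _ (by omega), ?_⟩
      conv_rhs => rw [← Nat.div_add_mod i n]
      rw [pow_add, pow_mul, hxin, one_pow, one_mul]
  have hmul : ∀ x ∈ Tstar, ∀ y ∈ Tstar, x * y ∈ Tstar := by
    intro x hx y hy
    obtain ⟨i, rfl⟩ := (hmem x).1 hx
    obtain ⟨j, rfl⟩ := (hmem y).1 hy
    exact (hmem _).2 ⟨i + j, (pow_add _ _ _).symm⟩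
  have hone : (1 : R) ∈ Tstar := (hmem 1).2 ⟨0, (pow_zero _).symm⟩
  have hinvmem : ∀ x ∈ Tstar, ∃ y ∈ Tstar, x * y = 1 := by
    intro x hx
    obtain ⟨i, rfl⟩ := (hmem x).1 hx
    refine ⟨(ξ : R) ^ (i * (n - 1)), (hmem _).2 ⟨i * (n - 1), rfl⟩, ?_⟩
    rw [← pow_add]
    have h1 : i + i * (n - 1) = n * i := by
      have h2 : 1 + (n - 1) = n := by omega
      calc i + i * (n - 1) = i * (1 + (n - 1)) := by ring
        _ = n * i := by rw [h2]; ring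
    rw [h1, pow_mul, hxin, one_pow]
  have hcardT : Tstar.card = n := by
    rw [hTstar]
    rw [Finset.card_image_of_injOn, Finset.card_range]
    intro i hi j hj hij
    simp only [Finset.coe_range, Set.mem_Iio] at hi hj
    have hinj := pow_injOn_Iio_orderOf (x := ξ) (by rw [hξ]; exact hi) (by rw [hξ]; exact hj)
    have : ξ ^ i = ξ ^ j := Units.ext (by simpa using hij)
    exact hinj this
  have hxinU : ξ ^ n = 1 := by rw [← hξ]; exact pow_orderOf_eq_one ξ
  -- injectivity: two Tstar elements congruent mod (p) are equal
  have hinj : ∀ x ∈ Tstar, ∀ y ∈ Tstar, x - y ∈ Ideal.span {(p : R)} → x = y := by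
    intro x hx y hy hxy
    obtain ⟨i, rfl⟩ := (hmem x).1 hx
    obtain ⟨j, rfl⟩ := (hmem y).1 hy
    obtain ⟨c, hc⟩ := Ideal.mem_span_singleton'.1 hxy
    set u : Rˣ := ξ ^ i * (ξ ^ j)⁻¹ with hu
    have hval : (u : R) = (ξ : R) ^ i * ((ξ ^ j)⁻¹ : Rˣ) := by
      simp [hu]
    have hone' : (1 : R) = (ξ : R) ^ j * ((ξ ^ j)⁻¹ : Rˣ) := by
      have := Units.mul_inv (ξ ^ j)
      simpa using this.symm
    set z : R := (c * ((ξ ^ j)⁻¹ : Rˣ)) * (p : R) with hz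
    have huz : (u : R) = 1 + z := by
      rw [hval, hone', hz]
      linear_combination (((ξ ^ j)⁻¹ : Rˣ) : R) * hc.symm
    have hzz : z * z = 0 := by
      rw [hz]
      have : ((c * ((ξ ^ j)⁻¹ : Rˣ)) * (p : R)) * ((c * ((ξ ^ j)⁻¹ : Rˣ)) * (p : R))
          = (c * ((ξ ^ j)⁻¹ : Rˣ)) * (c * ((ξ ^ j)⁻¹ : Rˣ)) * ((p : R) * (p : R)) := by ring
      rw [this, hp2zero, mul_zero]
    have hup : u ^ p = 1 := by
      apply Units.ext
      push_cast
      rw [huz, one_add_pow_sq_zero hzz p, hz]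
      have : (p : R) * (c * ((ξ ^ j)⁻¹ : Rˣ) * (p : R))
          = (c * ((ξ ^ j)⁻¹ : Rˣ)) * ((p : R) * (p : R)) := by ring
      rw [this, hp2zero, mul_zero, add_zero]
    have e1 : (ξ ^ i) ^ n = 1 := by rw [← pow_mul, mul_comm, pow_mul, hxinU, one_pow]
    have e2 : ((ξ ^ j) ^ n) = 1 := by rw [← pow_mul, mul_comm, pow_mul, hxinU, one_pow]
    have hun : u ^ n = 1 := by rw [hu, mul_pow, e1, inv_pow, e2, inv_one, one_mul]
    have hdvd1 : orderOf u ∣ p := orderOf_dvd_of_pow_eq_one hup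
    have hdvd2 : orderOf u ∣ n := orderOf_dvd_of_pow_eq_one hun
    have hcop : Nat.Coprime p n := by
      refine hp.coprime_iff_not_dvd.2 ?_
      intro hpn
      have h1 := Nat.dvd_sub (dvd_pow_self p (show r ≠ 0 by omega)) hpn
      rw [show p ^ r - n = 1 by omega] at h1
      have := Nat.le_of_dvd (by omega) h1
      omega
    have : orderOf u ∣ 1 := hcop ▸ Nat.dvd_gcd hdvd1 hdvd2
    have hu1 : u = 1 := orderOf_eq_one_iff.1 (Nat.eq_one_of_dvd_one this)
    have : ξ ^ i = ξ ^ j := by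
      rwa [hu, mul_inv_eq_one] at hu1
    have := congrArg Units.val this
    simpa using this
  -- -1 is in Tstar
  have hnegone : (-1 : R) ∈ Tstar := by
    have hneven : Even n := Nat.Odd.sub_odd hpodd odd_one
    set η : Rˣ := ξ ^ (n / 2) with hη
    have hη2 : η ^ 2 = 1 := by
      rw [hη, ← pow_mul, Nat.div_mul_cancel hneven.two_dvd, hxinU]
    have hηne : η ≠ 1 := by
      intro h
      have hdvd : orderOf ξ ∣ n / 2 := orderOf_dvd_of_pow_eq_one (hη ▸ h)
      rw [hξ] at hdvd
      have := Nat.le_of_dvd (by omega) hdvd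
      omega
    have ha2 : (η : R) * (η : R) = 1 := by
      have h := congrArg Units.val hη2
      push_cast at h
      linear_combination h
    have hane : (η : R) ≠ 1 := fun h => hηne (Units.ext (by simpa using h))
    have haneg : (η : R) = -1 := by
      have hz : ((η : R) - 1) * ((η : R) + 1) = 0 := by linear_combination ha2
      by_cases h1 : IsUnit ((η : R) - 1)
      · have h0 : (η : R) + 1 = 0 := by
          obtain ⟨v, hv⟩ := h1
          have h3 := congrArg (fun t => ((v⁻¹ : Rˣ) : R) * t) hz
          simp only [mul_zero] at h3
          rw [← mul_assoc, ← hv, Units.inv_mul, one_mul] at h3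
          exact h3
        exact eq_neg_of_add_eq_zero_left h0
      · by_cases h2 : IsUnit ((η : R) + 1)
        · exfalso
          apply hane
          obtain ⟨v, hv⟩ := h2
          have hz' : ((η : R) + 1) * ((η : R) - 1) = 0 := by linear_combination hz
          have h3 := congrArg (fun t => ((v⁻¹ : Rˣ) : R) * t) hz'
          simp only [mul_zero] at h3
          rw [← mul_assoc, ← hv, Units.inv_mul, one_mul] at h3
          linear_combination h3
        · exfalso
          have hm1 : ((η : R) - 1) ∈ IsLocalRing.maximalIdeal R := (IsLocalRing.mem_maximalIdeal _).2 h1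
          have hm2 : ((η : R) + 1) ∈ IsLocalRing.maximalIdeal R := (IsLocalRing.mem_maximalIdeal _).2 h2
          have h2m : (2 : R) ∈ IsLocalRing.maximalIdeal R := by
            have h := Ideal.sub_mem _ hm2 hm1
            have he : (η : R) + 1 - ((η : R) - 1) = 2 := by ring
            rwa [he] at h
          exact (IsLocalRing.mem_maximalIdeal _).1 h2m h2unit
    rw [← haneg, hη]
    exact (hmem _).2 ⟨n / 2, by simp⟩
  have hneg : ∀ x ∈ Tstar, -x ∈ Tstar := by
    intro x hx
    have := hmul _ hnegone _ hx
    simpa using this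
  -- d is nonzero
  have hdne : d ≠ 0 := by
    intro h
    subst h
    have hemp : ((Tstar ×ˢ Tstar).filter (fun q => q.1 ≠ q.2 ∧ q.1 - q.2 = (0:R))) = ∅ := by
      apply Finset.filter_eq_empty_iff.2
      rintro ⟨x, y⟩ _ ⟨hne, hsub⟩
      exact hne (sub_eq_zero.1 hsub)
    simp only [diffCount, hemp, Finset.card_empty] at hd
    omega
  -- parity: d = 2 * a for some a in Tstar
  have hoddcard : Odd (p ^ r - 2) := Nat.Odd.sub_even (by omega) hpodd (by decide)
  set P := (Tstar ×ˢ Tstar).filter (fun q => q.1 ≠ q.2 ∧ q.1 - q.2 = d) with hP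
  have hPcard : P.card = p ^ r - 2 := hd
  have hPmap : ∀ q ∈ P, (-q.2, -q.1) ∈ P := by
    intro q hq
    simp only [hP, Finset.mem_filter, Finset.mem_product] at hq ⊢
    obtain ⟨⟨h1, h2⟩, h3, h4⟩ := hq
    exact ⟨⟨hneg _ h2, hneg _ h1⟩, fun h => h3 (neg_inj.1 h).symm, by linear_combination h4⟩
  obtain ⟨q, hqmem, hqfix⟩ := exists_fixed_of_odd_card P (fun q => (-q.2, -q.1))
    hPmap (fun q _ => by simp) (hPcard ▸ hoddcard)
  have hq1 : -q.2 = q.1 := congrArg Prod.fst hqfix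
  simp only [hP, Finset.mem_filter, Finset.mem_product] at hqmem
  obtain ⟨⟨hqa, hqb⟩, hqne, hqd⟩ := hqmem
  set a : R := q.1 with haa
  have ha : a ∈ Tstar := hqa
  have hda : d = 2 * a := by
    rw [haa]
    linear_combination -hqd - (1:R) * congrArg (fun t => t - q.1) hq1.symm + (by ring : (-q.2 - q.1 - (-q.2 - q.1) : R) = 0)
  -- rescale: diffCount at 2 equals diffCount at d
  obtain ⟨b', hb', hab⟩ := hinvmem a ha
  have hscale : diffCount Tstar (2 : R) = p ^ r - 2 := by
    rw [← hd]
    simp only [diffCount]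
    apply Finset.card_nbij' (fun q => (q.1 * a, q.2 * a)) (fun q => (q.1 * b', q.2 * b'))
    · rintro ⟨x, y⟩ hxy
      simp only [Finset.mem_coe, Finset.mem_filter, Finset.mem_product] at hxy ⊢
      obtain ⟨⟨h1, h2⟩, h3, h4⟩ := hxy
      refine ⟨⟨hmul _ h1 _ ha, hmul _ h2 _ ha⟩, ?_, ?_⟩
      · intro h
        apply h3
        have := congrArg (fun t => t * b') h
        simpa [mul_assoc, hab] using this
      · rw [hda]; linear_combination a * h4
    · rintro ⟨x, y⟩ hxy
      simp only [Finset.mem_coe, Finset.mem_filter, Finset.mem_product] at hxy ⊢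
      obtain ⟨⟨h1, h2⟩, h3, h4⟩ := hxy
      have hba : b' * a = 1 := by rw [mul_comm]; exact hab
      refine ⟨⟨hmul _ h1 _ hb', hmul _ h2 _ hb'⟩, ?_, ?_⟩
      · intro h
        apply h3
        have := congrArg (fun t => t * a) h
        simpa [mul_assoc, hba] using this
      · rw [hda] at h4; linear_combination b' * h4 + 2 * hab
    · rintro ⟨x, y⟩ _
      simp only
      rw [mul_assoc, hab, mul_one, mul_assoc, hab, mul_one]
    · rintro ⟨x, y⟩ _
      simp only
      have hba : b' * a = 1 := by rw [mul_comm]; exact hab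
      rw [mul_assoc, hba, mul_one, mul_assoc, hba, mul_one]
  -- the set S of elements t with t+2 in Tstar, and the unique exit w
  set S := Tstar.filter (fun t => t + 2 ∈ Tstar) with hS
  have hScard : S.card = p ^ r - 2 := by
    rw [← hscale]
    simp only [diffCount]
    symm
    apply Finset.card_nbij' (fun q => q.2) (fun t => (t + 2, t))
    · rintro ⟨x, y⟩ hxy
      simp only [Finset.mem_coe, Finset.mem_filter, Finset.mem_product] at hxy
      obtain ⟨⟨h1, h2⟩, h3, h4⟩ := hxy
      rw [hS, Finset.mem_coe, Finset.mem_filter]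
      have he : y + 2 = x := by linear_combination -h4
      rw [he]
      exact ⟨h2, h1⟩
    · intro t ht
      rw [hS, Finset.mem_coe, Finset.mem_filter] at ht
      simp only [Finset.mem_coe, Finset.mem_filter, Finset.mem_product]
      refine ⟨⟨ht.2, ht.1⟩, ?_, by ring⟩
      intro h
      exact h2R (by linear_combination h)
    · rintro ⟨x, y⟩ hxy
      simp only [Finset.mem_coe, Finset.mem_filter, Finset.mem_product] at hxy
      obtain ⟨⟨h1, h2⟩, h3, h4⟩ := hxy
      have he : y + 2 = x := by linear_combination -h4
      simp [he]
    · intro t ht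
      rfl
  have hsub : S ⊆ Tstar := Finset.filter_subset _ _
  have hEcard : (Tstar \ S).card = 1 := by
    rw [Finset.card_sdiff_of_subset hsub, hcardT, hScard]; omega
  obtain ⟨w, hwE⟩ := Finset.card_eq_one.1 hEcard
  have hwmem : w ∈ Tstar \ S := by rw [hwE]; exact Finset.mem_singleton_self w
  have hw : w ∈ Tstar := (Finset.mem_sdiff.1 hwmem).1
  have hstep : ∀ t ∈ Tstar, t ≠ w → t + 2 ∈ Tstar := by
    intro t ht htw
    by_contra hnt
    have hts : t ∈ Tstar \ S := by
      rw [Finset.mem_sdiff]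
      exact ⟨ht, fun hts => hnt (Finset.mem_filter.1 hts).2⟩
    rw [hwE, Finset.mem_singleton] at hts
    exact htw hts
  -- every element reaches w by repeatedly adding 2
  have hreach : ∀ t ∈ Tstar, ∃ k : ℕ, t + 2 * (k : R) = w := by
    intro t ht
    by_contra hno
    push_neg at hno
    have hall : ∀ k : ℕ, t + 2 * (k : R) ∈ Tstar := by
      intro k
      induction k with
      | zero => simpa using ht
      | succ k ih =>
        have h := hstep _ ih (hno k)
        have he : t + 2 * (k : R) + 2 = t + 2 * ((k + 1 : ℕ) : R) := by push_cast; ring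
        rwa [he] at h
    have h1 := hall 0
    have h2 := hall p
    simp only [Nat.cast_zero, mul_zero, add_zero] at h1
    have hdiffmem : (t + 2 * (p : R)) - t ∈ Ideal.span {(p : R)} := by
      apply Ideal.mem_span_singleton'.2
      exact ⟨2, by ring⟩
    have heq := hinj _ h2 _ h1 hdiffmem
    have h2p0 : ((2 * p : ℕ) : R) = 0 := by
      push_cast
      linear_combination heq
    have hdvd := (hcast0 _).1 h2p0
    have hpd : p ∣ 2 := by
      exact (Nat.mul_dvd_mul_iff_right (show 0 < p by omega)).1
        (by calc p * p = p ^ 2 := by ring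
              _ ∣ 2 * p := hdvd)
    have := Nat.le_of_dvd (by omega) hpd
    omega
  -- the step-count function
  classical
  set kf : R → ℕ := fun t => if h : ∃ k : ℕ, t + 2 * (k : R) = w then Nat.find h else 0 with hkf
  have hkspec : ∀ t ∈ Tstar, t + 2 * ((kf t : ℕ) : R) = w := by
    intro t ht
    rw [hkf]
    simp only
    rw [dif_pos (hreach t ht)]
    exact Nat.find_spec (hreach t ht)
  have hkmin : ∀ t ∈ Tstar, ∀ j : ℕ, t + 2 * (j : R) = w → kf t ≤ j := by
    intro t ht j hj
    rw [hkf]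
    simp only
    rw [dif_pos (hreach t ht)]
    exact Nat.find_min' (hreach t ht) hj
  have hcastmod : ∀ m : ℕ, ((m : ℕ) : R) = (((m % (p ^ 2)) : ℕ) : R) := by
    intro m
    have hp20 : (p : R) ^ 2 = 0 := by rw [sq]; exact hp2zero
    conv_lhs => rw [← Nat.div_add_mod m (p ^ 2)]
    push_cast
    rw [hp20]
    ring
  have hklt : ∀ t ∈ Tstar, kf t < p ^ 2 := by
    intro t ht
    have h := hkmin t ht (kf t % p ^ 2) (by
      have e : (((kf t % p ^ 2) : ℕ) : R) = ((kf t : ℕ) : R) := (hcastmod (kf t)).symm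
      rw [e]
      exact hkspec t ht)
    exact lt_of_le_of_lt h (Nat.mod_lt _ hp2pos)
  have hkinj : ∀ t ∈ Tstar, ∀ t' ∈ Tstar, kf t = kf t' → t = t' := by
    intro t ht t' ht' h
    have h1 := hkspec t ht
    have h2 := hkspec t' ht'
    rw [h] at h1
    rw [← h2] at h1
    exact add_right_cancel h1
  have hkdown : ∀ t ∈ Tstar, ∀ j : ℕ, j ≤ kf t → t + 2 * (j : R) ∈ Tstar := by
    intro t ht j
    induction j with
    | zero => intro _; simpa using ht
    | succ j ih =>
      intro hj
      have hjm : j ≤ kf t := by omega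
      have hmemj := ih hjm
      have hne : t + 2 * (j : R) ≠ w := by
        intro h
        have := hkmin t ht j h
        omega
      have h := hstep _ hmemj hne
      have he : t + 2 * (j : R) + 2 = t + 2 * ((j + 1 : ℕ) : R) := by push_cast; ring
      rwa [he] at h
  have hkshift : ∀ t ∈ Tstar, ∀ j : ℕ, j ≤ kf t → kf (t + 2 * (j : R)) = kf t - j := by
    intro t ht j hj
    have hmem' := hkdown t ht j hj
    apply le_antisymm
    · apply hkmin _ hmem'
      have e : t + 2 * (j : R) + 2 * (((kf t - j : ℕ)) : R) = t + 2 * ((kf t : ℕ) : R) := by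
        rw [Nat.cast_sub hj]
        ring
      rw [e]
      exact hkspec t ht
    · have h := hkmin t ht (kf (t + 2 * (j : R)) + j) (by
        push_cast
        have h2 := hkspec _ hmem'
        linear_combination h2)
      omega
  clear_value kf
  -- the image of kf
  set I := Tstar.image kf with hI
  have hIcard : I.card = n := by
    rw [hI, Finset.card_image_of_injOn, hcardT]
    intro t ht t' ht' h
    exact hkinj t (by simpa using ht) t' (by simpa using ht') h
  have hIsub : I ⊆ Finset.range (p ^ 2) := by
    intro m hm
    rw [hI, Finset.mem_image] at hm
    obtain ⟨t, ht, rfl⟩ := hm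
    rw [Finset.mem_range]
    exact hklt t ht
  have hnle : n ≤ p ^ 2 := by
    have h := Finset.card_le_card hIsub
    rw [hIcard, Finset.card_range] at h
    exact h
  have hrle : r = 1 ∨ r = 2 := by
    by_contra hcon
    push_neg at hcon
    have h3 : 3 ≤ r := by omega
    have hpow : p ^ 3 ≤ p ^ r := Nat.pow_le_pow_right (by omega) h3
    have hppp : p * p * p ≤ p ^ r := by
      calc p * p * p = p ^ 3 := by ring
        _ ≤ p ^ r := hpow
    have hq2 : p ^ 2 = p * p := by ring
    have h9 : 9 ≤ p * p := Nat.mul_le_mul hp3 hp3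
    have h3q : 3 * (p * p) ≤ p * (p * p) := Nat.mul_le_mul_right _ hp3
    have : p ^ r ≤ p * p + 1 := by omega
    nlinarith
  have hZ : ∀ a : ℤ, ((a : ℤ) : R) = 0 ↔ (p : ℤ) ^ 2 ∣ a := by
    intro a
    have h := CharP.intCast_eq_zero_iff R (p ^ 2) a
    rwa [show ((p ^ 2 : ℕ) : ℤ) = (p : ℤ) ^ 2 by push_cast; ring] at h
  rcases hrle with hr1 | hr2
  · -- case r = 1
    have hp5 : 5 ≤ p := by
      have h4 : p ≠ 4 := by intro h; rw [h] at hp; norm_num at hp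
      have h3 : p ≠ 3 := fun h => hpr ⟨h, hr1⟩
      omega
    have hn' : n = p - 1 := by rw [hn, hr1, pow_one]
    have hdc : ∀ m ∈ I, ∀ m' : ℕ, m' ≤ m → m' ∈ I := by
      intro m hm m' hm'
      rw [hI, Finset.mem_image] at hm ⊢
      obtain ⟨t, ht, rfl⟩ := hm
      refine ⟨t + 2 * (((kf t - m') : ℕ) : R), hkdown t ht _ (by omega), ?_⟩
      rw [hkshift t ht _ (by omega)]
      omega
    have hIeq : I = Finset.range n := by
      apply Finset.eq_of_subset_of_card_le
      · intro m hm
        rw [Finset.mem_range]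
        by_contra hge
        push_neg at hge
        have hsubr : Finset.range (n + 1) ⊆ I := by
          intro x hx
          rw [Finset.mem_range] at hx
          exact hdc m hm x (by omega)
        have h := Finset.card_le_card hsubr
        rw [Finset.card_range, hIcard] at h
        omega
      · rw [Finset.card_range, hIcard]
    have hkltn : ∀ t ∈ Tstar, kf t < n := by
      intro t ht
      have : kf t ∈ I := by rw [hI, Finset.mem_image]; exact ⟨t, ht, rfl⟩
      rw [hIeq, Finset.mem_range] at this
      exact this
    have helem : ∀ m : ℕ, m < n → ∃ t ∈ Tstar, t + 2 * (m : R) = w := by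
      intro m hm
      have hmI : m ∈ I := by rw [hIeq, Finset.mem_range]; exact hm
      rw [hI, Finset.mem_image] at hmI
      obtain ⟨t, ht, rfl⟩ := hmI
      exact ⟨t, ht, hkspec t ht⟩
    obtain ⟨k1, hk1, hk1n⟩ : ∃ k : ℕ, ((1 : R) + 2 * (k : R) = w) ∧ k < n :=
      ⟨kf 1, hkspec 1 hone, hkltn 1 hone⟩
    obtain ⟨m0, hm0spec, hm0n⟩ : ∃ k : ℕ, (-w + 2 * (k : R) = w) ∧ k < n :=
      ⟨kf (-w), hkspec _ (hneg w hw), hkltn _ (hneg w hw)⟩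
    have hX0 : (((2 * (m0 : ℤ) - 2 - 4 * (k1 : ℤ)) : ℤ) : R) = 0 := by
      push_cast
      linear_combination hm0spec - 2 * hk1
    have hdv0 : (p : ℤ) ^ 2 ∣ (2 * (m0 : ℤ) - 2 - 4 * (k1 : ℤ)) := (hZ _).1 hX0
    have hpz : (5 : ℤ) ≤ (p : ℤ) := by exact_mod_cast hp5
    have hm0eq : (m0 : ℤ) = 1 + 2 * (k1 : ℤ) := by
      have hb1 : (m0 : ℤ) ≤ (p : ℤ) - 2 := by have := hm0n; omega
      have hb2 : (k1 : ℤ) ≤ (p : ℤ) - 2 := by have := hk1n; omega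
      have hk0 : (0 : ℤ) ≤ (k1 : ℤ) := Int.natCast_nonneg _
      have hm00 : (0 : ℤ) ≤ (m0 : ℤ) := Int.natCast_nonneg _
      have hA0 : (2 * (m0 : ℤ) - 2 - 4 * (k1 : ℤ)) = 0 := by
        apply Int.eq_zero_of_abs_lt_dvd hdv0
        rw [abs_lt]
        constructor <;> nlinarith
      omega
    have hk1b : 2 * (k1 : ℤ) ≤ (p : ℤ) - 3 := by
      have h1 : (m0 : ℤ) ≤ (p : ℤ) - 2 := by have := hm0n; omega
      omega
    -- use w * w ∈ Tstar to force k1 = 0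
    have hwwmem : w * w ∈ Tstar := hmul w hw w hw
    obtain ⟨m2, hm2spec, hm2n⟩ : ∃ k : ℕ, (w * w + 2 * (k : R) = w) ∧ k < n :=
      ⟨kf (w * w), hkspec _ hwwmem, hkltn _ hwwmem⟩
    have hX2 : (((4 * (k1 : ℤ) ^ 2 + 2 * (k1 : ℤ) + 2 * (m2 : ℤ)) : ℤ) : R) = 0 := by
      push_cast
      linear_combination hm2spec + (2 * (k1 : R) + w) * hk1
    have hdv2 : (p : ℤ) ^ 2 ∣ (4 * (k1 : ℤ) ^ 2 + 2 * (k1 : ℤ) + 2 * (m2 : ℤ)) := (hZ _).1 hX2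
    have hk10 : k1 = 0 := by
      have hk0 : (0 : ℤ) ≤ (k1 : ℤ) := Int.natCast_nonneg _
      have hm20 : (0 : ℤ) ≤ (m2 : ℤ) := Int.natCast_nonneg _
      have hm2b : (m2 : ℤ) ≤ (p : ℤ) - 2 := by have := hm2n; omega
      have hXlt : 4 * (k1 : ℤ) ^ 2 + 2 * (k1 : ℤ) + 2 * (m2 : ℤ) < (p : ℤ) ^ 2 := by
        nlinarith
      have hXnn : (0 : ℤ) ≤ 4 * (k1 : ℤ) ^ 2 + 2 * (k1 : ℤ) + 2 * (m2 : ℤ) := by positivity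
      have hX0' : 4 * (k1 : ℤ) ^ 2 + 2 * (k1 : ℤ) + 2 * (m2 : ℤ) = 0 := by
        rcases eq_or_lt_of_le hXnn with h | h
        · exact h.symm
        · exfalso
          have := Int.le_of_dvd h hdv2
          omega
      have hz : (k1 : ℤ) = 0 := by nlinarith [sq_nonneg (k1 : ℤ)]
      exact_mod_cast hz
    have hw1 : w = 1 := by
      rw [hk10] at hk1
      simpa using hk1.symm
    -- -1 and -3 are in Tstar; their product 3 gives a contradiction
    obtain ⟨t1, ht1, ht1spec⟩ := helem 1 (by omega)
    obtain ⟨t2, ht2, ht2spec⟩ := helem 2 (by omega)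
    have ht1v : t1 = -1 := by
      rw [hw1] at ht1spec
      push_cast at ht1spec
      linear_combination ht1spec
    have ht2v : t2 = -3 := by
      rw [hw1] at ht2spec
      push_cast at ht2spec
      linear_combination ht2spec
    have hprod : t1 * t2 ∈ Tstar := hmul _ ht1 _ ht2
    obtain ⟨m3, hm3spec, hm3n⟩ : ∃ k : ℕ, (t1 * t2 + 2 * (k : R) = w) ∧ k < n :=
      ⟨kf (t1 * t2), hkspec _ hprod, hkltn _ hprod⟩
    have hX3 : (((2 + 2 * (m3 : ℤ)) : ℤ) : R) = 0 := by
      push_cast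
      rw [hw1, ht1v, ht2v] at hm3spec
      linear_combination hm3spec
    have hdv3 : (p : ℤ) ^ 2 ∣ (2 + 2 * (m3 : ℤ)) := (hZ _).1 hX3
    have hm3b : (m3 : ℤ) ≤ (p : ℤ) - 2 := by have := hm3n; omega
    have hle := Int.le_of_dvd (by omega) hdv3
    nlinarith
  · -- case r = 2
    have hn' : n = p ^ 2 - 1 := by rw [hn, hr2]
    have hmisscard : (Finset.range (p ^ 2) \ I).card = 1 := by
      rw [Finset.card_sdiff_of_subset hIsub, Finset.card_range, hIcard, hn']
      omega
    obtain ⟨m0, hm0⟩ := Finset.card_eq_one.1 hmisscard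
    have hforce : ∀ x : ℕ, x < p ^ 2 → x ≠ m0 → x ∈ I := by
      intro x hx hxm
      by_contra h
      have hxin' : x ∈ Finset.range (p ^ 2) \ I :=
        Finset.mem_sdiff.2 ⟨Finset.mem_range.2 hx, h⟩
      rw [hm0, Finset.mem_singleton] at hxin'
      exact hxm hxin'
    have hplt : p + 1 < p ^ 2 := by
      have h1 : p + 1 < 3 * p := by omega
      have h2 : 3 * p ≤ p * p := Nat.mul_le_mul_right p hp3
      have h3 : p * p = p ^ 2 := by ring
      omega
    have hget : ∃ k, k ∈ I ∧ k + p ∈ I := by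
      by_cases hm00 : m0 = 0 ∨ m0 = p
      · refine ⟨1, hforce 1 (by omega) ?_, hforce (1 + p) (by omega) ?_⟩
        · rcases hm00 with rfl | rfl <;> omega
        · rcases hm00 with rfl | rfl <;> omega
      · push_neg at hm00
        refine ⟨0, hforce 0 (by omega) (fun h => hm00.1 h.symm), ?_⟩
        have := hforce p (by omega) (fun h => hm00.2 h.symm)
        simpa using this
    obtain ⟨k0, hk0I, hk0pI⟩ := hget
    rw [hI, Finset.mem_image] at hk0I hk0pI
    obtain ⟨t, ht, hkt⟩ := hk0I
    obtain ⟨t', ht', hkt'⟩ := hk0pI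
    have hspec1 : t + 2 * ((k0 : ℕ) : R) = w := by
      have := hkspec t ht
      rw [hkt] at this
      exact this
    have hspec2 : t' + 2 * (((k0 + p) : ℕ) : R) = w := by
      have := hkspec t' ht'
      rw [hkt'] at this
      exact this
    have hdiffmem : t - t' ∈ Ideal.span {(p : R)} := by
      apply Ideal.mem_span_singleton'.2
      refine ⟨2, ?_⟩
      push_cast at hspec1 hspec2 ⊢
      linear_combination hspec2 - hspec1
    have heq := hinj t ht t' ht' hdiffmem
    have hk0eq := congrArg kf heq
    rw [hkt, hkt'] at hk0eq
    omega



/-- Let `p` be an odd prime and `r ≥ 1` with `(p, r) ≠ (3, 1)`, and let `T^*` be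
the Teichmüller group of `GR(p², r)`.  Then no element `d` has multiplicity `p^r - 2` in the
multiset `ΔT^*`; equivalently, for every nonzero `d`, the block intersection number
`|T^* ∩ (T^* + d)|` is strictly less than `p^r - 2`. -/
theorem stmt18 {R : Type*} [CommRing R] [Fintype R] [IsLocalRing R] [DecidableEq R]
    (p r : ℕ) (hp : p.Prime) (hodd : Odd p) (hr : 1 ≤ r) (hpr : ¬(p = 3 ∧ r = 1))
    (hchar : CharP R (p ^ 2))
    (hmax : IsLocalRing.maximalIdeal R = Ideal.span {(p : R)})
    (hcard : Fintype.card R = p ^ (2 * r))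
    (ξ : Rˣ) (hξ : orderOf ξ = p ^ r - 1)
    (Tstar : Finset R)
    (hTstar : Tstar = (Finset.range (p ^ r - 1)).image (fun i => (ξ : R) ^ i)) :
    (∀ d : R, diffCount Tstar d ≠ p ^ r - 2) ∧
    (∀ d : R, d ≠ 0 → (Tstar ∩ Tstar.image (fun t => t + d)).card < p ^ r - 2) := by
  have hkey := key p r hp hodd hr hpr hchar hmax ξ hξ Tstar hTstar
  refine ⟨hkey, ?_⟩
  intro d hdne
  have hp3 : 3 ≤ p := by
    obtain ⟨t, ht⟩ := hodd
    have := hp.two_le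
    omega
  have hprn : 3 ≤ p ^ r := by
    have h := Nat.le_self_pow (Nat.one_le_iff_ne_zero.mp hr) p
    omega
  set n := p ^ r - 1 with hn
  have hcardT : Tstar.card = n := by
    rw [hTstar]
    rw [Finset.card_image_of_injOn, Finset.card_range]
    intro i hi j hj hij
    simp only [Finset.coe_range, Set.mem_Iio] at hi hj
    have hinj := pow_injOn_Iio_orderOf (x := ξ) (by rw [hξ]; exact hi) (by rw [hξ]; exact hj)
    have : ξ ^ i = ξ ^ j := Units.ext (by simpa using hij)
    exact hinj this
  have hinter : (Tstar ∩ Tstar.image (fun t => t + d)).card = diffCount Tstar d := by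
    simp only [diffCount]
    apply Finset.card_nbij' (fun x => (x, x - d)) (fun q => q.1)
    · intro x hx
      rw [Finset.mem_coe, Finset.mem_inter] at hx
      obtain ⟨hx1, hx2⟩ := hx
      rw [Finset.mem_image] at hx2
      obtain ⟨t, ht, hts⟩ := hx2
      simp only [Finset.mem_coe, Finset.mem_filter, Finset.mem_product]
      refine ⟨⟨hx1, ?_⟩, ?_, by ring⟩
      · have he : x - d = t := by rw [← hts]; ring
        rw [he]; exact ht
      · intro h
        exact hdne (by linear_combination h)
    · rintro ⟨x, y⟩ hq
      simp only [Finset.mem_coe, Finset.mem_filter, Finset.mem_product] at hq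
      obtain ⟨⟨h1, h2⟩, h3, h4⟩ := hq
      rw [Finset.mem_coe, Finset.mem_inter]
      exact ⟨h1, Finset.mem_image.2 ⟨y, h2, by linear_combination -h4⟩⟩
    · intro x _
      rfl
    · rintro ⟨x, y⟩ hq
      simp only [Finset.mem_coe, Finset.mem_filter, Finset.mem_product] at hq
      obtain ⟨⟨h1, h2⟩, h3, h4⟩ := hq
      have he : x - d = y := by linear_combination h4
      simp only [he]
  have hle : (Tstar ∩ Tstar.image (fun t => t + d)).card ≤ n := by
    calc (Tstar ∩ Tstar.image (fun t => t + d)).card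
        ≤ Tstar.card := Finset.card_le_card Finset.inter_subset_left
      _ = n := hcardT
  have hne2 : (Tstar ∩ Tstar.image (fun t => t + d)).card ≠ n := by
    intro hc
    have hinter_eq : Tstar ∩ Tstar.image (fun t => t + d) = Tstar := by
      apply Finset.eq_of_subset_of_card_le Finset.inter_subset_left
      rw [hcardT, hc]
    have hsubim : Tstar ⊆ Tstar.image (fun t => t + d) := by
      intro x hx
      have hx2 : x ∈ Tstar ∩ Tstar.image (fun t => t + d) := hinter_eq.symm ▸ hx
      exact (Finset.mem_inter.1 hx2).2
    have him : Tstar.image (fun t => t + d) = Tstar :=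
      (Finset.eq_of_subset_of_card_le hsubim (Finset.card_image_le)).symm
    have hs1 : ∑ x ∈ Tstar.image (fun t => t + d), x = ∑ t ∈ Tstar, (t + d) :=
      Finset.sum_image (by intro x _ y _ h; exact add_right_cancel h)
    rw [him] at hs1
    have hs2 : ∑ t ∈ Tstar, (t + d) = (∑ t ∈ Tstar, t) + Tstar.card • d := by
      rw [Finset.sum_add_distrib, Finset.sum_const]
    rw [hs2] at hs1
    have hnd : (Tstar.card : ℕ) • d = 0 := (left_eq_add.1 hs1)
    have hnd' : ((Tstar.card : ℕ) : R) * d = 0 := by rw [← nsmul_eq_mul]; exact hnd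
    rw [hcardT] at hnd'
    have hcop : Nat.Coprime n (p ^ 2) := by
      apply Nat.Coprime.pow_right
      rw [Nat.coprime_comm]
      apply (Nat.Prime.coprime_iff_not_dvd hp).2
      intro hpn
      have h1 := Nat.dvd_sub (dvd_pow_self p (show r ≠ 0 by omega)) hpn
      rw [show p ^ r - n = 1 by omega] at h1
      have := Nat.le_of_dvd (by omega) h1
      omega
    obtain ⟨u, v, huv⟩ := Nat.isCoprime_iff_coprime.2 hcop
    have hcast : (u : R) * ((n : ℕ) : R) + (v : R) * (((p ^ 2 : ℕ) : ℕ) : R) = 1 := by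
      have := congrArg (fun z : ℤ => ((z : ℤ) : R)) huv
      push_cast at this ⊢
      linear_combination this
    rw [CharP.cast_eq_zero R (p ^ 2), mul_zero, add_zero] at hcast
    have : d = 0 := by
      calc d = ((u : R) * ((n : ℕ) : R)) * d := by rw [hcast, one_mul]
        _ = (u : R) * (((n : ℕ) : R) * d) := by ring
        _ = 0 := by rw [hnd', mul_zero]
    exact hdne this
  have hne1 := hkey d
  rw [← hinter] at hne1
  omega
end
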